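/- arXiv:0804.1380 — 6 statements merged into one kernel-verified Lean document; each statement's English description precedes it below -/
import Mathlib

section
/- The Coxeter length of the minimal length coset representative w(λ) in the affine symmetric group corresponding to an ℓ-core λ equals Σ_{i=0}^{ℓ−1} λ_{R(i)}, where R(i) is the longest row of λ whose rightmost box has residue i (the summand is 0 if no row ends in residue i). -/
/-- A partition: a weakly decreasing list of positive integers. -/
def IsPartition (l : List ℕ) : Prop := l.Pairwise (· ≥ ·) ∧ ∀ x ∈ l, 0 < x

/-- Hook length of the box in (0-based) row `a` and (1-based) column `c`. -/
def hook (l : List ℕ) (a c : ℕ) : ℕ :=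
  (l.getD a 0 - c) + ((List.range l.length).filter (fun i => decide (a < i ∧ c ≤ l.getD i 0))).length + 1

/-- `l` is an `ℓ`-core: no box has hook length divisible by `ℓ`. -/
def IsCore (ℓ : ℕ) (l : List ℕ) : Prop :=
  ∀ a < l.length, ∀ c, 1 ≤ c → c ≤ l.getD a 0 → ¬ (ℓ ∣ hook l a c)

/-- First-column hook lengths of `l` (the beta-numbers). -/
def betaList (l : List ℕ) : List ℕ := (List.range l.length).map (fun a => hook l a 1)

/-- Residue (mod ℓ) of the content of the rightmost box of the bottom row. -/
def bottomRes (ℓ : ℕ) (l : List ℕ) : ℤ := ((l.getD (l.length - 1) 0 : ℤ) - l.length) % ℓ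

/-- Remove one box from each row whose rightmost box has the residue of the
bottom row's rightmost box, dropping rows that become empty. -/
def removeRes (ℓ : ℕ) (l : List ℕ) : List ℕ :=
  ((List.range l.length).map (fun a =>
    if ((l.getD a 0 : ℤ) - (a + 1)) % ℓ = bottomRes ℓ l
    then l.getD a 0 - 1 else l.getD a 0)).filter (fun x => decide (0 < x))

/-- Number of steps of the canonical reduction of an ℓ-core to ∅ (with fuel). -/
def reduceLenAux (ℓ : ℕ) : ℕ → List ℕ → ℕ
  | 0, _ => 0
  | fuel + 1, l => if l = [] then 0 else reduceLenAux ℓ fuel (removeRes ℓ l) + 1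

/-- The Coxeter length of the minimal length coset representative w(λ) attached to
the ℓ-core λ: the number of steps in the canonical reduction of λ to ∅. -/
def coxLen (ℓ : ℕ) (l : List ℕ) : ℕ := reduceLenAux ℓ l.sum l

/-- Length of the longest row of l whose rightmost box has residue i (0 if none). -/
def resRowMax (ℓ : ℕ) (l : List ℕ) (i : ℕ) : ℕ :=
  (((List.range l.length).filter
      (fun a => decide (((l.getD a 0 : ℤ) - (a + 1)) % ℓ = (i : ℤ)))).map
    (fun a => l.getD a 0)).foldr max 0

/-- The Berg–Vazirani bijection: delete all rows whose first-column hook length is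
congruent to h_{(1,1)} mod ℓ. -/
def BV (ℓ : ℕ) (l : List ℕ) : List ℕ :=
  ((List.range l.length).filter
      (fun a => decide (¬ hook l a 1 % ℓ = hook l 0 1 % ℓ))).map (fun a => l.getD a 0)

namespace Stmt10


/-- row length -/
def lam (l : List ℕ) (a : ℕ) : ℕ := l.getD a 0

/-- charged content of last box of row a -/
def ch (l : List ℕ) (a : ℕ) : ℤ := (lam l a : ℤ) - a - 1

/-- bead set (Maya diagram) -/
def Cmem (l : List ℕ) (x : ℤ) : Prop := ∃ a, ch l a = x

theorem lam_eq_zero (l : List ℕ) {a : ℕ} (h : l.length ≤ a) : lam l a = 0 := by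
  simp [lam, List.getD_eq_getElem?_getD, List.getElem?_eq_none h]

theorem lam_anti {l : List ℕ} (hp : IsPartition l) {a b : ℕ} (hab : a ≤ b) :
    lam l b ≤ lam l a := by
  rcases lt_or_ge b l.length with hb | hb
  · have ha : a < l.length := lt_of_le_of_lt hab hb
    rcases eq_or_lt_of_le hab with rfl | h
    · exact le_refl _
    · have := hp.1.rel_get_of_lt (a := ⟨a, ha⟩) (b := ⟨b, hb⟩) h
      simpa [lam, List.getD_eq_getElem, ha, hb] using this
  · simp [lam_eq_zero l hb]

theorem lam_pos {l : List ℕ} (hp : IsPartition l) {a : ℕ} (ha : a < l.length) :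
    0 < lam l a := by
  apply hp.2
  have : lam l a = l[a] := List.getD_eq_getElem l 0 ha
  rw [this]
  exact List.getElem_mem _

theorem ch_succ_lt {l : List ℕ} (hp : IsPartition l) (a : ℕ) :
    ch l (a + 1) < ch l a := by
  have : lam l (a+1) ≤ lam l a := lam_anti hp (by omega)
  simp only [ch]
  push_cast
  omega

theorem ch_strictAnti {l : List ℕ} (hp : IsPartition l) : StrictAnti (ch l) :=
  strictAnti_nat_of_succ_lt (ch_succ_lt hp)

theorem ch_anti {l : List ℕ} (hp : IsPartition l) {a b : ℕ} (h : a ≤ b) :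
    ch l b ≤ ch l a := (ch_strictAnti hp).antitone h

theorem ch_vacuum (l : List ℕ) {a : ℕ} (h : l.length ≤ a) : ch l a = -a - 1 := by
  simp [ch, lam_eq_zero l h]

theorem Cmem_vacuum {l : List ℕ} {x : ℤ} (h : x ≤ -(l.length : ℤ) - 1) :
    Cmem l x := by
  refine ⟨(-x - 1).toNat, ?_⟩
  have h1 : ((-x - 1).toNat : ℤ) = -x - 1 := Int.toNat_of_nonneg (by omega)
  have h2 : l.length ≤ (-x - 1).toNat := by omega
  rw [ch_vacuum l h2]; omega


theorem filter_length_eq_card {n : ℕ} {P : ℕ → Prop} [DecidablePred P] :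
    ((List.range n).filter (fun i => decide (P i))).length
      = ((Finset.range n).filter P).card := by
  simp [Finset.card, Finset.range, Finset.filter, Multiset.range]

theorem downclosed_eq_Ioc {n a : ℕ} {P : ℕ → Prop} [DecidablePred P]
    (hlt : ∀ i, P i → i < n) (hgt : ∀ i, P i → a < i)
    (hdc : ∀ i j, a < i → i ≤ j → P j → P i) :
    (Finset.range n).filter P = Finset.Ioc a (a + ((Finset.range n).filter P).card) := by
  set T := (Finset.range n).filter P with hT
  set k := T.card with hk
  have hmemT : ∀ i, i ∈ T ↔ P i := by
    intro i
    simp only [hT, Finset.mem_filter, Finset.mem_range]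
    exact ⟨fun h => h.2, fun h => ⟨hlt i h, h⟩⟩
  have hsub : T ⊆ Finset.Ioc a (a + k) := by
    intro j hj
    have hPj : P j := (hmemT j).1 hj
    have haj : a < j := hgt j hPj
    rw [Finset.mem_Ioc]
    refine ⟨haj, ?_⟩
    by_contra hbig
    push_neg at hbig
    have hsub2 : Finset.Ioc a j ⊆ T := by
      intro i hi
      rw [Finset.mem_Ioc] at hi
      exact (hmemT i).2 (hdc i j hi.1 hi.2 hPj)
    have := Finset.card_le_card hsub2
    rw [Nat.card_Ioc] at this
    omega
  refine Finset.Subset.antisymm hsub ?_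
  intro j hj
  rw [Finset.mem_Ioc] at hj
  by_contra hjT
  have hnPj : ¬ P j := fun h => hjT ((hmemT j).2 h)
  have hsub2 : T ⊆ Finset.Ioc a (j - 1) := by
    intro i hi
    have hPi := (hmemT i).1 hi
    rw [Finset.mem_Ioc]
    refine ⟨hgt i hPi, ?_⟩
    by_contra hge
    push_neg at hge
    exact hnPj (hdc j i hj.1 (by omega) hPi)
  have := Finset.card_le_card hsub2
  rw [Nat.card_Ioc] at this
  omega

/-- number of rows below `a` reaching column `c` -/
def kcount (l : List ℕ) (a c : ℕ) : ℕ :=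
  ((Finset.range l.length).filter (fun i => a < i ∧ c ≤ lam l i)).card

theorem hook_eq (l : List ℕ) (a c : ℕ) :
    hook l a c = (lam l a - c) + kcount l a c + 1 := by
  unfold hook kcount lam
  rw [filter_length_eq_card]

theorem ch_le_sub {l : List ℕ} (hp : IsPartition l) {a b : ℕ} (h : a ≤ b) :
    ch l b + (b - a : ℕ) ≤ ch l a := by
  induction b with
  | zero => interval_cases a; simp
  | succ n ih =>
    rcases Nat.eq_or_lt_of_le h with rfl | h2
    · simp
    · have h3 : a ≤ n := by omega
      have := ih h3
      have h4 := ch_succ_lt hp n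
      have : ((n + 1 - a : ℕ) : ℤ) = ((n - a : ℕ) : ℤ) + 1 := by omega
      rw [this]
      have := ih h3
      omega
theorem downclosed_iff {n a : ℕ} {P : ℕ → Prop} [DecidablePred P]
    (hlt : ∀ i, P i → i < n) (hgt : ∀ i, P i → a < i)
    (hdc : ∀ i j, a < i → i ≤ j → P j → P i) (i : ℕ) :
    P i ↔ (a < i ∧ i ≤ a + ((Finset.range n).filter P).card) := by
  have heq := downclosed_eq_Ioc hlt hgt hdc
  constructor
  · intro h
    have : i ∈ (Finset.range n).filter P := by
      rw [Finset.mem_filter, Finset.mem_range]; exact ⟨hlt i h, h⟩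
    rw [heq, Finset.mem_Ioc] at this
    exact this
  · intro h
    have : i ∈ (Finset.range n).filter P := by
      rw [heq, Finset.mem_Ioc]; exact h
    exact (Finset.mem_filter.1 this).2

theorem Cmem_sub_mul {ℓ : ℕ} {l : List ℕ}
    (hcl : ∀ x, Cmem l x → Cmem l (x - ℓ)) {x : ℤ} (hx : Cmem l x) :
    ∀ m : ℕ, Cmem l (x - m * ℓ)
  | 0 => by simpa using hx
  | m + 1 => by
      have h2 := hcl _ (Cmem_sub_mul hcl hx m)
      have he : x - ((m + 1 : ℕ) : ℤ) * ℓ = x - (m : ℤ) * ℓ - ℓ := by push_cast; ring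
      rw [he]; exact h2

theorem core_of_beads {ℓ : ℕ} (hℓ : 0 < ℓ) {l : List ℕ} (hp : IsPartition l)
    (hcl : ∀ x, Cmem l x → Cmem l (x - ℓ)) : IsCore ℓ l := by
  intro a ha c hc1 hcle hdvd
  have hcle' : c ≤ lam l a := hcle
  set kk := kcount l a c with hkk
  have hhook : hook l a c = (lam l a - c) + kk + 1 := hook_eq l a c
  have hhook1 : 1 ≤ hook l a c := by omega
  obtain ⟨m, hm⟩ := hdvd
  have hm1 : 1 ≤ m := by
    rcases Nat.eq_zero_or_pos m with h | h
    · rw [h, Nat.mul_zero] at hm; omega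
    · exact h
  have hhookZ : (hook l a c : ℤ) = (lam l a : ℤ) - c + kk + 1 := by
    rw [hhook]; push_cast [hcle']; ring
  have hhookl : (ℓ : ℤ) ≤ (hook l a c : ℤ) := by
    rw [hm]; push_cast; nlinarith
  have hCx : Cmem l (ch l a - (hook l a c : ℤ)) := by
    have h2 := Cmem_sub_mul hcl ⟨a, rfl⟩ m
    have : ch l a - (hook l a c : ℤ) = ch l a - (m : ℤ) * ℓ := by
      rw [hm]; push_cast; ring
    rw [this]; exact h2
  obtain ⟨b, hb⟩ := hCx
  have hiff := downclosed_iff (n := l.length) (a := a)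
    (P := fun i => a < i ∧ c ≤ lam l i)
    (fun i hi => by
      rcases hi with ⟨hai, hci⟩
      by_contra hge
      push_neg at hge
      rw [lam_eq_zero l hge] at hci
      omega)
    (fun i hi => hi.1)
    (fun i j hai hij hj => ⟨hai, le_trans hj.2 (lam_anti hp hij)⟩)
  rw [show ((Finset.range l.length).filter (fun i => a < i ∧ c ≤ lam l i)).card = kk from rfl] at hiff
  have hcha : ch l a = (lam l a : ℤ) - a - 1 := rfl
  rcases le_or_gt b a with hba | hba
  · have := ch_anti hp hba
    omega
  · rcases le_or_gt b (a + kk) with hbk | hbk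
    · have hPb : c ≤ lam l b := ((hiff b).2 ⟨hba, hbk⟩).2
      have hchb : ch l b = (lam l b : ℤ) - b - 1 := rfl
      omega
    · have hnPb : ¬ (a < b ∧ c ≤ lam l b) := fun h => by
        have := (hiff b).1 h
        omega
      have hlamb : lam l b < c := by
        by_contra hge
        push_neg at hge
        exact hnPb ⟨hba, hge⟩
      have hchb : ch l b = (lam l b : ℤ) - b - 1 := rfl
      omega
theorem beads_of_core {ℓ : ℕ} (hℓ : 0 < ℓ) {l : List ℕ} (hp : IsPartition l)
    (hc : IsCore ℓ l) : ∀ x, Cmem l x → Cmem l (x - ℓ) := by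
  rintro x ⟨a, rfl⟩
  rcases le_or_gt l.length a with hva | ha
  · -- vacuum row
    refine ⟨a + ℓ, ?_⟩
    rw [ch_vacuum l hva, ch_vacuum l (by omega)]
    push_cast; ring
  by_contra hx
  set x := ch l a - (ℓ : ℤ) with hxdef
  -- x is not ≤ -len - 1
  have hxge : -(l.length : ℤ) ≤ x := by
    by_contra hlt
    push_neg at hlt
    exact hx (Cmem_vacuum (by omega))
  -- the set of rows below a with bead above x
  have hlt' : ∀ i, (a < i ∧ x < ch l i) → i < l.length := by
    rintro i ⟨hai, hxi⟩
    by_contra hge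
    push_neg at hge
    rw [ch_vacuum l hge] at hxi
    omega
  have hgt' : ∀ i, (a < i ∧ x < ch l i) → a < i := fun i h => h.1
  have hdc' : ∀ i j, a < i → i ≤ j → (a < j ∧ x < ch l j) → (a < i ∧ x < ch l i) :=
    fun i j hai hij hj => ⟨hai, lt_of_lt_of_le hj.2 (ch_anti hp hij)⟩
  set K := ((Finset.range l.length).filter (fun i => a < i ∧ x < ch l i)).card with hK
  have hiff := downclosed_iff (n := l.length) (a := a)
    (P := fun i => a < i ∧ x < ch l i) hlt' hgt' hdc'
  rw [← hK] at hiff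
  have hiff2 : ∀ i, (a < i ∧ x < ch l i) ↔ (a < i ∧ i ≤ a + K) := fun i => hiff i
  have hcha : ch l a = (lam l a : ℤ) - a - 1 := rfl
  -- bound on bead at a+K+1
  have hnext : ch l (a + K + 1) ≤ x - 1 := by
    have hnP : ¬ (a < a + K + 1 ∧ x < ch l (a + K + 1)) := by
      intro h
      have := (hiff2 _).1 h
      omega
    have h1 : ch l (a + K + 1) ≤ x := by
      by_contra h2; push_neg at h2; exact hnP ⟨by omega, h2⟩
    have h2 : ch l (a + K + 1) ≠ x := fun h => hx ⟨_, h⟩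
    omega
  have hlamnext : (lam l (a + K + 1) : ℤ) ≤ x + a + K + 1 := by
    have : ch l (a + K + 1) = (lam l (a + K + 1) : ℤ) - (a + K + 1) - 1 := rfl
    push_cast at this ⊢
    omega
  -- K ≤ ℓ - 1
  have hKle : (K : ℤ) ≤ (ℓ : ℤ) - 1 := by
    rcases Nat.eq_zero_or_pos K with h0 | hKpos
    · rw [h0]; push_cast; omega
    · have hmem : a < a + K ∧ x < ch l (a + K) := (hiff2 _).2 ⟨by omega, by omega⟩
      have := ch_le_sub hp (show a ≤ a + K by omega)
      have h3 : ((a + K - a : ℕ) : ℤ) = K := by omega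
      rw [h3] at this
      omega
  -- the column
  set c : ℤ := x + a + 2 + K with hcdef
  have hc1 : 1 ≤ c := by
    have := lam l (a + K + 1)
    have h0 : (0 : ℤ) ≤ (lam l (a + K + 1) : ℤ) := by positivity
    omega
  have hclam : c ≤ (lam l a : ℤ) := by omega
  set cn : ℕ := c.toNat with hcn
  have hcnz : (cn : ℤ) = c := Int.toNat_of_nonneg (by omega)
  -- the two predicates agree
  have hsame : ∀ i, (a < i ∧ cn ≤ lam l i) ↔ (a < i ∧ x < ch l i) := by
    intro i
    constructor
    · rintro ⟨hai, hci⟩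
      refine ⟨hai, ?_⟩
      have hcZ : c ≤ (lam l i : ℤ) := by
        rw [← hcnz]; exact_mod_cast hci
      rcases le_or_gt i (a + K) with hik | hik
      · have hchi : ch l i = (lam l i : ℤ) - i - 1 := rfl
        omega
      · exfalso
        have := lam_anti hp (show a + K + 1 ≤ i by omega)
        have h2 : (lam l i : ℤ) ≤ (lam l (a + K + 1) : ℤ) := by exact_mod_cast this
        omega
    · rintro ⟨hai, hxi⟩
      refine ⟨hai, ?_⟩
      have hik : i ≤ a + K := ((hiff2 i).1 ⟨hai, hxi⟩).2
      have hKpos : 0 < K := by omega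
      have hmem : a < a + K ∧ x < ch l (a + K) := (hiff2 _).2 ⟨by omega, by omega⟩
      have hstep := ch_le_sub hp hik
      have h3 : ((a + K - i : ℕ) : ℤ) = (a : ℤ) + K - i := by omega
      rw [h3] at hstep
      have hchi : ch l i = (lam l i : ℤ) - i - 1 := rfl
      have hchK := hmem.2
      have hge : x + (a : ℤ) + K + 2 ≤ (lam l i : ℤ) := by omega
      have hfin : (cn : ℤ) ≤ (lam l i : ℤ) := by omega
      exact_mod_cast hfin
  -- kcount equals K
  have hkc : kcount l a cn = K := by
    unfold kcount
    rw [hK]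
    congr 1
    apply Finset.filter_congr
    intro i _
    exact hsame i
  -- hook is exactly ℓ
  have hhook : hook l a cn = ℓ := by
    have h1 := hook_eq l a cn
    have h2 : cn ≤ lam l a := by
      have : (cn : ℤ) ≤ (lam l a : ℤ) := by omega
      exact_mod_cast this
    have h3 : ((lam l a - cn : ℕ) : ℤ) = (lam l a : ℤ) - cn := by
      push_cast [h2]; ring
    have : (hook l a cn : ℤ) = (lam l a : ℤ) - cn + K + 1 := by
      rw [h1, hkc]; push_cast [h2]; ring
    have : (hook l a cn : ℤ) = (ℓ : ℤ) := by omega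
    exact_mod_cast this
  exact hc a ha cn (by omega) (by
      have : (cn : ℤ) ≤ (lam l a : ℤ) := by omega
      exact_mod_cast this) (by rw [hhook])
theorem notC_up {ℓ : ℕ} {l : List ℕ} (hℓ : 0 < ℓ) (hp : IsPartition l)
    (hc : IsCore ℓ l) {x : ℤ} (hx : ¬ Cmem l x) (m : ℕ) : ¬ Cmem l (x + m * ℓ) := by
  intro h
  have h2 := Cmem_sub_mul (beads_of_core hℓ hp hc) h m
  rw [add_sub_cancel_right] at h2
  exact hx h2

/-- the minimal (real) bead -/
def cmin (l : List ℕ) : ℤ := ch l (l.length - 1)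

theorem gap {l : List ℕ} (hp : IsPartition l) (hne : l ≠ []) {x : ℤ}
    (hx : Cmem l x) (hlt : x < cmin l) : x ≤ -(l.length : ℤ) - 1 := by
  obtain ⟨b, rfl⟩ := hx
  rcases le_or_gt l.length b with hb | hb
  · rw [ch_vacuum l hb]; omega
  · exfalso
    have : cmin l ≤ ch l b := ch_anti hp (by omega)
    omega

theorem cmin_ge {l : List ℕ} (hp : IsPartition l) (hne : l ≠ []) :
    1 - (l.length : ℤ) ≤ cmin l := by
  have h1 : 0 < l.length := List.length_pos_iff.2 hne
  have h2 : 0 < lam l (l.length - 1) := lam_pos hp (by omega)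
  have : cmin l = (lam l (l.length - 1) : ℤ) - (l.length - 1 : ℕ) - 1 := rfl
  omega

theorem cminpred_notC {l : List ℕ} (hp : IsPartition l) (hne : l ≠ []) :
    ¬ Cmem l (cmin l - 1) := by
  intro h
  have h1 := gap hp hne h (by omega)
  have h2 := cmin_ge hp hne
  omega

theorem resr1_absent {ℓ : ℕ} {l : List ℕ} (hℓ : 0 < ℓ) (hp : IsPartition l)
    (hc : IsCore ℓ l) (hne : l ≠ []) {x : ℤ} (hx : Cmem l x)
    (hge : cmin l - 1 ≤ x) (hres : x % ℓ = (cmin l - 1) % ℓ) : False := by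
  have hdvd : (ℓ : ℤ) ∣ (x - (cmin l - 1)) := by
    rw [Int.dvd_iff_emod_eq_zero, Int.sub_emod, hres]
    simp
  obtain ⟨m, hm⟩ := hdvd
  have hl0 : (0:ℤ) < ℓ := by exact_mod_cast hℓ
  have hm0 : 0 ≤ m := by
    by_contra hneg
    push_neg at hneg
    have h2 : (ℓ:ℤ) * m ≤ (ℓ:ℤ) * (-1) := by
      apply mul_le_mul_of_nonneg_left (by omega) (by omega)
    linarith
  have := notC_up hℓ hp hc (cminpred_notC hp hne) m.toNat
  apply this
  have : (m.toNat : ℤ) = m := Int.toNat_of_nonneg hm0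
  rw [show cmin l - 1 + (m.toNat : ℤ) * ℓ = x by rw [this]; linarith]
  exact hx

theorem pred_notC {ℓ : ℕ} {l : List ℕ} (hℓ : 0 < ℓ) (hp : IsPartition l)
    (hc : IsCore ℓ l) (hne : l ≠ []) {x : ℤ} (hx : Cmem l x)
    (hge : cmin l ≤ x) (hres : x % ℓ = cmin l % ℓ) : ¬ Cmem l (x - 1) := by
  intro h
  apply resr1_absent hℓ hp hc hne h (by omega)
  exact Int.ModEq.sub_right 1 hres

/-- row `a` is marked: its last box has the bottom residue -/
def P (ℓ : ℕ) (l : List ℕ) (a : ℕ) : Prop :=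
  ((l.getD a 0 : ℤ) - (a + 1)) % ℓ = bottomRes ℓ l

instance (ℓ : ℕ) (l : List ℕ) (a : ℕ) : Decidable (P ℓ l a) := by
  unfold P; infer_instance

/-- new value of row a -/
def g (ℓ : ℕ) (l : List ℕ) (a : ℕ) : ℕ :=
  if ((l.getD a 0 : ℤ) - (a + 1)) % ℓ = bottomRes ℓ l then l.getD a 0 - 1 else l.getD a 0

/-- new number of rows -/
def len' (l : List ℕ) : ℕ :=
  if lam l (l.length - 1) = 1 then l.length - 1 else l.length

theorem ch_eq' (l : List ℕ) (a : ℕ) : (l.getD a 0 : ℤ) - (a + 1) = ch l a := by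
  unfold ch lam; ring

theorem bottomRes_eq {ℓ : ℕ} {l : List ℕ} (hne : l ≠ []) :
    bottomRes ℓ l = cmin l % ℓ := by
  have hlen : 0 < l.length := List.length_pos_iff.2 hne
  unfold bottomRes cmin ch lam
  congr 1
  have : ((l.length - 1 : ℕ) : ℤ) = (l.length : ℤ) - 1 := by omega
  rw [this]; ring

theorem P_iff {ℓ : ℕ} {l : List ℕ} (hne : l ≠ []) (a : ℕ) :
    P ℓ l a ↔ ch l a % ℓ = cmin l % ℓ := by
  unfold P
  rw [ch_eq', bottomRes_eq hne]

theorem bottom_P {ℓ : ℕ} {l : List ℕ} (hne : l ≠ []) : P ℓ l (l.length - 1) :=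
  (P_iff hne _).2 rfl

theorem g_eq (ℓ : ℕ) (l : List ℕ) (a : ℕ) :
    g ℓ l a = if P ℓ l a then lam l a - 1 else lam l a := rfl

theorem marked_strict {ℓ : ℕ} {l : List ℕ} (hℓ : 0 < ℓ) (hp : IsPartition l)
    (hc : IsCore ℓ l) (hne : l ≠ []) {a : ℕ} (ha : a < l.length) (hP : P ℓ l a) :
    lam l (a + 1) < lam l a := by
  rcases le_or_gt l.length (a + 1) with h1 | h1
  · rw [lam_eq_zero l h1]
    exact lam_pos hp ha
  · by_contra hge
    push_neg at hge
    have heq : lam l (a + 1) = lam l a := le_antisymm (lam_anti hp (by omega)) hge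
    have hch : ch l (a + 1) = ch l a - 1 := by
      unfold ch; rw [heq]; push_cast; ring
    have hcge : cmin l ≤ ch l a := ch_anti hp (by omega)
    have hres := (P_iff hne a).1 hP
    exact pred_notC hℓ hp hc hne ⟨a, rfl⟩ hcge hres ⟨a + 1, hch⟩

theorem g_pos {ℓ : ℕ} {l : List ℕ} (hℓ : 0 < ℓ) (hp : IsPartition l)
    (hc : IsCore ℓ l) (hne : l ≠ []) {a : ℕ} (ha : a < len' l) :
    0 < g ℓ l a := by
  have hlen : 0 < l.length := List.length_pos_iff.2 hne
  have halen : a < l.length := by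
    unfold len' at ha; split at ha <;> omega
  rw [g_eq]
  split
  · rename_i hP
    have hstrict := marked_strict hℓ hp hc hne halen hP
    rcases lt_or_ge (a + 1) l.length with h2 | h2
    · have := lam_pos hp h2
      omega
    · -- a = l.length - 1; then len' = l.length so lam l a ≠ 1
      have ha' : a = l.length - 1 := by omega
      unfold len' at ha
      split at ha
      · omega
      · rename_i hbot
        rw [ha'] at *
        have := lam_pos hp (show l.length - 1 < l.length by omega)
        omega
  · exact lam_pos hp halen

theorem removeRes_eq {ℓ : ℕ} {l : List ℕ} (hℓ : 0 < ℓ) (hp : IsPartition l)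
    (hc : IsCore ℓ l) (hne : l ≠ []) :
    removeRes ℓ l = (List.range (len' l)).map (g ℓ l) := by
  have hlen : 0 < l.length := List.length_pos_iff.2 hne
  have hrr : removeRes ℓ l
      = ((List.range l.length).map (g ℓ l)).filter (fun x => decide (0 < x)) := rfl
  rw [hrr]
  have hposfilter : ∀ n, n ≤ len' l →
      ((List.range n).map (g ℓ l)).filter (fun x => decide (0 < x))
        = (List.range n).map (g ℓ l) := by
    intro n hn
    apply List.filter_eq_self.2
    intro x hx
    obtain ⟨a, hmem, rfl⟩ := List.mem_map.1 hx
    have ha : a < n := List.mem_range.1 hmem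
    simpa using g_pos hℓ hp hc hne (show a < len' l by omega)
  by_cases hbot : lam l (l.length - 1) = 1
  · have hlen' : len' l = l.length - 1 := by simp [len', hbot]
    rw [hlen']
    have hsplit : List.range l.length = List.range (l.length - 1) ++ [l.length - 1] := by
      conv_lhs => rw [show l.length = (l.length - 1) + 1 by omega]
      rw [List.range_succ]
    rw [hsplit, List.map_append, List.filter_append]
    have hg0 : g ℓ l (l.length - 1) = 0 := by
      rw [g_eq, if_pos (bottom_P hne)]
      unfold lam at hbot ⊢
      omega
    rw [hposfilter _ (le_of_eq hlen'.symm)]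
    simp [hg0]
  · have hlen' : len' l = l.length := by simp [len', hbot]
    rw [hlen', hposfilter _ (le_of_eq hlen'.symm)]

theorem length_removeRes {ℓ : ℕ} {l : List ℕ} (hℓ : 0 < ℓ) (hp : IsPartition l)
    (hc : IsCore ℓ l) (hne : l ≠ []) : (removeRes ℓ l).length = len' l := by
  rw [removeRes_eq hℓ hp hc hne]; simp

theorem getD_map_range (f : ℕ → ℕ) {n a : ℕ} (h : a < n) :
    ((List.range n).map f).getD a 0 = f a := by
  rw [List.getD_eq_getElem _ _ (by simpa using h)]
  simp

theorem lam_removeRes {ℓ : ℕ} {l : List ℕ} (hℓ : 0 < ℓ) (hp : IsPartition l)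
    (hc : IsCore ℓ l) (hne : l ≠ []) {a : ℕ} (ha : a < len' l) :
    lam (removeRes ℓ l) a = g ℓ l a := by
  rw [removeRes_eq hℓ hp hc hne]
  exact getD_map_range _ ha

theorem ch_removeRes {ℓ : ℕ} {l : List ℕ} (hℓ : 0 < ℓ) (hp : IsPartition l)
    (hc : IsCore ℓ l) (hne : l ≠ []) {a : ℕ} (ha : a < len' l) :
    ch (removeRes ℓ l) a = ch l a - (if P ℓ l a then 1 else 0) := by
  have hlen : 0 < l.length := List.length_pos_iff.2 hne
  have halen : a < l.length := by unfold len' at ha; split at ha <;> omega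
  have hlam := lam_removeRes hℓ hp hc hne ha
  have hpos := lam_pos hp halen
  unfold ch
  rw [hlam, g_eq]
  split <;> [skip; ring_nf]
  · push_cast [show 1 ≤ lam l a from hpos]
    ring
theorem sub_l_emod (x : ℤ) (ℓ : ℕ) : (x - ℓ) % ℓ = x % ℓ := by
  simp [Int.sub_emod]

theorem len'_le (l : List ℕ) : len' l ≤ l.length := by
  unfold len'; split <;> omega

theorem len'_cases (l : List ℕ) :
    len' l = l.length ∨ (len' l = l.length - 1 ∧ lam l (l.length - 1) = 1) := by
  unfold len'; split
  · right; constructor <;> [rfl; assumption]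
  · left; rfl

theorem sorted_map_range {f : ℕ → ℕ} {n : ℕ} (h : ∀ a, a + 1 < n → f (a + 1) ≤ f a) :
    ((List.range n).map f).Pairwise (· ≥ ·) := by
  rw [List.pairwise_iff_get]
  intro i j hij
  have hjn : (j : ℕ) < n := by simpa using j.2
  simp only [List.get_eq_getElem, List.getElem_map, List.getElem_range]
  have hmono : ∀ p q, p ≤ q → q < n → f q ≤ f p := by
    intro p q hpq hq
    induction q, hpq using Nat.le_induction with
    | base => exact le_rfl
    | succ k hk ih => exact le_trans (h k hq) (ih (by omega))
  exact hmono i j (le_of_lt hij) hjn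

theorem g_step {ℓ : ℕ} {l : List ℕ} (hℓ : 0 < ℓ) (hp : IsPartition l)
    (hc : IsCore ℓ l) (hne : l ≠ []) {a : ℕ} (h : a + 1 < l.length) :
    g ℓ l (a + 1) ≤ g ℓ l a := by
  by_cases hPa : P ℓ l a
  · have hstrict := marked_strict hℓ hp hc hne (by omega) hPa
    rw [g_eq, g_eq, if_pos hPa]
    split <;> omega
  · rw [g_eq, g_eq, if_neg hPa]
    have hanti : lam l (a + 1) ≤ lam l a := lam_anti hp (by omega)
    split <;> omega

theorem partition_removeRes {ℓ : ℕ} {l : List ℕ} (hℓ : 0 < ℓ) (hp : IsPartition l)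
    (hc : IsCore ℓ l) (hne : l ≠ []) : IsPartition (removeRes ℓ l) := by
  constructor
  · rw [removeRes_eq hℓ hp hc hne]
    apply sorted_map_range
    intro a ha
    exact g_step hℓ hp hc hne (lt_of_lt_of_le ha (len'_le l))
  · intro x hx
    unfold removeRes at hx
    have := (List.mem_filter.1 hx).2
    simpa using this

theorem Cmem_removeRes_iff {ℓ : ℕ} {l : List ℕ} (hℓ : 0 < ℓ) (hp : IsPartition l)
    (hc : IsCore ℓ l) (hne : l ≠ []) (y : ℤ) :
    Cmem (removeRes ℓ l) y ↔
      ((∃ a, a < len' l ∧ ch l a - (if P ℓ l a then 1 else 0) = y)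
        ∨ y ≤ -(len' l : ℤ) - 1) := by
  constructor
  · rintro ⟨b, rfl⟩
    rcases lt_or_ge b (len' l) with hb | hb
    · exact Or.inl ⟨b, hb, (ch_removeRes hℓ hp hc hne hb).symm⟩
    · right
      rw [ch_vacuum _ (by rw [length_removeRes hℓ hp hc hne]; exact hb)]
      omega
  · rintro (⟨a, ha, hEq⟩ | hvac)
    · exact ⟨a, by rw [ch_removeRes hℓ hp hc hne ha]; exact hEq⟩
    · exact Cmem_vacuum (by rw [length_removeRes hℓ hp hc hne]; exact hvac)

theorem core_removeRes {ℓ : ℕ} {l : List ℕ} (hℓ2 : 2 ≤ ℓ) (hp : IsPartition l)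
    (hc : IsCore ℓ l) (hne : l ≠ []) : IsCore ℓ (removeRes ℓ l) := by
  have hℓ : 0 < ℓ := by omega
  have hlen : 0 < l.length := List.length_pos_iff.2 hne
  apply core_of_beads hℓ (partition_removeRes hℓ hp hc hne)
  intro y hy
  rw [Cmem_removeRes_iff hℓ hp hc hne] at hy ⊢
  have hcl := beads_of_core hℓ hp hc
  rcases hy with ⟨a, ha, hEq⟩ | hvac
  · have halen : a < l.length := lt_of_lt_of_le ha (len'_le l)
    obtain ⟨b, hb⟩ := hcl _ ⟨a, rfl⟩
    by_cases hPa : P ℓ l a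
    · -- marked row
      rw [if_pos hPa] at hEq
      have hresb : ch l b % ℓ = cmin l % ℓ := by
        rw [hb, sub_l_emod]
        exact (P_iff hne a).1 hPa
      rcases lt_or_ge b (len' l) with hblt | hbge
      · left
        refine ⟨b, hblt, ?_⟩
        rw [if_pos ((P_iff hne b).2 hresb)]
        omega
      · right
        rcases le_or_gt l.length b with hbv | hbr
        · have := ch_vacuum l hbv
          have hle := len'_le l
          omega
        · -- b is a real row, b ≥ len' l, so bottom removed and b = l.length - 1
          have hb' : b = l.length - 1 := by
            rcases len'_cases l with h1 | ⟨h1, h2⟩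
            · omega
            · omega
          rcases len'_cases l with h1 | ⟨h1, h2⟩
          · omega
          · -- cmin = 1 - len, y - ℓ = cmin - 1 = -len = -(len') - 1
            have hcm : ch l b = cmin l := by rw [hb']; rfl
            have hcmval : cmin l = 1 - (l.length : ℤ) := by
              have : cmin l = (lam l (l.length - 1) : ℤ) - (l.length - 1 : ℕ) - 1 := rfl
              rw [h2] at this
              omega
            omega
    · -- unmarked row
      rw [if_neg hPa] at hEq
      have hresb : ch l b % ℓ ≠ cmin l % ℓ := by
        rw [hb, sub_l_emod]
        exact fun h => hPa ((P_iff hne a).2 h)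
      rcases lt_or_ge b (len' l) with hblt | hbge
      · left
        refine ⟨b, hblt, ?_⟩
        rw [if_neg (fun h => hresb ((P_iff hne b).1 h))]
        omega
      · right
        rcases le_or_gt l.length b with hbv | hbr
        · have := ch_vacuum l hbv
          have hle := len'_le l
          omega
        · exfalso
          have hb' : b = l.length - 1 := by
            rcases len'_cases l with h1 | ⟨h1, h2⟩ <;> omega
          apply hresb
          rw [hb']
          rfl
  · right
    omega
theorem le_foldr_max {x : ℕ} : ∀ {L : List ℕ}, x ∈ L → x ≤ L.foldr max 0
  | [], h => by cases h
  | y :: t, h => by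
    rcases List.mem_cons.1 h with rfl | h2
    · exact le_max_left _ _
    · exact le_trans (le_foldr_max h2) (le_max_right _ _)

theorem foldr_max_le {n : ℕ} : ∀ {L : List ℕ}, (∀ x ∈ L, x ≤ n) → L.foldr max 0 ≤ n
  | [], _ => Nat.zero_le n
  | y :: t, h => by
    simp only [List.foldr_cons, max_le_iff]
    exact ⟨h y (by simp), foldr_max_le (fun x hx => h x (List.mem_cons_of_mem _ hx))⟩

theorem foldr_max_mem : ∀ (L : List ℕ), L.foldr max 0 = 0 ∨ L.foldr max 0 ∈ L
  | [] => Or.inl rfl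
  | y :: t => by
    simp only [List.foldr_cons]
    rcases foldr_max_mem t with h | h
    · rcases Nat.le_total y (t.foldr max 0) with h2 | h2
      · left; omega
      · right; rw [max_eq_left h2]; simp
    · rcases Nat.le_total y (t.foldr max 0) with h2 | h2
      · right; rw [max_eq_right h2]; exact List.mem_cons_of_mem _ h
      · right; rw [max_eq_left h2]; simp

theorem mem_resList {ℓ : ℕ} {l : List ℕ} {i : ℕ} {x : ℕ} :
    x ∈ (((List.range l.length).filter
        (fun a => decide (((l.getD a 0 : ℤ) - (a + 1)) % ℓ = (i : ℤ)))).map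
      (fun a => l.getD a 0)) ↔
    ∃ a, a < l.length ∧ ch l a % ℓ = (i : ℤ) ∧ lam l a = x := by
  simp only [List.mem_map, List.mem_filter, List.mem_range, decide_eq_true_eq, ch_eq']
  constructor
  · rintro ⟨a, ⟨h1, h2⟩, h3⟩
    exact ⟨a, h1, h2, h3⟩
  · rintro ⟨a, h1, h2, h3⟩
    exact ⟨a, ⟨h1, h2⟩, h3⟩

theorem resRowMax_le {ℓ : ℕ} {l : List ℕ} {i : ℕ} {n : ℕ}
    (h : ∀ a, a < l.length → ch l a % ℓ = (i : ℤ) → lam l a ≤ n) :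
    resRowMax ℓ l i ≤ n := by
  apply foldr_max_le
  intro x hx
  obtain ⟨a, h1, h2, rfl⟩ := mem_resList.1 hx
  exact h a h1 h2

theorem le_resRowMax {ℓ : ℕ} {l : List ℕ} {i : ℕ} {a : ℕ}
    (h1 : a < l.length) (h2 : ch l a % ℓ = (i : ℤ)) :
    lam l a ≤ resRowMax ℓ l i := by
  exact le_foldr_max (mem_resList.2 ⟨a, h1, h2, rfl⟩)

theorem resRowMax_attained {ℓ : ℕ} {l : List ℕ} {i : ℕ} (h : resRowMax ℓ l i ≠ 0) :
    ∃ a, a < l.length ∧ ch l a % ℓ = (i : ℤ) ∧ lam l a = resRowMax ℓ l i := by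
  rcases foldr_max_mem (((List.range l.length).filter
      (fun a => decide (((l.getD a 0 : ℤ) - (a + 1)) % ℓ = (i : ℤ)))).map
    (fun a => l.getD a 0)) with h0 | hm
  · exact absurd h0 h
  · exact mem_resList.1 hm
section Step

variable {ℓ : ℕ} {l : List ℕ}

/-- natural-number bottom residue -/
def rn (ℓ : ℕ) (l : List ℕ) : ℕ := (cmin l % ℓ).toNat

/-- natural-number residue one less -/
def rn1 (ℓ : ℕ) (l : List ℕ) : ℕ := ((cmin l - 1) % ℓ).toNat

theorem hl0 (hℓ2 : 2 ≤ ℓ) : (0 : ℤ) < (ℓ : ℤ) := by exact_mod_cast (by omega : 0 < ℓ)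

theorem rn_cast (hℓ2 : 2 ≤ ℓ) : ((rn ℓ l : ℕ) : ℤ) = cmin l % ℓ :=
  Int.toNat_of_nonneg (Int.emod_nonneg _ (by have := hl0 hℓ2; omega))

theorem rn1_cast (hℓ2 : 2 ≤ ℓ) : ((rn1 ℓ l : ℕ) : ℤ) = (cmin l - 1) % ℓ :=
  Int.toNat_of_nonneg (Int.emod_nonneg _ (by have := hl0 hℓ2; omega))

theorem rn_lt (hℓ2 : 2 ≤ ℓ) : rn ℓ l < ℓ := by
  have h1 := Int.emod_lt_of_pos (cmin l) (hl0 hℓ2)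
  have h2 := rn_cast (ℓ := ℓ) (l := l) hℓ2
  omega

theorem rn1_lt (hℓ2 : 2 ≤ ℓ) : rn1 ℓ l < ℓ := by
  have h1 := Int.emod_lt_of_pos (cmin l - 1) (hl0 hℓ2)
  have h2 := rn1_cast (ℓ := ℓ) (l := l) hℓ2
  omega

theorem rn_ne_rn1 (hℓ2 : 2 ≤ ℓ) : rn ℓ l ≠ rn1 ℓ l := by
  intro h
  have h1 := rn_cast (ℓ := ℓ) (l := l) hℓ2
  have h2 := rn1_cast (ℓ := ℓ) (l := l) hℓ2
  have heq : cmin l % ℓ = (cmin l - 1) % ℓ := by omega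
  have hdvd : (ℓ : ℤ) ∣ (cmin l - 1) - cmin l := Int.ModEq.dvd heq
  have : (ℓ : ℤ) ∣ 1 := by
    have : (cmin l - 1) - cmin l = -1 := by ring
    rw [this] at hdvd
    exact (dvd_neg).1 hdvd
  have := Int.le_of_dvd (by omega) this
  have := hl0 hℓ2
  omega

theorem shift_res {x : ℤ} (h : x % ℓ = cmin l % ℓ) :
    (x - 1) % ℓ = (cmin l - 1) % ℓ := Int.ModEq.sub_right 1 h

/-- rows with residue r-1 don't exist in a core -/
theorem resRowMax_rn1_eq_zero (hℓ2 : 2 ≤ ℓ) (hp : IsPartition l)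
    (hc : IsCore ℓ l) (hne : l ≠ []) : resRowMax ℓ l (rn1 ℓ l) = 0 := by
  have hℓ : 0 < ℓ := by omega
  apply Nat.le_zero.1
  apply resRowMax_le
  intro a ha hres
  exfalso
  rw [rn1_cast hℓ2] at hres
  have hlen : 0 < l.length := List.length_pos_iff.2 hne
  have hcge : cmin l ≤ ch l a := ch_anti hp (by omega)
  exact resr1_absent hℓ hp hc hne ⟨a, rfl⟩ (by omega) hres

theorem resRowMax_removeRes_rn_eq_zero (hℓ2 : 2 ≤ ℓ) (hp : IsPartition l)
    (hc : IsCore ℓ l) (hne : l ≠ []) :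
    resRowMax ℓ (removeRes ℓ l) (rn ℓ l) = 0 := by
  have hℓ : 0 < ℓ := by omega
  apply Nat.le_zero.1
  apply resRowMax_le
  intro a ha hres
  exfalso
  rw [length_removeRes hℓ hp hc hne] at ha
  rw [ch_removeRes hℓ hp hc hne ha, rn_cast hℓ2] at hres
  by_cases hPa : P ℓ l a
  · rw [if_pos hPa] at hres
    have h2 := shift_res ((P_iff hne a).1 hPa)
    have h3 := rn_ne_rn1 (l := l) hℓ2
    have h4 := rn_cast (ℓ := ℓ) (l := l) hℓ2
    have h5 := rn1_cast (ℓ := ℓ) (l := l) hℓ2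
    omega
  · rw [if_neg hPa] at hres
    simp only [sub_zero] at hres
    exact hPa ((P_iff hne a).2 hres)

theorem resRowMax_removeRes_other (hℓ2 : 2 ≤ ℓ) (hp : IsPartition l)
    (hc : IsCore ℓ l) (hne : l ≠ []) {i : ℕ}
    (hi1 : i ≠ rn ℓ l) (hi2 : i ≠ rn1 ℓ l) :
    resRowMax ℓ (removeRes ℓ l) i = resRowMax ℓ l i := by
  have hℓ : 0 < ℓ := by omega
  have hlen : 0 < l.length := List.length_pos_iff.2 hne
  have hrnc := rn_cast (ℓ := ℓ) (l := l) hℓ2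
  have hrn1c := rn1_cast (ℓ := ℓ) (l := l) hℓ2
  apply le_antisymm
  · apply resRowMax_le
    intro a ha hres
    rw [length_removeRes hℓ hp hc hne] at ha
    rw [ch_removeRes hℓ hp hc hne ha] at hres
    by_cases hPa : P ℓ l a
    · exfalso
      rw [if_pos hPa] at hres
      have h2 := shift_res ((P_iff hne a).1 hPa)
      -- (ch l a - 1) % ℓ = (cmin-1)%ℓ = rn1, but also = i
      apply hi2
      have : (i : ℤ) = ((rn1 ℓ l : ℕ) : ℤ) := by omega
      exact_mod_cast this
    · rw [if_neg hPa, sub_zero] at hres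
      have hlam : lam (removeRes ℓ l) a = lam l a := by
        rw [lam_removeRes hℓ hp hc hne ha, g_eq, if_neg hPa]
      rw [hlam]
      exact le_resRowMax (lt_of_lt_of_le ha (len'_le l)) hres
  · apply resRowMax_le
    intro a ha hres
    have hnPa : ¬ P ℓ l a := by
      intro hPa
      apply hi1
      have h1 := (P_iff hne a).1 hPa
      have : (i : ℤ) = ((rn ℓ l : ℕ) : ℤ) := by omega
      exact_mod_cast this
    have ha' : a < len' l := by
      rcases len'_cases l with h1 | ⟨h1, h2⟩
      · omega
      · rcases Nat.lt_or_ge a (len' l) with h | h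
        · exact h
        · exfalso
          have : a = l.length - 1 := by omega
          exact hnPa (this ▸ bottom_P hne)
    have hlam : lam (removeRes ℓ l) a = lam l a := by
      rw [lam_removeRes hℓ hp hc hne ha', g_eq, if_neg hnPa]
    rw [← hlam]
    apply le_resRowMax (by rw [length_removeRes hℓ hp hc hne]; exact ha')
    rw [ch_removeRes hℓ hp hc hne ha', if_neg hnPa, sub_zero]
    exact hres

theorem resRowMax_rn_pos (hℓ2 : 2 ≤ ℓ) (hp : IsPartition l)
    (hc : IsCore ℓ l) (hne : l ≠ []) : 1 ≤ resRowMax ℓ l (rn ℓ l) := by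
  have hℓ : 0 < ℓ := by omega
  have hlen : 0 < l.length := List.length_pos_iff.2 hne
  have h := le_resRowMax (ℓ := ℓ) (l := l) (i := rn ℓ l) (a := l.length - 1)
    (by omega) (by rw [rn_cast hℓ2]; rfl)
  have := lam_pos hp (show l.length - 1 < l.length by omega)
  omega

theorem resRowMax_removeRes_rn1 (hℓ2 : 2 ≤ ℓ) (hp : IsPartition l)
    (hc : IsCore ℓ l) (hne : l ≠ []) :
    resRowMax ℓ (removeRes ℓ l) (rn1 ℓ l) + 1 = resRowMax ℓ l (rn ℓ l) := by
  have hℓ : 0 < ℓ := by omega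
  have hlen : 0 < l.length := List.length_pos_iff.2 hne
  have hrnc := rn_cast (ℓ := ℓ) (l := l) hℓ2
  have hrn1c := rn1_cast (ℓ := ℓ) (l := l) hℓ2
  set M := resRowMax ℓ l (rn ℓ l) with hM
  have hM1 : 1 ≤ M := resRowMax_rn_pos hℓ2 hp hc hne
  have hle : resRowMax ℓ (removeRes ℓ l) (rn1 ℓ l) ≤ M - 1 := by
    apply resRowMax_le
    intro a ha hres
    rw [length_removeRes hℓ hp hc hne] at ha
    rw [ch_removeRes hℓ hp hc hne ha] at hres
    by_cases hPa : P ℓ l a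
    · rw [if_pos hPa] at hres
      have hlam : lam (removeRes ℓ l) a = lam l a - 1 := by
        rw [lam_removeRes hℓ hp hc hne ha, g_eq, if_pos hPa]
      have hmem := le_resRowMax (ℓ := ℓ) (l := l) (i := rn ℓ l) (a := a)
        (lt_of_lt_of_le ha (len'_le l)) (by rw [hrnc]; exact (P_iff hne a).1 hPa)
      omega
    · exfalso
      rw [if_neg hPa, sub_zero] at hres
      have hcge : cmin l ≤ ch l a := ch_anti hp (by
        have := lt_of_lt_of_le ha (len'_le l); omega)
      exact resr1_absent hℓ hp hc hne ⟨a, rfl⟩ (by omega) (by omega)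
  have hge : M - 1 ≤ resRowMax ℓ (removeRes ℓ l) (rn1 ℓ l) := by
    obtain ⟨a0, ha0, hres0, hlam0⟩ := resRowMax_attained (ℓ := ℓ) (i := rn ℓ l) (l := l)
      (by omega)
    have hPa0 : P ℓ l a0 := (P_iff hne a0).2 (by omega)
    rcases Nat.lt_or_ge a0 (len' l) with h | h
    · have hmem := le_resRowMax (ℓ := ℓ) (l := removeRes ℓ l) (i := rn1 ℓ l) (a := a0)
        (by rw [length_removeRes hℓ hp hc hne]; exact h)
        (by
          rw [ch_removeRes hℓ hp hc hne h, if_pos hPa0, hrn1c]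
          exact shift_res (by omega))
      have hlam : lam (removeRes ℓ l) a0 = lam l a0 - 1 := by
        rw [lam_removeRes hℓ hp hc hne h, g_eq, if_pos hPa0]
      omega
    · -- a0 is the removed bottom row: lam a0 = 1, M = 1
      rcases len'_cases l with h1 | ⟨h1, h2⟩
      · omega
      · have ha0' : a0 = l.length - 1 := by omega
        have : lam l a0 = 1 := by rw [ha0']; exact h2
        omega
  omega

theorem sum_resRowMax_removeRes (hℓ2 : 2 ≤ ℓ) (hp : IsPartition l)
    (hc : IsCore ℓ l) (hne : l ≠ []) :
    (∑ i ∈ Finset.range ℓ, resRowMax ℓ (removeRes ℓ l) i) + 1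
      = ∑ i ∈ Finset.range ℓ, resRowMax ℓ l i := by
  have hrn : rn ℓ l ∈ Finset.range ℓ := Finset.mem_range.2 (rn_lt hℓ2)
  have hrn1 : rn1 ℓ l ∈ (Finset.range ℓ).erase (rn ℓ l) :=
    Finset.mem_erase.2 ⟨fun h => rn_ne_rn1 hℓ2 h.symm, Finset.mem_range.2 (rn1_lt hℓ2)⟩
  have expand : ∀ f : ℕ → ℕ, ∑ i ∈ Finset.range ℓ, f i
      = f (rn ℓ l) + (f (rn1 ℓ l)
        + ∑ i ∈ ((Finset.range ℓ).erase (rn ℓ l)).erase (rn1 ℓ l), f i) := by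
    intro f
    rw [← Finset.add_sum_erase _ f hrn, ← Finset.add_sum_erase _ f hrn1]
  rw [expand, expand]
  have hrest : ∑ i ∈ ((Finset.range ℓ).erase (rn ℓ l)).erase (rn1 ℓ l),
      resRowMax ℓ (removeRes ℓ l) i
      = ∑ i ∈ ((Finset.range ℓ).erase (rn ℓ l)).erase (rn1 ℓ l), resRowMax ℓ l i := by
    apply Finset.sum_congr rfl
    intro i hi
    have h1 := (Finset.mem_erase.1 hi).1
    have h2 := (Finset.mem_erase.1 (Finset.mem_erase.1 hi).2).1
    exact resRowMax_removeRes_other hℓ2 hp hc hne h2 h1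
  rw [hrest]
  have e1 := resRowMax_removeRes_rn_eq_zero hℓ2 hp hc hne
  have e2 := resRowMax_rn1_eq_zero hℓ2 hp hc hne
  have e3 := resRowMax_removeRes_rn1 hℓ2 hp hc hne
  omega

end Step
theorem sum_eq_sum_range (l : List ℕ) :
    l.sum = ∑ a ∈ Finset.range l.length, lam l a := by
  induction l with
  | nil => simp
  | cons x t ih =>
    rw [List.sum_cons, List.length_cons, Finset.sum_range_succ', ih]
    simp only [show ∀ k, lam (x :: t) (k + 1) = lam t k from fun k => rfl,
      show lam (x :: t) 0 = x from rfl]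
    omega

theorem sum_removeRes_lt {ℓ : ℕ} {l : List ℕ} (hℓ2 : 2 ≤ ℓ) (hp : IsPartition l)
    (hc : IsCore ℓ l) (hne : l ≠ []) :
    (removeRes ℓ l).sum + 1 ≤ l.sum := by
  have hℓ : 0 < ℓ := by omega
  have hlen : 0 < l.length := List.length_pos_iff.2 hne
  rw [sum_eq_sum_range, sum_eq_sum_range, length_removeRes hℓ hp hc hne]
  have hterm : ∀ a ∈ Finset.range (len' l), lam (removeRes ℓ l) a ≤ lam l a := by
    intro a ha
    rw [lam_removeRes hℓ hp hc hne (Finset.mem_range.1 ha), g_eq]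
    split <;> omega
  have hsum1 : ∑ a ∈ Finset.range (len' l), lam (removeRes ℓ l) a
      ≤ ∑ a ∈ Finset.range (len' l), lam l a := Finset.sum_le_sum hterm
  rcases len'_cases l with h1 | ⟨h1, h2⟩
  · -- bottom row not removed; it strictly decreases
    have hbot : l.length - 1 ∈ Finset.range (len' l) := Finset.mem_range.2 (by omega)
    have hstrict : lam (removeRes ℓ l) (l.length - 1) < lam l (l.length - 1) := by
      rw [lam_removeRes hℓ hp hc hne (by omega), g_eq, if_pos (bottom_P hne)]
      have := lam_pos hp (show l.length - 1 < l.length by omega)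
      omega
    have := Finset.sum_lt_sum hterm ⟨l.length - 1, hbot, hstrict⟩
    rw [h1] at *
    omega
  · -- bottom row removed
    have hsplit : ∑ a ∈ Finset.range l.length, lam l a
        = (∑ a ∈ Finset.range (l.length - 1), lam l a) + lam l (l.length - 1) := by
      conv_lhs => rw [show l.length = (l.length - 1) + 1 by omega]
      rw [Finset.sum_range_succ]
    rw [h1] at hsum1 ⊢
    omega

theorem resRowMax_nil (ℓ i : ℕ) : resRowMax ℓ [] i = 0 := by
  simp [resRowMax]

theorem sum_pos_of_ne_nil {l : List ℕ} (hp : IsPartition l) (hne : l ≠ []) :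
    0 < l.sum := by
  rcases l with _ | ⟨x, t⟩
  · exact absurd rfl hne
  · have : 0 < x := hp.2 x (by simp)
    rw [List.sum_cons]
    omega

theorem reduce_aux {ℓ : ℕ} (hℓ2 : 2 ≤ ℓ) :
    ∀ fuel (l : List ℕ), IsPartition l → IsCore ℓ l → l.sum ≤ fuel →
      reduceLenAux ℓ fuel l = ∑ i ∈ Finset.range ℓ, resRowMax ℓ l i := by
  intro fuel
  induction fuel with
  | zero =>
    intro l hp hc hs
    have hnil : l = [] := by
      by_contra hne
      have := sum_pos_of_ne_nil hp hne
      omega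
    subst hnil
    simp [reduceLenAux, resRowMax_nil]
  | succ n ih =>
    intro l hp hc hs
    rw [reduceLenAux]
    by_cases hne : l = []
    · subst hne
      simp [resRowMax_nil]
    · rw [if_neg hne]
      have hsum := sum_removeRes_lt hℓ2 hp hc hne
      rw [ih (removeRes ℓ l) (partition_removeRes (by omega) hp hc hne)
        (core_removeRes hℓ2 hp hc hne) (by omega)]
      exact sum_resRowMax_removeRes hℓ2 hp hc hne

theorem main {ℓ : ℕ} (hℓ : 2 ≤ ℓ) {l : List ℕ} (hp : IsPartition l)
    (hc : IsCore ℓ l) :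
    coxLen ℓ l = ∑ i ∈ Finset.range ℓ, resRowMax ℓ l i :=
  reduce_aux hℓ l.sum l hp hc le_rfl

end Stmt10

/-- The Coxeter length of w(λ) equals Σ_{i=0}^{ℓ-1} λ_{R(i)}, where R(i) is the
longest row of λ whose rightmost box has residue i. -/
theorem stmt10 (ℓ : ℕ) (hℓ : 2 ≤ ℓ) (l : List ℕ)
    (hp : IsPartition l) (hc : IsCore ℓ l) :
    coxLen ℓ l = ∑ i ∈ Finset.range ℓ, resRowMax ℓ l i := by
  exact Stmt10.main hℓ hp hc
end

section
/- Let λ be an ℓ-core with n-vector (b₀,...,b_{ℓ−1}) (b_i is the maximum region containing a row-exposed box of residue i). If s_i acts on λ (1 ≤ i ≤ ℓ−1) by interchanging addable and removable i-boxes, then the n-vector of s_i(λ) is obtained by swapping b_{i−1} and b_i; for i = 0, the new n-vector is (b_{ℓ−1}+1, b₁, ..., b_{ℓ−2}, b₀−1). -/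
/-- The set of regions of row-exposed boxes of residue i (rows padded with zero
parts; the row-exposed box of 0-based row a has content λ_a - (a+1)). -/
def regionSet (ℓ : ℕ) (l : List ℕ) (i : ℤ) : Set ℤ :=
  {r | ∃ a : ℕ, ((l.getD a 0 : ℤ) - (a + 1)) % ℓ = i ∧
                r = ((l.getD a 0 : ℤ) - (a + 1)) / ℓ + 1}

/-- The action of s_i on an ℓ-core: add every addable box of residue i and remove
every removable box of residue i. -/
def siAction (ℓ i : ℕ) (l : List ℕ) : List ℕ :=
  ((List.range (l.length + 1)).map (fun a =>
    if ((l.getD a 0 + 1 : ℤ) - (a + 1)) % ℓ = (i : ℤ) ∧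
        (a = 0 ∨ l.getD a 0 < l.getD (a - 1) 0)
    then l.getD a 0 + 1
    else if 0 < l.getD a 0 ∧ ((l.getD a 0 : ℤ) - (a + 1)) % ℓ = (i : ℤ) ∧
        l.getD (a + 1) 0 < l.getD a 0
    then l.getD a 0 - 1
    else l.getD a 0)).filter (fun x => decide (0 < x))

lemma emod_dvd {n x y : ℤ} (h : x % n = y % n) : n ∣ y - x := Int.ModEq.dvd h

lemma hstep (ℓ : ℕ) (hℓ : 2 ≤ ℓ) (x : ℤ) :
    (x % ℓ < (ℓ:ℤ) - 1 ∧ (x + 1) % ℓ = x % ℓ + 1 ∧ (x + 1) / ℓ = x / ℓ) ∨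
    (x % ℓ = (ℓ:ℤ) - 1 ∧ (x + 1) % ℓ = 0 ∧ (x + 1) / ℓ = x / ℓ + 1) := by
  have h0 : (ℓ:ℤ) ≠ 0 := by exact_mod_cast (by omega : (ℓ:ℕ) ≠ 0)
  have hn := Int.emod_nonneg x h0
  have hl := Int.emod_lt_of_pos x (show (0:ℤ) < ℓ by exact_mod_cast (by omega : 0 < ℓ))
  have he := Int.mul_ediv_add_emod x ℓ
  have hx1 : x + 1 = (x % ℓ + 1) + (ℓ:ℤ) * (x / ℓ) := by linarith
  rcases lt_or_eq_of_le (show x % ℓ ≤ (ℓ:ℤ) - 1 by omega) with h | h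
  · left
    refine ⟨h, ?_, ?_⟩
    · rw [hx1, Int.add_mul_emod_self_left, Int.emod_eq_of_lt (by omega) (by omega)]
    · rw [hx1, Int.add_mul_ediv_left _ _ h0, Int.ediv_eq_zero_of_lt (by omega) (by omega), zero_add]
  · right
    refine ⟨h, ?_, ?_⟩
    · rw [hx1, Int.add_mul_emod_self_left, h]
      simp [Int.emod_self]
    · rw [hx1, Int.add_mul_ediv_left _ _ h0, h]
      rw [show (ℓ:ℤ) - 1 + 1 = ℓ by ring, Int.ediv_self h0]; ring


lemma getD_map_range (f : ℕ → ℕ) (n a : ℕ) :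
    ((List.range n).map f).getD a 0 = if a < n then f a else 0 := by
  split_ifs with h
  · rw [List.getD_eq_getElem _ _ (by simpa using h)]
    simp
  · rw [List.getD_eq_default]
    simpa using h

lemma filter_pos_getD : ∀ (L : List ℕ), (∀ a b : ℕ, a ≤ b → L.getD b 0 ≤ L.getD a 0) →
    ∀ a, (L.filter (fun x => decide (0 < x))).getD a 0 = L.getD a 0
  | [], _, a => by simp
  | (x :: t), h, a => by
    have ht : ∀ a b : ℕ, a ≤ b → t.getD b 0 ≤ t.getD a 0 := fun a b hab => h (a+1) (b+1) (by omega)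
    by_cases hx : 0 < x
    · rw [show (x::t).filter (fun x => decide (0 < x)) = x :: t.filter (fun x => decide (0 < x))
        by simp [List.filter_cons, hx]]
      cases a with
      | zero => rfl
      | succ a => simpa using filter_pos_getD t ht a
    · have hx0 : x = 0 := by omega
      have hz : ∀ b, (x::t).getD b 0 = 0 := fun b =>
        le_antisymm (by simpa [hx0] using h 0 b (Nat.zero_le b)) (Nat.zero_le _)
      rw [show (x::t).filter (fun x => decide (0 < x)) = t.filter (fun x => decide (0 < x))
        by simp [List.filter_cons, hx0]]
      rw [filter_pos_getD t ht a, hz a]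
      simpa using hz (a+1)

lemma part_mono (l : List ℕ) (hp : IsPartition l) : ∀ a b : ℕ, a ≤ b → l.getD b 0 ≤ l.getD a 0 := by
  intro a b hab
  by_cases hb : b < l.length
  · have ha : a < l.length := lt_of_le_of_lt hab hb
    rw [List.getD_eq_getElem _ _ hb, List.getD_eq_getElem _ _ ha]
    rcases eq_or_lt_of_le hab with rfl | h
    · exact le_refl _
    · exact (List.pairwise_iff_getElem.mp hp.1) a b ha hb h
  · rw [List.getD_eq_default _ _ (by omega)]
    exact Nat.zero_le _

def gfun (ℓ i : ℕ) (l : List ℕ) (a : ℕ) : ℕ :=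
  if ((l.getD a 0 + 1 : ℤ) - (a + 1)) % ℓ = (i : ℤ) ∧ (a = 0 ∨ l.getD a 0 < l.getD (a - 1) 0)
  then l.getD a 0 + 1
  else if 0 < l.getD a 0 ∧ ((l.getD a 0 : ℤ) - (a + 1)) % ℓ = (i : ℤ) ∧ l.getD (a + 1) 0 < l.getD a 0
  then l.getD a 0 - 1
  else l.getD a 0

lemma siAction_eq (ℓ i : ℕ) (l : List ℕ) :
    siAction ℓ i l = ((List.range (l.length + 1)).map (gfun ℓ i l)).filter (fun x => decide (0 < x)) := rfl

lemma gfun_step (ℓ i : ℕ) (hℓ : 2 ≤ ℓ) (l : List ℕ) (hp : IsPartition l) (a : ℕ) :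
    gfun ℓ i l (a+1) ≤ gfun ℓ i l a := by
  have h01 : l.getD (a+1) 0 ≤ l.getD a 0 := part_mono l hp a (a+1) (by omega)
  unfold gfun
  simp only [Nat.add_sub_cancel]
  split_ifs with h1 h2 h3 h4 h5 h6 h7 h8 h9 <;> try omega
  · obtain ⟨hP, hor⟩ := h2
    have hstrict : l.getD (a+1) 0 < l.getD a 0 := hor.resolve_left False.elim
    obtain ⟨hy, hQ, hQ2⟩ := h4
    by_contra hcon
    have heq : l.getD a 0 = l.getD (a+1) 0 + 1 := by omega
    have hP' : ((l.getD a 0 : ℤ) - (a + 1) - 1) % ℓ = (i:ℤ) := by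
      rw [show ((l.getD a 0 : ℤ) - (a + 1) - 1) = ((l.getD (a+1) 0 + 1 : ℤ) - ((a+1 : ℕ) + 1)) by
        rw [heq]; push_cast; ring]
      exact_mod_cast hP
    have hd : (ℓ:ℤ) ∣ 1 := by
      have := emod_dvd (hP'.trans hQ.symm)
      simpa using this
    have := Int.le_of_dvd one_pos hd
    omega
  · rename_i h2' h3' h4'
    exact absurd ⟨h2'.1, Or.inr (h2'.2.resolve_left False.elim)⟩ h1

lemma gfun_mono (ℓ i : ℕ) (hℓ : 2 ≤ ℓ) (l : List ℕ) (hp : IsPartition l) :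
    ∀ a b : ℕ, a ≤ b → gfun ℓ i l b ≤ gfun ℓ i l a := by
  intro a b hab
  induction b with
  | zero => simpa [show a = 0 by omega] using le_refl _
  | succ n ih =>
    rcases Nat.lt_or_ge a (n+1) with h | h
    · exact le_trans (gfun_step ℓ i hℓ l hp n) (ih (by omega))
    · have : a = n + 1 := by omega
      subst this; exact le_refl _

lemma gfun_zero (ℓ i : ℕ) (l : List ℕ) {a : ℕ} (ha : l.length < a) : gfun ℓ i l a = 0 := by
  have h1 : l.getD a 0 = 0 := List.getD_eq_default _ _ (by omega)
  have h2 : l.getD (a-1) 0 = 0 := List.getD_eq_default _ _ (by omega)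
  have h3 : a ≠ 0 := by omega
  unfold gfun
  rw [h1, h2, if_neg (by simp [h3]), if_neg (by simp)]

lemma siAction_getD (ℓ i : ℕ) (hℓ : 2 ≤ ℓ) (l : List ℕ) (hp : IsPartition l) (a : ℕ) :
    (siAction ℓ i l).getD a 0 = gfun ℓ i l a := by
  rw [siAction_eq]
  have hL : ∀ a, ((List.range (l.length+1)).map (gfun ℓ i l)).getD a 0 = gfun ℓ i l a := by
    intro a'
    rw [getD_map_range]
    split_ifs with h
    · rfl
    · exact (gfun_zero ℓ i l (by omega)).symm
  rw [filter_pos_getD _ (fun a b hab => by rw [hL, hL]; exact gfun_mono ℓ i hℓ l hp a b hab) a, hL]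

lemma emod_ne_one (ℓ : ℕ) (hℓ : 2 ≤ ℓ) {x y : ℤ} (hxy : y = x + 1) (hx : x % ℓ = y % ℓ) : False := by
  have hd : (ℓ:ℤ) ∣ 1 := by simpa [hxy] using emod_dvd hx
  have := Int.le_of_dvd one_pos hd
  omega

lemma keyM1 (ℓ i : ℕ) (hℓ : 2 ≤ ℓ) (hi : i < ℓ) (l : List ℕ) (hp : IsPartition l) (a : ℕ)
    (h : ((l.getD a 0 : ℤ) - (a+1) + 1) % ℓ = i) :
    ∃ b : ℕ, (gfun ℓ i l b : ℤ) - (b+1) = (l.getD a 0 : ℤ) - (a+1) + 1 := by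
  have hform : ((l.getD a 0 + 1 : ℤ) - (a+1)) = (l.getD a 0 : ℤ) - (a+1) + 1 := by push_cast; ring
  by_cases had : a = 0 ∨ l.getD a 0 < l.getD (a-1) 0
  · refine ⟨a, ?_⟩
    unfold gfun
    rw [if_pos ⟨by rw [hform]; exact h, had⟩]
    push_cast; ring
  · have ha0 : a ≠ 0 := fun h0 => had (Or.inl h0)
    have heq : l.getD (a-1) 0 = l.getD a 0 := by
      have := part_mono l hp (a-1) a (by omega); omega
    refine ⟨a - 1, ?_⟩
    unfold gfun
    rw [if_neg, if_neg]
    · omega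
    · rintro ⟨-, -, hlt⟩
      rw [show a - 1 + 1 = a by omega] at hlt
      omega
    · rintro ⟨hres, -⟩
      -- residue of C a + 2 cannot be i
      have hx : ((l.getD (a-1) 0 + 1 : ℤ) - ((a-1 : ℕ)+1)) = ((l.getD a 0 : ℤ) - (a+1) + 1) + 1 := by
        omega
      rw [hx] at hres
      exact emod_ne_one ℓ hℓ rfl (h.trans hres.symm)

lemma keyM2 (ℓ i : ℕ) (hℓ : 2 ≤ ℓ) (hi : i < ℓ) (l : List ℕ) (hp : IsPartition l) (a : ℕ)
    (h : ((l.getD a 0 : ℤ) - (a+1)) % ℓ = i) :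
    ∃ b : ℕ, (gfun ℓ i l b : ℤ) - (b+1) = (l.getD a 0 : ℤ) - (a+1) - 1 := by
  have hform : ((l.getD a 0 + 1 : ℤ) - (a+1)) = (l.getD a 0 : ℤ) - (a+1) + 1 := by push_cast; ring
  by_cases hrem : 0 < l.getD a 0 ∧ l.getD (a+1) 0 < l.getD a 0
  · refine ⟨a, ?_⟩
    unfold gfun
    rw [if_neg, if_pos ⟨hrem.1, h, hrem.2⟩]
    · omega
    · rintro ⟨hres, -⟩
      rw [hform] at hres
      exact emod_ne_one ℓ hℓ rfl (h.trans hres.symm)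
  · have heq : l.getD (a+1) 0 = l.getD a 0 := by
      have := part_mono l hp a (a+1) (by omega); omega
    refine ⟨a + 1, ?_⟩
    unfold gfun
    simp only [Nat.add_sub_cancel]
    rw [if_neg, if_neg]
    · omega
    · rintro ⟨-, hres, -⟩
      have hx : ((l.getD (a+1) 0 : ℤ) - ((a+1 : ℕ)+1)) + 1 = (l.getD a 0 : ℤ) - (a+1) := by omega
      exact emod_ne_one ℓ hℓ hx.symm (hres.trans h.symm)
    · rintro ⟨-, hor⟩
      rcases hor with h0 | hlt <;> omega

lemma keyM3 (ℓ i : ℕ) (l : List ℕ) (a : ℕ)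
    (hA : ((l.getD a 0 : ℤ) - (a+1) + 1) % ℓ ≠ i)
    (hR : ((l.getD a 0 : ℤ) - (a+1)) % ℓ ≠ i) :
    gfun ℓ i l a = l.getD a 0 := by
  have hform : ((l.getD a 0 + 1 : ℤ) - (a+1)) = (l.getD a 0 : ℤ) - (a+1) + 1 := by push_cast; ring
  unfold gfun
  rw [if_neg (fun hc => hA (by rw [← hform]; exact hc.1)), if_neg (fun hc => hR hc.2.1)]

lemma keyU (ℓ i : ℕ) (l : List ℕ) (hp : IsPartition l) (a : ℕ) :
    (((l.getD a 0 : ℤ) - (a+1) + 1) % ℓ = i ∧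
       (gfun ℓ i l a : ℤ) - (a+1) = (l.getD a 0 : ℤ) - (a+1) + 1) ∨
    (((l.getD a 0 : ℤ) - (a+1)) % ℓ = i ∧ 0 < l.getD a 0 ∧ l.getD (a+1) 0 < l.getD a 0 ∧
       (gfun ℓ i l a : ℤ) - (a+1) = (l.getD a 0 : ℤ) - (a+1) - 1) ∨
    ((gfun ℓ i l a : ℤ) - (a+1) = (l.getD a 0 : ℤ) - (a+1) ∧
       (((l.getD a 0 : ℤ) - (a+1)) % ℓ = i → l.getD (a+1) 0 = l.getD a 0) ∧
       (((l.getD a 0 : ℤ) - (a+1) + 1) % ℓ = i → a ≠ 0 ∧ l.getD (a-1) 0 = l.getD a 0)) := by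
  have hform : ((l.getD a 0 + 1 : ℤ) - (a+1)) = (l.getD a 0 : ℤ) - (a+1) + 1 := by push_cast; ring
  have hm1 := part_mono l hp a (a+1) (by omega)
  unfold gfun
  split_ifs with hA hR
  · exact Or.inl ⟨by rw [← hform]; exact hA.1, by omega⟩
  · exact Or.inr (Or.inl ⟨hR.2.1, hR.1, hR.2.2, by omega⟩)
  · refine Or.inr (Or.inr ⟨by omega, fun hres => ?_, fun hres => ?_⟩)
    · by_cases h0 : l.getD a 0 = 0
      · omega
      · have : ¬ (l.getD (a+1) 0 < l.getD a 0) := fun hlt => hR ⟨by omega, hres, hlt⟩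
        omega
    · have hna : ¬ (a = 0 ∨ l.getD a 0 < l.getD (a-1) 0) :=
        fun hor => hA ⟨by rw [hform]; exact hres, hor⟩
      have ha0 : a ≠ 0 := fun h0 => hna (Or.inl h0)
      have := part_mono l hp (a-1) a (by omega)
      exact ⟨ha0, by omega⟩

lemma stepup (ℓ : ℕ) (hℓ : 2 ≤ ℓ) {x y r : ℤ} (hxy : y = x + 1) (hr0 : 0 ≤ r) (hrl : r < ℓ)
    (h : x % ℓ = r) :
    (r = ℓ - 1 ∧ y % ℓ = 0 ∧ y / ℓ = x / ℓ + 1) ∨ (r < ℓ - 1 ∧ y % ℓ = r + 1 ∧ y / ℓ = x / ℓ) := by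
  subst hxy
  have hlt := Int.emod_lt_of_pos x (show (0:ℤ) < ℓ by omega)
  rcases hstep ℓ hℓ x with ⟨h1, h2, h3⟩ | ⟨h1, h2, h3⟩
  · right; exact ⟨by omega, by omega, h3⟩
  · left; exact ⟨by omega, h2, h3⟩

lemma stepdown (ℓ : ℕ) (hℓ : 2 ≤ ℓ) {x y r : ℤ} (hxy : y = x - 1) (hr0 : 0 ≤ r) (hrl : r < ℓ)
    (h : x % ℓ = r) :
    (r = 0 ∧ y % ℓ = ℓ - 1 ∧ y / ℓ = x / ℓ - 1) ∨ (0 < r ∧ y % ℓ = r - 1 ∧ y / ℓ = x / ℓ) := by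
  have hy : x = y + 1 := by omega
  have hn := Int.emod_nonneg y (show (ℓ:ℤ) ≠ 0 by omega)
  rcases hstep ℓ hℓ y with ⟨h1, h2, h3⟩ | ⟨h1, h2, h3⟩
  · rw [← hy] at h2 h3; right; exact ⟨by omega, by omega, by omega⟩
  · rw [← hy] at h2 h3; left; exact ⟨by omega, by omega, by omega⟩

/-- If (b₀,...,b_{ℓ-1}) is the n-vector of the ℓ-core λ, then the n-vector of
s_i(λ) is obtained by swapping b_{i-1}, b_i for 1 ≤ i ≤ ℓ-1, and is
(b_{ℓ-1}+1, b₁, ..., b_{ℓ-2}, b₀-1) for i = 0. -/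
theorem stmt14 (ℓ : ℕ) (hℓ : 2 ≤ ℓ) (l : List ℕ)
    (hp : IsPartition l) (hc : IsCore ℓ l)
    (i : ℕ) (hi : i < ℓ) (b : ℕ → ℤ)
    (hb : ∀ j < ℓ, IsGreatest (regionSet ℓ l (j : ℤ)) (b j)) :
    ∀ j < ℓ, IsGreatest (regionSet ℓ (siAction ℓ i l) (j : ℤ))
      (if i = 0 then
        (if j = 0 then b (ℓ - 1) + 1 else if j = ℓ - 1 then b 0 - 1 else b j)
      else
        (if j = i then b (i - 1) else if j = i - 1 then b i else b j)) := by
  intro j hj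
  have hgd : ∀ a : ℕ, ((siAction ℓ i l).getD a 0 : ℕ) = gfun ℓ i l a := siAction_getD ℓ i hℓ l hp
  have hmem : ∀ r : ℤ, r ∈ regionSet ℓ (siAction ℓ i l) (j:ℤ) ↔
      ∃ a : ℕ, ((gfun ℓ i l a : ℤ) - (a+1)) % ℓ = (j:ℤ) ∧
        r = ((gfun ℓ i l a : ℤ) - (a+1)) / ℓ + 1 := by
    intro r
    simp only [regionSet, Set.mem_setOf_eq, hgd]
  by_cases hi0 : i = 0
  · subst hi0
    rw [if_pos rfl]
    by_cases hj0 : j = 0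
    · subst hj0
      rw [if_pos rfl]
      obtain ⟨h1, hub⟩ := hb (ℓ-1) (by omega)
      obtain ⟨a, har, hav⟩ := h1
      constructor
      · rcases stepup ℓ hℓ (rfl : (l.getD a 0:ℤ) - (↑a+1) + 1 = (l.getD a 0:ℤ) - (↑a+1) + 1)
          (by omega) (by omega) har with ⟨hc, hmod, hdiv⟩ | ⟨hc, hmod, hdiv⟩
        · have hres : ((l.getD a 0:ℤ) - (↑a+1) + 1) % ℓ = ((0:ℕ):ℤ) := by omega
          obtain ⟨b', hG⟩ := keyM1 ℓ 0 hℓ (by omega) l hp a hres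
          rw [hmem]
          exact ⟨b', by rw [hG]; omega, by rw [hG]; omega⟩
        · omega
      · intro r hr
        rw [hmem] at hr
        obtain ⟨a', har', hrv⟩ := hr
        rcases keyU ℓ 0 l hp a' with ⟨hres, hGeq⟩ | ⟨hres, hpos, hlt, hGeq⟩ | ⟨hGeq, hremimp, haddimp⟩
        · rw [hGeq] at har' hrv
          rcases stepdown ℓ hℓ
            (by ring : (l.getD a' 0:ℤ) - (↑a'+1) = ((l.getD a' 0:ℤ) - (↑a'+1) + 1) - 1)
            (by omega) (by omega) hres with ⟨hc, hmod, hdiv⟩ | ⟨hc, hmod, hdiv⟩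
          · have := hub ⟨a', by omega, rfl⟩
            omega
          · omega
        · rw [hGeq] at har'
          rcases stepdown ℓ hℓ
            (rfl : (l.getD a' 0:ℤ) - (↑a'+1) - 1 = ((l.getD a' 0:ℤ) - (↑a'+1)) - 1)
            (by omega) (by omega) hres with ⟨hc, hmod, hdiv⟩ | ⟨hc, hmod, hdiv⟩ <;> omega
        · rw [hGeq] at har' hrv
          have heq := hremimp har'
          have hD : ((l.getD (a'+1) 0 : ℤ) - (↑(a'+1) + 1)) = (l.getD a' 0 : ℤ) - (↑a'+1) - 1 := by
            omega
          rcases stepdown ℓ hℓ hD (by omega) (by omega) har' with ⟨hc, hmod, hdiv⟩ | ⟨hc, hmod, hdiv⟩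
          · have := hub ⟨a'+1, by omega, rfl⟩
            omega
          · omega
    · by_cases hj1 : j = ℓ - 1
      · subst hj1
        rw [if_neg hj0, if_pos rfl]
        obtain ⟨h1, hub⟩ := hb 0 (by omega)
        obtain ⟨a, har, hav⟩ := h1
        constructor
        · obtain ⟨b', hG⟩ := keyM2 ℓ 0 hℓ (by omega) l hp a har
          rcases stepdown ℓ hℓ
            (rfl : (l.getD a 0:ℤ) - (↑a+1) - 1 = ((l.getD a 0:ℤ) - (↑a+1)) - 1)
            (by omega) (by omega) har with ⟨hc, hmod, hdiv⟩ | ⟨hc, hmod, hdiv⟩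
          · rw [hmem]
            exact ⟨b', by rw [hG]; omega, by rw [hG]; omega⟩
          · omega
        · intro r hr
          rw [hmem] at hr
          obtain ⟨a', har', hrv⟩ := hr
          rcases keyU ℓ 0 l hp a' with ⟨hres, hGeq⟩ | ⟨hres, hpos, hlt, hGeq⟩ | ⟨hGeq, hremimp, haddimp⟩
          · rw [hGeq] at har'
            omega
          · rw [hGeq] at har' hrv
            rcases stepdown ℓ hℓ
              (rfl : (l.getD a' 0:ℤ) - (↑a'+1) - 1 = ((l.getD a' 0:ℤ) - (↑a'+1)) - 1)
              (by omega) (by omega) hres with ⟨hc, hmod, hdiv⟩ | ⟨hc, hmod, hdiv⟩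
            · have := hub ⟨a', by omega, rfl⟩
              omega
            · omega
          · rw [hGeq] at har' hrv
            rcases stepup ℓ hℓ (rfl : (l.getD a' 0:ℤ) - (↑a'+1) + 1 = (l.getD a' 0:ℤ) - (↑a'+1) + 1)
              (by omega) (by omega) har' with ⟨hc, hmod, hdiv⟩ | ⟨hc, hmod, hdiv⟩
            · obtain ⟨ha0, heqprev⟩ := haddimp (by omega)
              have hD : ((l.getD (a'-1) 0 : ℤ) - (↑(a'-1) + 1)) = (l.getD a' 0 : ℤ) - (↑a'+1) + 1 := by
                omega
              have := hub ⟨a'-1, by rw [hD]; omega, by rw [hD]⟩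
              omega
            · omega
      · rw [if_neg hj0, if_neg hj1]
        obtain ⟨h1, hub⟩ := hb j hj
        obtain ⟨a, har, hav⟩ := h1
        constructor
        · have h2 : ((l.getD a 0:ℤ) - (↑a+1)) % ℓ ≠ ((0:ℕ):ℤ) := by omega
          have h1' : ((l.getD a 0:ℤ) - (↑a+1) + 1) % ℓ ≠ ((0:ℕ):ℤ) := by
            rcases stepup ℓ hℓ (rfl : (l.getD a 0:ℤ) - (↑a+1) + 1 = (l.getD a 0:ℤ) - (↑a+1) + 1)
              (by omega) (by omega) har with ⟨hc, hmod, hdiv⟩ | ⟨hc, hmod, hdiv⟩ <;> omega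
          have hG := keyM3 ℓ 0 l a h1' h2
          rw [hmem]
          exact ⟨a, by rw [hG]; exact har, by rw [hG]; exact hav⟩
        · intro r hr
          rw [hmem] at hr
          obtain ⟨a', har', hrv⟩ := hr
          rcases keyU ℓ 0 l hp a' with ⟨hres, hGeq⟩ | ⟨hres, hpos, hlt, hGeq⟩ | ⟨hGeq, hremimp, haddimp⟩
          · rw [hGeq] at har'
            omega
          · rw [hGeq] at har'
            rcases stepdown ℓ hℓ
              (rfl : (l.getD a' 0:ℤ) - (↑a'+1) - 1 = ((l.getD a' 0:ℤ) - (↑a'+1)) - 1)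
              (by omega) (by omega) hres with ⟨hc, hmod, hdiv⟩ | ⟨hc, hmod, hdiv⟩ <;> omega
          · rw [hGeq] at har' hrv
            exact hub ⟨a', har', hrv⟩
  · have hi1 : 1 ≤ i := by omega
    rw [if_neg hi0]
    by_cases hji : j = i
    · subst hji
      rw [if_pos rfl]
      obtain ⟨h1, hub⟩ := hb (j-1) (by omega)
      obtain ⟨a, har, hav⟩ := h1
      constructor
      · rcases stepup ℓ hℓ (rfl : (l.getD a 0:ℤ) - (↑a+1) + 1 = (l.getD a 0:ℤ) - (↑a+1) + 1)
          (by omega) (by omega) har with ⟨hc, hmod, hdiv⟩ | ⟨hc, hmod, hdiv⟩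
        · omega
        · have hres : ((l.getD a 0:ℤ) - (↑a+1) + 1) % ℓ = (j:ℤ) := by omega
          obtain ⟨b', hG⟩ := keyM1 ℓ j hℓ hj l hp a hres
          rw [hmem]
          exact ⟨b', by rw [hG]; omega, by rw [hG]; omega⟩
      · intro r hr
        rw [hmem] at hr
        obtain ⟨a', har', hrv⟩ := hr
        rcases keyU ℓ j l hp a' with ⟨hres, hGeq⟩ | ⟨hres, hpos, hlt, hGeq⟩ | ⟨hGeq, hremimp, haddimp⟩
        · rw [hGeq] at har' hrv
          rcases stepdown ℓ hℓ
            (by ring : (l.getD a' 0:ℤ) - (↑a'+1) = ((l.getD a' 0:ℤ) - (↑a'+1) + 1) - 1)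
            (by omega) (by omega) hres with ⟨hc, hmod, hdiv⟩ | ⟨hc, hmod, hdiv⟩
          · omega
          · have := hub ⟨a', by omega, rfl⟩
            omega
        · rw [hGeq] at har'
          exact (emod_ne_one ℓ hℓ
            (show (l.getD a' 0:ℤ) - (↑a'+1) = ((l.getD a' 0:ℤ) - (↑a'+1) - 1) + 1 by ring)
            (har'.trans hres.symm)).elim
        · rw [hGeq] at har' hrv
          have heq := hremimp har'
          have hD : ((l.getD (a'+1) 0 : ℤ) - (↑(a'+1) + 1)) = (l.getD a' 0 : ℤ) - (↑a'+1) - 1 := by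
            omega
          rcases stepdown ℓ hℓ hD (by omega) (by omega) har' with ⟨hc, hmod, hdiv⟩ | ⟨hc, hmod, hdiv⟩
          · omega
          · have := hub ⟨a'+1, by omega, rfl⟩
            omega
    · by_cases hji' : j = i - 1
      · subst hji'
        rw [if_neg hji, if_pos rfl]
        obtain ⟨h1, hub⟩ := hb i hi
        obtain ⟨a, har, hav⟩ := h1
        constructor
        · obtain ⟨b', hG⟩ := keyM2 ℓ i hℓ hi l hp a har
          rcases stepdown ℓ hℓ
            (rfl : (l.getD a 0:ℤ) - (↑a+1) - 1 = ((l.getD a 0:ℤ) - (↑a+1)) - 1)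
            (by omega) (by omega) har with ⟨hc, hmod, hdiv⟩ | ⟨hc, hmod, hdiv⟩
          · omega
          · rw [hmem]
            exact ⟨b', by rw [hG]; omega, by rw [hG]; omega⟩
        · intro r hr
          rw [hmem] at hr
          obtain ⟨a', har', hrv⟩ := hr
          rcases keyU ℓ i l hp a' with ⟨hres, hGeq⟩ | ⟨hres, hpos, hlt, hGeq⟩ | ⟨hGeq, hremimp, haddimp⟩
          · rw [hGeq] at har'
            omega
          · rw [hGeq] at har' hrv
            rcases stepdown ℓ hℓ
              (rfl : (l.getD a' 0:ℤ) - (↑a'+1) - 1 = ((l.getD a' 0:ℤ) - (↑a'+1)) - 1)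
              (by omega) (by omega) hres with ⟨hc, hmod, hdiv⟩ | ⟨hc, hmod, hdiv⟩
            · omega
            · have := hub ⟨a', by omega, rfl⟩
              omega
          · rw [hGeq] at har' hrv
            rcases stepup ℓ hℓ (rfl : (l.getD a' 0:ℤ) - (↑a'+1) + 1 = (l.getD a' 0:ℤ) - (↑a'+1) + 1)
              (by omega) (by omega) har' with ⟨hc, hmod, hdiv⟩ | ⟨hc, hmod, hdiv⟩
            · omega
            · obtain ⟨ha0, heqprev⟩ := haddimp (by omega)
              have hD : ((l.getD (a'-1) 0 : ℤ) - (↑(a'-1) + 1)) = (l.getD a' 0 : ℤ) - (↑a'+1) + 1 := by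
                omega
              have := hub ⟨a'-1, by rw [hD]; omega, by rw [hD]⟩
              omega
      · rw [if_neg hji, if_neg hji']
        obtain ⟨h1, hub⟩ := hb j hj
        obtain ⟨a, har, hav⟩ := h1
        constructor
        · have h2 : ((l.getD a 0:ℤ) - (↑a+1)) % ℓ ≠ (i:ℤ) := by omega
          have h1' : ((l.getD a 0:ℤ) - (↑a+1) + 1) % ℓ ≠ (i:ℤ) := by
            rcases stepup ℓ hℓ (rfl : (l.getD a 0:ℤ) - (↑a+1) + 1 = (l.getD a 0:ℤ) - (↑a+1) + 1)
              (by omega) (by omega) har with ⟨hc, hmod, hdiv⟩ | ⟨hc, hmod, hdiv⟩ <;> omega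
          have hG := keyM3 ℓ i l a h1' h2
          rw [hmem]
          exact ⟨a, by rw [hG]; exact har, by rw [hG]; exact hav⟩
        · intro r hr
          rw [hmem] at hr
          obtain ⟨a', har', hrv⟩ := hr
          rcases keyU ℓ i l hp a' with ⟨hres, hGeq⟩ | ⟨hres, hpos, hlt, hGeq⟩ | ⟨hGeq, hremimp, haddimp⟩
          · rw [hGeq] at har'
            omega
          · rw [hGeq] at har'
            rcases stepdown ℓ hℓ
              (rfl : (l.getD a' 0:ℤ) - (↑a'+1) - 1 = ((l.getD a' 0:ℤ) - (↑a'+1)) - 1)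
              (by omega) (by omega) hres with ⟨hc, hmod, hdiv⟩ | ⟨hc, hmod, hdiv⟩ <;> omega
          · rw [hGeq] at har' hrv
            exact hub ⟨a', har', hrv⟩
end

section
/- Sending an ℓ-core partition λ to its transpose corresponds, under the root-lattice bijection π, to the map (a₁, ..., a_ℓ) ↦ (−a_ℓ, ..., −a₁); that is, π^{-1}(λ^tr) is the coordinate-reversal-and-negation of π^{-1}(λ). -/
/-- Bead positions of the flush abacus with ℓ runners whose largest bead level on
runner i is `a i`. -/
def Beads (ℓ : ℕ) (a : Fin ℓ → ℤ) : Set ℤ :=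
  {x | ∃ i : Fin ℓ, ∃ r : ℤ, r ≤ a i ∧ x = r * ℓ + (i : ℤ)}

/-- The (doubly infinite) beta-number set of a partition: its first-column hook
lengths together with all negative integers. -/
def BetaSet (l : List ℕ) : Set ℤ :=
  {x | (∃ a < l.length, x = (hook l a 1 : ℤ)) ∨ x < 0}

/-- The abacus determined by `a` represents the partition `l`
(up to the normalizing shift `s`). -/
def Corresponds (ℓ : ℕ) (a : Fin ℓ → ℤ) (l : List ℕ) : Prop :=
  ∃ s : ℤ, Beads ℓ a = (fun x => x + s) '' BetaSet l

/-- The transpose (conjugate) of a partition. -/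
def transposeL (l : List ℕ) : List ℕ :=
  (List.range (l.headD 0)).map (fun j => (l.filter (fun x => decide (j < x))).length)

lemma aux_len_filter_range (n a : ℕ) (h : a < n) :
    ((List.range n).filter (fun i => decide (a < i))).length = n - a - 1 := by
  induction n with
  | zero => omega
  | succ n ih =>
    rw [List.range_succ, List.filter_append, List.length_append]
    by_cases hn : a < n
    · rw [ih hn]
      simp [hn]
      omega
    · have ha : a = n := by omega
      subst ha
      have h0 : (List.range a).filter (fun i => decide (a < i)) = [] := by
        rw [List.filter_eq_nil_iff]
        intro x hx
        simp at hx ⊢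
        omega
      rw [h0]
      simp

lemma sorted_getD_anti {l : List ℕ} (hs : l.Pairwise (· ≥ ·)) {i j : ℕ} (hij : i ≤ j)
    (hj : j < l.length) : l.getD j 0 ≤ l.getD i 0 := by
  rcases eq_or_lt_of_le hij with rfl | hlt
  · exact le_rfl
  · have hi : i < l.length := lt_trans hlt hj
    rw [List.getD_eq_getElem l 0 hi, List.getD_eq_getElem l 0 hj]
    exact List.pairwise_iff_getElem.mp hs i j hi hj hlt

lemma getD_pos {l : List ℕ} (hp : IsPartition l) {i : ℕ} (hi : i < l.length) :
    0 < l.getD i 0 := by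
  rw [List.getD_eq_getElem l 0 hi]
  exact hp.2 _ (List.getElem_mem hi)

lemma hook_one {l : List ℕ} (hp : IsPartition l) {a : ℕ} (ha : a < l.length) :
    hook l a 1 = l.getD a 0 + (l.length - 1 - a) := by
  unfold hook
  have hfc : (List.range l.length).filter (fun i => decide (a < i ∧ 1 ≤ l.getD i 0))
      = (List.range l.length).filter (fun i => decide (a < i)) := by
    apply List.filter_congr
    intro i hi
    simp only [List.mem_range] at hi
    have := getD_pos hp hi
    simp only [decide_eq_decide]
    omega
  rw [hfc, aux_len_filter_range _ _ ha]
  have := getD_pos hp ha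
  omega

lemma filter_count_lt (l : List ℕ) (hs : l.Pairwise (· ≥ ·)) (j : ℕ) :
    ∀ a < l.length, (a < (l.filter (fun x => decide (j < x))).length ↔ j < l.getD a 0) := by
  induction l with
  | nil => simp
  | cons x l ih =>
    rw [List.pairwise_cons] at hs
    obtain ⟨hx, hs'⟩ := hs
    intro a ha
    match a with
    | 0 =>
      simp only [List.getD_cons_zero]
      constructor
      · intro h
        obtain ⟨y, hy⟩ := List.exists_mem_of_length_pos h
        have hpy := List.of_mem_filter hy
        have hyl := List.mem_of_mem_filter hy
        simp only [decide_eq_true_eq] at hpy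
        rcases List.mem_cons.mp hyl with rfl | hyl'
        · exact hpy
        · exact lt_of_lt_of_le hpy (hx _ hyl')
      · intro h
        rw [List.filter_cons, if_pos (by simp [h])]
        simp
    | a + 1 =>
      simp only [List.getD_cons_succ]
      rw [List.filter_cons]
      simp only [List.length_cons] at ha
      by_cases hj : j < x
      · rw [if_pos (by simp [hj]), List.length_cons, Nat.add_lt_add_iff_right]
        exact ih hs' a (by omega)
      · rw [if_neg (by simp [hj])]
        have hfe : l.filter (fun y => decide (j < y)) = [] := by
          rw [List.filter_eq_nil_iff]
          intro y hy
          simp only [decide_eq_true_eq, not_lt]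
          exact le_trans (hx _ hy) (by omega)
        rw [hfe]
        simp only [List.length_nil]
        constructor
        · omega
        · intro h
          exfalso
          have : l.getD a 0 ≤ x := by
            rw [List.getD_eq_getElem l 0 (by omega)]
            exact hx _ (List.getElem_mem _)
          omega

lemma transposeL_length (l : List ℕ) : (transposeL l).length = l.headD 0 := by
  simp [transposeL]

lemma transposeL_getD (l : List ℕ) {j : ℕ} (hj : j < l.headD 0) :
    (transposeL l).getD j 0 = (l.filter (fun x => decide (j < x))).length := by
  have hlen : j < (transposeL l).length := by rw [transposeL_length]; exact hj
  rw [List.getD_eq_getElem _ 0 hlen]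
  simp [transposeL]

lemma headD_eq_getD (l : List ℕ) (h : 0 < l.length) : l.headD 0 = l.getD 0 0 := by
  cases l with
  | nil => simp at h
  | cons x xs => rfl

lemma transposeL_isPartition {l : List ℕ} (hp : IsPartition l) :
    IsPartition (transposeL l) := by
  constructor
  · rw [List.pairwise_iff_getElem]
    intro i j hi hj hij
    unfold transposeL at hi hj ⊢
    rw [List.getElem_map, List.getElem_map, List.getElem_range, List.getElem_range]
    simp only [List.length_map, List.length_range] at hi hj
    rw [ge_iff_le, ← List.countP_eq_length_filter, ← List.countP_eq_length_filter]
    apply List.countP_mono_left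
    intro x _ hx
    simp only [decide_eq_true_eq] at hx ⊢
    omega
  · intro x hx
    unfold transposeL at hx
    rw [List.mem_map] at hx
    obtain ⟨j, hj, rfl⟩ := hx
    rw [List.mem_range] at hj
    have hl : 0 < l.length := by
      cases l with
      | nil => simp at hj
      | cons y ys => simp
    rw [List.length_pos_iff]
    intro hfe
    rw [List.filter_eq_nil_iff] at hfe
    cases l with
    | nil => simp at hj
    | cons y ys =>
      have := hfe y (List.mem_cons_self (a := y) (l := ys))
      simp only [List.headD_cons] at hj
      simp [hj] at this

lemma betaSet_mem {l : List ℕ} (hp : IsPartition l) (z : ℤ) :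
    z ∈ BetaSet l ↔ (∃ a < l.length, z = ((l.getD a 0 + (l.length - 1 - a) : ℕ) : ℤ)) ∨ z < 0 := by
  unfold BetaSet
  simp only [Set.mem_setOf_eq]
  apply or_congr_left
  apply exists_congr
  intro a
  constructor
  · rintro ⟨ha, he⟩
    exact ⟨ha, by rw [he, hook_one hp ha]⟩
  · rintro ⟨ha, he⟩
    exact ⟨ha, by rw [he, hook_one hp ha]⟩

lemma cover_aux (n m : ℕ) (lam μ : ℕ → ℕ)
    (hμn : ∀ j, μ j ≤ n)
    (hlamanti : ∀ a a', a ≤ a' → a' < n → lam a' ≤ lam a)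
    (hμanti : ∀ j j', j ≤ j' → μ j' ≤ μ j)
    (hkey : ∀ a, a < n → ∀ j, (a < μ j ↔ j < lam a))
    (hlamm : ∀ a, a < n → lam a ≤ m) :
    ∀ w, w < n + m →
      ((∃ a, a < n ∧ w = lam a + (n - 1 - a)) ↔ ¬ (∃ j, j < m ∧ w = (n - μ j) + j)) := by
  classical
  set S : Finset ℕ := (Finset.range n).image (fun a => lam a + (n - 1 - a)) with hS
  set T : Finset ℕ := (Finset.range m).image (fun j => (n - μ j) + j) with hT
  have hScard : S.card = n := by
    rw [hS, Finset.card_image_of_injOn, Finset.card_range]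
    intro a ha a' ha' he
    simp only [Finset.coe_range, Set.mem_Iio] at ha ha'
    have he' : lam a + (n - 1 - a) = lam a' + (n - 1 - a') := he
    rcases Nat.lt_trichotomy a a' with h | h | h
    · have := hlamanti a a' (le_of_lt h) ha'
      omega
    · exact h
    · have := hlamanti a' a (le_of_lt h) ha
      omega
  have hTcard : T.card = m := by
    rw [hT, Finset.card_image_of_injOn, Finset.card_range]
    intro j hj j' hj' he
    simp only [Finset.coe_range, Set.mem_Iio] at hj hj'
    have he' : (n - μ j) + j = (n - μ j') + j' := he
    rcases Nat.lt_trichotomy j j' with h | h | h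
    · have := hμanti j j' (le_of_lt h)
      have := hμn j; have := hμn j'; omega
    · exact h
    · have := hμanti j' j (le_of_lt h)
      have := hμn j; have := hμn j'; omega
  have hST : Disjoint S T := by
    rw [Finset.disjoint_left]
    intro w hwS hwT
    rw [hS, Finset.mem_image] at hwS
    rw [hT, Finset.mem_image] at hwT
    obtain ⟨a, ha, hwa⟩ := hwS
    obtain ⟨j, hj, hwj⟩ := hwT
    rw [Finset.mem_range] at ha hj
    have hwa' : lam a + (n - 1 - a) = w := hwa
    have hwj' : (n - μ j) + j = w := hwj
    have hk := hkey a ha j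
    have h1 := hμn j
    by_cases hc : j < lam a
    · have : a < μ j := hk.2 hc
      omega
    · have : ¬ a < μ j := fun h => hc (hk.1 h)
      omega
  have hSsub : S ⊆ Finset.range (n + m) := by
    rw [hS]
    intro w hw
    rw [Finset.mem_image] at hw
    obtain ⟨a, ha, hwa⟩ := hw
    rw [Finset.mem_range] at ha ⊢
    have hwa' : lam a + (n - 1 - a) = w := hwa
    have := hlamm a ha
    omega
  have hTsub : T ⊆ Finset.range (n + m) := by
    rw [hT]
    intro w hw
    rw [Finset.mem_image] at hw
    obtain ⟨j, hj, hwj⟩ := hw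
    rw [Finset.mem_range] at hj ⊢
    have hwj' : (n - μ j) + j = w := hwj
    have := hμn j
    omega
  have hcover : S ∪ T = Finset.range (n + m) := by
    apply Finset.eq_of_subset_of_card_le (Finset.union_subset hSsub hTsub)
    rw [Finset.card_union_of_disjoint hST, hScard, hTcard, Finset.card_range]
  intro w hw
  have hmem : w ∈ S ∪ T := by rw [hcover]; exact Finset.mem_range.mpr hw
  rw [Finset.mem_union] at hmem
  have hd := Finset.disjoint_left.mp hST
  have hSiff : w ∈ S ↔ ∃ a, a < n ∧ w = lam a + (n - 1 - a) := by
    rw [hS, Finset.mem_image]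
    constructor
    · rintro ⟨a, ha, hwa⟩
      exact ⟨a, Finset.mem_range.mp ha, hwa.symm⟩
    · rintro ⟨a, ha, hwa⟩
      exact ⟨a, Finset.mem_range.mpr ha, hwa.symm⟩
  have hTiff : w ∈ T ↔ ∃ j, j < m ∧ w = (n - μ j) + j := by
    rw [hT, Finset.mem_image]
    constructor
    · rintro ⟨j, hj, hwj⟩
      exact ⟨j, Finset.mem_range.mp hj, hwj.symm⟩
    · rintro ⟨j, hj, hwj⟩
      exact ⟨j, Finset.mem_range.mpr hj, hwj.symm⟩
  rw [← hSiff, ← hTiff]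
  constructor
  · intro h1 h2
    exact hd h1 h2
  · intro h1
    rcases hmem with h | h
    · exact h
    · exact absurd h h1

lemma transpose_betaSet {l : List ℕ} (hp : IsPartition l) (z : ℤ) :
    z ∈ BetaSet (transposeL l) ↔ ((l.length : ℤ) + (l.headD 0 : ℤ) - 1 - z) ∉ BetaSet l := by
  have htp := transposeL_isPartition hp
  have hμn : ∀ j : ℕ, (l.filter (fun x => decide (j < x))).length ≤ l.length :=
    fun j => List.length_filter_le _ _
  have hμanti : ∀ j j' : ℕ, j ≤ j' →
      (l.filter (fun x => decide (j' < x))).length ≤ (l.filter (fun x => decide (j < x))).length := by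
    intro j j' hjj
    rw [← List.countP_eq_length_filter, ← List.countP_eq_length_filter]
    apply List.countP_mono_left
    intro x _ hx
    simp only [decide_eq_true_eq] at hx ⊢
    omega
  have hlamm : ∀ a, a < l.length → l.getD a 0 ≤ l.headD 0 := by
    intro a ha
    have h1 := sorted_getD_anti hp.1 (Nat.zero_le a) ha
    have h2 := headD_eq_getD l (by omega)
    omega
  have hcov : ∀ w, w < l.length + l.headD 0 →
      ((∃ a, a < l.length ∧ w = l.getD a 0 + (l.length - 1 - a)) ↔
        ¬ (∃ j, j < l.headD 0 ∧ w = (l.length - (l.filter (fun x => decide (j < x))).length) + j)) :=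
    cover_aux l.length (l.headD 0) (fun a => l.getD a 0)
      (fun j => (l.filter (fun x => decide (j < x))).length)
      hμn (fun a a' h h' => sorted_getD_anti hp.1 h h') hμanti
      (fun a ha j => filter_count_lt l hp.1 j a ha) hlamm
  rw [betaSet_mem htp z, betaSet_mem hp, transposeL_length]
  constructor
  · rintro (⟨j, hj, he⟩ | hz)
    · rw [transposeL_getD l hj] at he
      rintro (⟨a, ha, he2⟩ | hlt)
      · -- derive ℕ equation and contradict hcov
        have hμj := hμn j
        have hw : l.getD a 0 + (l.length - 1 - a)
            = (l.length - (l.filter (fun x => decide (j < x))).length) + j := by omega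
        have hwlt : l.getD a 0 + (l.length - 1 - a) < l.length + l.headD 0 := by
          have := hlamm a ha; omega
        exact (hcov _ hwlt).mp ⟨a, ha, rfl⟩ ⟨j, hj, hw⟩
      · have hμj := hμn j
        omega
    · rintro (⟨a, ha, he2⟩ | hlt)
      · have := hlamm a ha
        omega
      · omega
  · intro hnot
    rw [not_or] at hnot
    obtain ⟨h1, h2⟩ := hnot
    by_cases hz0 : z < 0
    · right; exact hz0
    left
    push_neg at hz0 h2
    obtain ⟨zn, rfl⟩ := Int.eq_ofNat_of_zero_le hz0
    have hznlt : zn < l.length + l.headD 0 := by omega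
    set w := l.length + l.headD 0 - 1 - zn with hwdef
    have hwlt : w < l.length + l.headD 0 := by omega
    have hnS : ¬ (∃ a, a < l.length ∧ w = l.getD a 0 + (l.length - 1 - a)) := by
      rintro ⟨a, ha, hwa⟩
      exact h1 ⟨a, ha, by push_cast; omega⟩
    have hT : ∃ j, j < l.headD 0 ∧ w = (l.length - (l.filter (fun x => decide (j < x))).length) + j := by
      by_contra hR
      exact hnS ((hcov w hwlt).mpr hR)
    obtain ⟨j, hj, hwj⟩ := hT
    refine ⟨j, hj, ?_⟩
    rw [transposeL_getD l hj]
    have hμj := hμn j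
    have : zn = (l.filter (fun x => decide (j < x))).length + (l.headD 0 - 1 - j) := by omega
    exact_mod_cast congrArg (Nat.cast : ℕ → ℤ) this

lemma beads_mem_iff {ℓ : ℕ} (hℓ : 0 < ℓ) (c : Fin ℓ → ℤ) (r : ℤ) (i : Fin ℓ) :
    (r * (ℓ:ℤ) + ((i:ℕ):ℤ)) ∈ Beads ℓ c ↔ r ≤ c i := by
  have hℓZ : (0:ℤ) < (ℓ:ℤ) := by exact_mod_cast hℓ
  constructor
  · rintro ⟨i', r', hle, heq⟩
    have hi1 : (0:ℤ) ≤ ((i:ℕ):ℤ) := Int.ofNat_nonneg _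
    have hi2 : ((i:ℕ):ℤ) < (ℓ:ℤ) := by exact_mod_cast i.isLt
    have hi1' : (0:ℤ) ≤ ((i':ℕ):ℤ) := Int.ofNat_nonneg _
    have hi2' : ((i':ℕ):ℤ) < (ℓ:ℤ) := by exact_mod_cast i'.isLt
    have hdiff : (r - r') * (ℓ:ℤ) = ((i':ℕ):ℤ) - ((i:ℕ):ℤ) := by linear_combination heq
    have hrr : r = r' := by
      rcases lt_trichotomy r r' with h | h | h
      · exfalso
        have h1 : r - r' ≤ -1 := by omega
        have h2 : (r - r') * (ℓ:ℤ) ≤ (-1) * (ℓ:ℤ) :=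
          mul_le_mul_of_nonneg_right h1 (le_of_lt hℓZ)
        linarith
      · exact h
      · exfalso
        have h1 : (1:ℤ) ≤ r - r' := by omega
        have h2 : (1:ℤ) * (ℓ:ℤ) ≤ (r - r') * (ℓ:ℤ) :=
          mul_le_mul_of_nonneg_right h1 (le_of_lt hℓZ)
        linarith
    have hii : ((i:ℕ):ℤ) = ((i':ℕ):ℤ) := by
      rw [hrr] at heq
      linarith
    have hii' : i = i' := Fin.ext (by exact_mod_cast hii)
    rw [hii', hrr]
    exact hle
  · intro h
    exact ⟨i, r, h, rfl⟩

lemma corr_mem {ℓ : ℕ} {c : Fin ℓ → ℤ} {l : List ℕ} {s : ℤ}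
    (h : Beads ℓ c = (fun x => x + s) '' BetaSet l) (y : ℤ) :
    y ∈ BetaSet l ↔ y + s ∈ Beads ℓ c := by
  rw [h]
  constructor
  · intro hy
    exact ⟨y, hy, rfl⟩
  · rintro ⟨y', hy', he⟩
    simp only at he
    have : y' = y := by linarith
    rwa [← this]

/-- Under π, transposing an ℓ-core corresponds to reversing and negating the
root-lattice coordinates: π⁻¹(λᵗʳ) = (-a_ℓ, ..., -a₁). -/
theorem stmt15 (ℓ : ℕ) (hℓ : 2 ≤ ℓ)
    (l : List ℕ) (hp : IsPartition l) (hc : IsCore ℓ l)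
    (a : Fin ℓ → ℤ) (ha : ∑ i, a i = 0) (hcor : Corresponds ℓ a l)
    (b : Fin ℓ → ℤ) (hb : ∑ i, b i = 0) (hbcor : Corresponds ℓ b (transposeL l)) :
    ∀ j : Fin ℓ, b j = - a ⟨ℓ - 1 - (j : ℕ), by have := j.isLt; omega⟩ := by
  intro j
  have hℓ0 : 0 < ℓ := by omega
  have hℓZ : (0:ℤ) < (ℓ:ℤ) := by exact_mod_cast hℓ0
  have hℓne : (ℓ:ℤ) ≠ 0 := ne_of_gt hℓZ
  obtain ⟨s₁, h1⟩ := hcor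
  obtain ⟨s₂, h2⟩ := hbcor
  obtain ⟨t, ht⟩ : ∃ t : ℤ, t = (l.length : ℤ) + (l.headD 0 : ℤ) - 1 + s₁ + s₂ := ⟨_, rfl⟩
  have H : ∀ x : ℤ, x ∈ Beads ℓ b ↔ (t - x) ∉ Beads ℓ a := by
    intro x
    have e1 : x ∈ Beads ℓ b ↔ (x - s₂) ∈ BetaSet (transposeL l) := by
      have h3 := corr_mem h2 (x - s₂)
      have h4 : x - s₂ + s₂ = x := by ring
      rw [h4] at h3
      exact h3.symm
    rw [e1, transpose_betaSet hp (x - s₂)]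
    have h5 := corr_mem h1 ((l.length : ℤ) + (l.headD 0 : ℤ) - 1 - (x - s₂))
    have h6 : (l.length : ℤ) + (l.headD 0 : ℤ) - 1 - (x - s₂) + s₁ = t - x := by rw [ht]; ring
    rw [h6] at h5
    exact not_congr h5
  -- the index permutation
  have hmod0 : ∀ i : Fin ℓ, 0 ≤ (t - (i:ℕ)) % (ℓ:ℤ) := fun i => Int.emod_nonneg _ hℓne
  have hmodlt : ∀ i : Fin ℓ, (t - (i:ℕ)) % (ℓ:ℤ) < (ℓ:ℤ) := fun i => Int.emod_lt_of_pos _ hℓZ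
  set σ : Fin ℓ → Fin ℓ := fun i => ⟨((t - (i:ℕ)) % (ℓ:ℤ)).toNat, by
    have := hmod0 i; have := hmodlt i; omega⟩ with hσ
  have hσval : ∀ i : Fin ℓ, ((σ i : ℕ) : ℤ) = (t - (i:ℕ)) % (ℓ:ℤ) := by
    intro i
    simp only [hσ]
    exact Int.toNat_of_nonneg (hmod0 i)
  -- pointwise formula
  have hform : ∀ i : Fin ℓ, b i = (t - (i:ℕ)) / (ℓ:ℤ) - a (σ i) - 1 := by
    intro i
    have hiff : ∀ r : ℤ, r ≤ b i ↔ r ≤ (t - (i:ℕ)) / (ℓ:ℤ) - a (σ i) - 1 := by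
      intro r
      rw [← beads_mem_iff hℓ0 b r i, H]
      have hq : t - (r * (ℓ:ℤ) + ((i:ℕ):ℤ)) = ((t - (i:ℕ)) / (ℓ:ℤ) - r) * (ℓ:ℤ) + ((σ i : ℕ):ℤ) := by
        rw [hσval]
        have := Int.mul_ediv_add_emod (t - (i:ℕ)) (ℓ:ℤ)
        linear_combination -this
      rw [hq, beads_mem_iff hℓ0 a _ (σ i)]
      constructor
      · intro hna
        omega
      · intro hr h
        omega
    exact le_antisymm ((hiff (b i)).mp le_rfl) ((hiff _).mpr le_rfl)
  -- σ is bijective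
  have hσinj : Function.Injective σ := by
    intro i i' he
    have h1 : (t - (i:ℕ)) % (ℓ:ℤ) = (t - (i':ℕ)) % (ℓ:ℤ) := by
      rw [← hσval i, ← hσval i', he]
    rw [Int.emod_eq_emod_iff_emod_sub_eq_zero] at h1
    have h2 : (t - (i:ℕ)) - (t - (i':ℕ)) = ((i':ℕ):ℤ) - ((i:ℕ):ℤ) := by ring
    rw [h2] at h1
    obtain ⟨k, hk⟩ := Int.dvd_of_emod_eq_zero h1
    have hi2 : ((i:ℕ):ℤ) < (ℓ:ℤ) := by exact_mod_cast i.isLt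
    have hi2' : ((i':ℕ):ℤ) < (ℓ:ℤ) := by exact_mod_cast i'.isLt
    have hi1 : (0:ℤ) ≤ ((i:ℕ):ℤ) := Int.ofNat_nonneg _
    have hi1' : (0:ℤ) ≤ ((i':ℕ):ℤ) := Int.ofNat_nonneg _
    have hk0 : k = 0 := by
      rcases lt_trichotomy k 0 with h | h | h
      · exfalso
        have hkle : k ≤ -1 := by omega
        have : (ℓ:ℤ) * k ≤ (ℓ:ℤ) * (-1) := mul_le_mul_of_nonneg_left hkle (le_of_lt hℓZ)
        linarith
      · exact h
      · exfalso
        have hkge : (1:ℤ) ≤ k := by omega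
        have : (ℓ:ℤ) * 1 ≤ (ℓ:ℤ) * k := mul_le_mul_of_nonneg_left hkge (le_of_lt hℓZ)
        linarith
    rw [hk0, mul_zero] at hk
    have : ((i:ℕ):ℤ) = ((i':ℕ):ℤ) := by linarith
    exact Fin.ext (by exact_mod_cast this)
  have hσbij : Function.Bijective σ := Finite.injective_iff_bijective.mp hσinj
  -- sums
  have hsa : ∑ i, a (σ i) = 0 := by
    rw [Fintype.sum_bijective σ hσbij (fun i => a (σ i)) a (fun _ => rfl)]
    exact ha
  have hsmod : ∑ i : Fin ℓ, (t - ((i:ℕ):ℤ)) % (ℓ:ℤ) = ∑ i : Fin ℓ, ((i:ℕ):ℤ) :=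
    Fintype.sum_bijective σ hσbij (fun i => (t - ((i:ℕ):ℤ)) % (ℓ:ℤ)) (fun i => ((i:ℕ):ℤ))
      (fun i => (hσval i).symm)
  have hsum1 : ∑ i : Fin ℓ, (t - ((i:ℕ):ℤ)) / (ℓ:ℤ) = (ℓ:ℤ) := by
    have e : ∑ i : Fin ℓ, b i
        = (∑ i : Fin ℓ, (t - ((i:ℕ):ℤ)) / (ℓ:ℤ)) - (∑ i, a (σ i)) - (ℓ:ℤ) := by
      calc ∑ i : Fin ℓ, b i
          = ∑ i : Fin ℓ, ((t - ((i:ℕ):ℤ)) / (ℓ:ℤ) - a (σ i) - 1) :=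
            Finset.sum_congr rfl (fun i _ => hform i)
        _ = (∑ i : Fin ℓ, (t - ((i:ℕ):ℤ)) / (ℓ:ℤ)) - (∑ i, a (σ i)) - (ℓ:ℤ) := by
            rw [Finset.sum_sub_distrib, Finset.sum_sub_distrib, Finset.sum_const,
              Finset.card_univ, Fintype.card_fin]
            simp [nsmul_eq_mul]
    rw [hb, hsa] at e
    linarith
  have hgauss : 2 * (∑ i : Fin ℓ, ((i:ℕ):ℤ)) = (ℓ:ℤ) * ((ℓ:ℤ) - 1) := by
    have hg1 : (∑ i : Fin ℓ, ((i:ℕ):ℤ)) = ((∑ i ∈ Finset.range ℓ, i : ℕ) : ℤ) := by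
      rw [Nat.cast_sum]
      exact Fin.sum_univ_eq_sum_range (fun i => ((i:ℕ):ℤ)) ℓ
    have hg2 := Finset.sum_range_id_mul_two ℓ
    have hg3 := congrArg (Nat.cast : ℕ → ℤ) hg2
    push_cast [Nat.cast_sub (by omega : 1 ≤ ℓ)] at hg3
    rw [hg1]
    push_cast
    linarith
  have ht2 : t = 2 * (ℓ:ℤ) - 1 := by
    have e1 : (ℓ:ℤ) * (∑ i : Fin ℓ, (t - ((i:ℕ):ℤ)) / (ℓ:ℤ))
        = ∑ i : Fin ℓ, ((t - ((i:ℕ):ℤ)) - (t - ((i:ℕ):ℤ)) % (ℓ:ℤ)) := by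
      rw [Finset.mul_sum]
      apply Finset.sum_congr rfl
      intro i _
      have := Int.mul_ediv_add_emod (t - ((i:ℕ):ℤ)) (ℓ:ℤ)
      linarith
    rw [hsum1, Finset.sum_sub_distrib, hsmod] at e1
    have e2 : ∑ i : Fin ℓ, (t - ((i:ℕ):ℤ))
        = (ℓ:ℤ) * t - ∑ i : Fin ℓ, ((i:ℕ):ℤ) := by
      rw [Finset.sum_sub_distrib, Finset.sum_const, Finset.card_univ, Fintype.card_fin]
      simp [nsmul_eq_mul]
    rw [e2] at e1
    have e3 : (ℓ:ℤ) * t = (ℓ:ℤ) * (2 * (ℓ:ℤ) - 1) := by linarith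
    exact mul_left_cancel₀ hℓne e3
  -- conclude
  have hjlt : (j:ℕ) < ℓ := j.isLt
  have hjZ : ((j:ℕ):ℤ) < (ℓ:ℤ) := by exact_mod_cast hjlt
  have hj0 : (0:ℤ) ≤ ((j:ℕ):ℤ) := Int.ofNat_nonneg _
  have hrepr : t - ((j:ℕ):ℤ) = ((ℓ:ℤ) - 1 - ((j:ℕ):ℤ)) + 1 * (ℓ:ℤ) := by
    rw [ht2]; ring
  have hu0 : (0:ℤ) ≤ (ℓ:ℤ) - 1 - ((j:ℕ):ℤ) := by omega
  have hult : (ℓ:ℤ) - 1 - ((j:ℕ):ℤ) < (ℓ:ℤ) := by omega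
  have hdiv : (t - ((j:ℕ):ℤ)) / (ℓ:ℤ) = 1 := by
    rw [hrepr, Int.add_mul_ediv_right _ _ hℓne, Int.ediv_eq_zero_of_lt hu0 hult]
    norm_num
  have hmod : (t - ((j:ℕ):ℤ)) % (ℓ:ℤ) = (ℓ:ℤ) - 1 - ((j:ℕ):ℤ) := by
    rw [hrepr, Int.add_mul_emod_self_right]
    exact Int.emod_eq_of_lt hu0 hult
  have hσj : σ j = ⟨ℓ - 1 - (j:ℕ), by omega⟩ := by
    apply Fin.ext
    have hv := hσval j
    rw [hmod] at hv
    simp only [Fin.val_mk]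
    omega
  rw [hform j, hdiv, hσj]
  ring
end

section
/- Let λ be an ℓ-core of length k and let Φ̃ be the column analogue of the Berg–Vazirani bijection (deleting all columns whose first-row hook length is congruent to h_{(1,1)} mod ℓ). Then in each row of λ, exactly one box of hook length < ℓ (i.e., one skew box) is deleted by Φ̃. -/
namespace Stmt16Aux

/-- The leg count. -/
def N (l : List ℕ) (a c : ℕ) : ℕ :=
  ((List.range l.length).filter (fun i => decide (a < i ∧ c ≤ l.getD i 0))).length

lemma hook_def (l : List ℕ) (a c : ℕ) :
    hook l a c = (l.getD a 0 - c) + N l a c + 1 := rfl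

lemma N_card (l : List ℕ) (a c : ℕ) :
    N l a c = ((Finset.range l.length).filter (fun i => a < i ∧ c ≤ l.getD i 0)).card := rfl

lemma getD_mono (l : List ℕ) (hs : l.Pairwise (· ≥ ·)) {i j : ℕ} (hij : i ≤ j)
    (hj : j < l.length) : l.getD j 0 ≤ l.getD i 0 := by
  rcases eq_or_lt_of_le hij with rfl | h
  · exact le_refl _
  · rw [List.getD_eq_getElem _ _ (lt_trans h hj), List.getD_eq_getElem _ _ hj]
    have := hs.rel_get_of_lt (a := ⟨i, lt_trans h hj⟩) (b := ⟨j, hj⟩) h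
    simpa [List.get_eq_getElem] using this

lemma getD_pos (l : List ℕ) (hpos : ∀ x ∈ l, 0 < x) {i : ℕ} (hi : i < l.length) :
    0 < l.getD i 0 := by
  rw [List.getD_eq_getElem l 0 hi]
  exact hpos _ (List.getElem_mem hi)

lemma N_mono (l : List ℕ) (a : ℕ) {c c' : ℕ} (h : c ≤ c') : N l a c' ≤ N l a c := by
  rw [N_card, N_card]
  apply Finset.card_le_card
  intro i hi
  simp only [Finset.mem_filter, Finset.mem_range] at *
  exact ⟨hi.1, hi.2.1, le_trans h hi.2.2⟩

lemma N_one (l : List ℕ) (hpos : ∀ x ∈ l, 0 < x) {a : ℕ} (ha : a < l.length) :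
    N l a 1 = l.length - 1 - a := by
  rw [N_card]
  have : (Finset.range l.length).filter (fun i => a < i ∧ 1 ≤ l.getD i 0)
      = Finset.Ioo a l.length := by
    ext i
    simp only [Finset.mem_filter, Finset.mem_range, Finset.mem_Ioo]
    constructor
    · rintro ⟨h1, h2, h3⟩; exact ⟨h2, h1⟩
    · rintro ⟨h1, h2⟩; exact ⟨h2, h1, getD_pos l hpos h2⟩
  rw [this, Nat.card_Ioo]
  omega

lemma block_ge (l : List ℕ) (hs : l.Pairwise (· ≥ ·)) {a i c : ℕ} (hai : a < i)
    (hik : i < l.length) (hi : i ≤ a + N l a c) : c ≤ l.getD i 0 := by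
  by_contra h
  push_neg at h
  have hsub : (Finset.range l.length).filter (fun j => a < j ∧ c ≤ l.getD j 0)
      ⊆ Finset.Ioo a i := by
    intro j hj
    simp only [Finset.mem_filter, Finset.mem_range] at hj
    simp only [Finset.mem_Ioo]
    refine ⟨hj.2.1, ?_⟩
    by_contra hji
    push_neg at hji
    have := getD_mono l hs hji hj.1
    omega
  have hcard := Finset.card_le_card hsub
  rw [← N_card, Nat.card_Ioo] at hcard
  omega

lemma block_lt (l : List ℕ) (hs : l.Pairwise (· ≥ ·)) {a i c : ℕ} (hai : a < i)
    (hik : i < l.length) (hi : a + N l a c < i) : l.getD i 0 < c := by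
  by_contra h
  push_neg at h
  have hsub : Finset.Ioc a i ⊆
      (Finset.range l.length).filter (fun j => a < j ∧ c ≤ l.getD j 0) := by
    intro j hj
    simp only [Finset.mem_Ioc] at hj
    simp only [Finset.mem_filter, Finset.mem_range]
    exact ⟨lt_of_le_of_lt hj.2 hik, hj.1, le_trans h (getD_mono l hs hj.2 hik)⟩
  have hcard := Finset.card_le_card hsub
  rw [← N_card, Nat.card_Ioc] at hcard
  omega

lemma N_zero_eq (l : List ℕ) (hs : l.Pairwise (· ≥ ·)) {a c : ℕ} (ha : a < l.length)
    (hc : c ≤ l.getD a 0) : N l 0 c = N l a c + a := by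
  rw [N_card, N_card]
  have hunion : (Finset.range l.length).filter (fun i => 0 < i ∧ c ≤ l.getD i 0)
      = (Finset.range l.length).filter (fun i => a < i ∧ c ≤ l.getD i 0) ∪ Finset.Ioc 0 a := by
    ext i
    simp only [Finset.mem_union, Finset.mem_filter, Finset.mem_range, Finset.mem_Ioc]
    constructor
    · rintro ⟨h1, h2, h3⟩
      by_cases hia : a < i
      · exact Or.inl ⟨h1, hia, h3⟩
      · exact Or.inr ⟨h2, by omega⟩
    · rintro (⟨h1, h2, h3⟩ | ⟨h1, h2⟩)
      · exact ⟨h1, by omega, h3⟩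
      · exact ⟨by omega, h1, le_trans hc (getD_mono l hs h2 ha)⟩
  rw [hunion, Finset.card_union_of_disjoint, Nat.card_Ioc]
  · omega
  · rw [Finset.disjoint_left]
    intro i hi hi2
    simp only [Finset.mem_filter, Finset.mem_range] at hi
    simp only [Finset.mem_Ioc] at hi2
    omega

lemma hook_one (l : List ℕ) (hpos : ∀ x ∈ l, 0 < x) {a : ℕ} (ha : a < l.length) :
    hook l a 1 = l.getD a 0 + (l.length - 1 - a) := by
  have := getD_pos l hpos ha
  rw [hook_def, N_one l hpos ha]
  omega

lemma hook_identity (l : List ℕ) (hs : l.Pairwise (· ≥ ·)) (hpos : ∀ x ∈ l, 0 < x)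
    {a c : ℕ} (ha : a < l.length) (hc1 : 1 ≤ c) (hc2 : c ≤ l.getD a 0) :
    hook l a c + hook l 0 1 = hook l 0 c + hook l a 1 := by
  have h0 : (0:ℕ) < l.length := by omega
  have hN0 := N_zero_eq l hs ha hc2
  have hN01 : N l 0 1 = l.length - 1 := by rw [N_one l hpos h0]; omega
  have hNa1 : N l a 1 = l.length - 1 - a := N_one l hpos ha
  have hla : 1 ≤ l.getD a 0 := getD_pos l hpos ha
  have hl0 : l.getD a 0 ≤ l.getD 0 0 := getD_mono l hs (Nat.zero_le a) ha
  simp only [hook_def]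
  omega

lemma hook_strict (l : List ℕ) {a c c' : ℕ} (hcc : c < c') (hc' : c' ≤ l.getD a 0) :
    hook l a c' < hook l a c := by
  have := N_mono l a (le_of_lt hcc)
  simp only [hook_def]
  omega

end Stmt16Aux

open Stmt16Aux

/-- The column analogue Φ̃ of the Berg–Vazirani bijection: delete every column
whose first-row hook length is congruent to h_{(1,1)} mod ℓ (columns are
1-based: column c+1 has top-box hook `hook l 0 (c+1)`), dropping empty rows. -/
def tilde (ℓ : ℕ) (l : List ℕ) : List ℕ :=
  (l.map (fun p =>
    ((List.range p).filter
      (fun c => decide (¬ hook l 0 (c + 1) % ℓ = hook l 0 1 % ℓ))).length)).filter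
    (fun x => decide (0 < x))

/-- In each row of an ℓ-core of length k, exactly one box deleted by Φ̃ (the
column-deletion bijection) has hook length < ℓ, i.e. is a skew box. -/
theorem stmt16 (ℓ k : ℕ) (hℓ : 2 ≤ ℓ) (hk : 0 < k) (l : List ℕ)
    (hp : IsPartition l) (hc : IsCore ℓ l) (hlen : l.length = k) :
    ∀ a < l.length, ∃! c : ℕ,
      1 ≤ c ∧ c ≤ l.getD a 0 ∧
      hook l 0 c % ℓ = hook l 0 1 % ℓ ∧ hook l a c < ℓ := by
  obtain ⟨hs, hpos⟩ := hp
  intro a ha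
  have hla1 : 1 ≤ l.getD a 0 := getD_pos l hpos ha
  have hcore_a : ¬ ℓ ∣ hook l a 1 := hc a ha 1 le_rfl hla1
  set β := hook l a 1 with hβdef
  set r := β % ℓ with hrdef
  have hr1 : 1 ≤ r := by
    rcases Nat.eq_zero_or_pos r with h | h
    · exact absurd (Nat.dvd_of_mod_eq_zero h) hcore_a
    · exact h
  have hrl : r < ℓ := Nat.mod_lt _ (by omega)
  have hβr : r ≤ β := Nat.mod_le _ _
  -- key characterization
  have key : ∀ c, 1 ≤ c → c ≤ l.getD a 0 →
      ((hook l 0 c % ℓ = hook l 0 1 % ℓ ∧ hook l a c < ℓ) ↔ hook l a c = r) := by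
    intro c h1 h2
    have hid := hook_identity l hs hpos ha h1 h2
    constructor
    · rintro ⟨hmod, hlt⟩
      have h4 : hook l a c + hook l 0 1 ≡ hook l a 1 + hook l 0 1 [MOD ℓ] := by
        calc hook l a c + hook l 0 1 = hook l 0 c + hook l a 1 := hid
          _ ≡ hook l 0 1 + hook l a 1 [MOD ℓ] := Nat.ModEq.add_right _ hmod
          _ = hook l a 1 + hook l 0 1 := add_comm _ _
      have h3 : hook l a c ≡ β [MOD ℓ] := Nat.ModEq.add_right_cancel' _ h4
      have : hook l a c % ℓ = hook l a c := Nat.mod_eq_of_lt hlt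
      rw [← this]
      exact h3
    · intro heq
      refine ⟨?_, by omega⟩
      have h3 : hook l a c ≡ β [MOD ℓ] := by
        show hook l a c % ℓ = β % ℓ
        rw [heq, ← hrdef, Nat.mod_eq_of_lt hrl]
      have h4 : hook l 0 c + hook l a 1 ≡ hook l 0 1 + hook l a 1 [MOD ℓ] := by
        calc hook l 0 c + hook l a 1 = hook l a c + hook l 0 1 := hid.symm
          _ ≡ β + hook l 0 1 [MOD ℓ] := h3.add_right _
          _ = hook l 0 1 + hook l a 1 := add_comm _ _
      exact Nat.ModEq.add_right_cancel' _ h4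
  -- existence of a column with hook = r
  have hβ1 : r ≤ hook l a 1 := hβr
  set c₀ := Nat.findGreatest (fun c => r ≤ hook l a c) (l.getD a 0) with hc₀def
  have hc₀1 : 1 ≤ c₀ := Nat.le_findGreatest hla1 hβ1
  have hc₀le : c₀ ≤ l.getD a 0 := Nat.findGreatest_le _
  have hPc₀ : r ≤ hook l a c₀ := Nat.findGreatest_spec (P := fun c => r ≤ hook l a c) hla1 hβ1
  have hβeq : β = l.getD a 0 + (l.length - 1 - a) := hook_one l hpos ha
  have hfinal : hook l a c₀ = r := by
    by_contra hne
    have hgt : r < hook l a c₀ := by omega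
    -- find a row i with hook l i 1 = β - r, contradiction with core
    have hNle : N l a c₀ ≤ l.length - 1 - a := by
      calc N l a c₀ ≤ N l a 1 := N_mono l a hc₀1
        _ = l.length - 1 - a := N_one l hpos ha
    obtain ⟨i, hai, hik, hieq⟩ : ∃ i, a < i ∧ i < l.length ∧ hook l i 1 + r = β := by
      rcases lt_or_eq_of_le hc₀le with hlt | heq
      · -- c₀ < λ_a : the next column has hook < r
        have hnext : ¬ r ≤ hook l a (c₀ + 1) :=
          Nat.findGreatest_is_greatest (P := fun c => r ≤ hook l a c)
            (n := l.getD a 0) (k := c₀ + 1) (by omega) (by omega)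
        have hfc : hook l a c₀ = (l.getD a 0 - c₀) + N l a c₀ + 1 := hook_def l a c₀
        have hfc1 : hook l a (c₀+1) = (l.getD a 0 - (c₀+1)) + N l a (c₀+1) + 1 :=
          hook_def l a (c₀+1)
        have hNm : N l a (c₀+1) ≤ N l a c₀ := N_mono l a (by omega)
        refine ⟨a + (r + c₀ - l.getD a 0), by omega, by omega, ?_⟩
        have hge : c₀ ≤ l.getD (a + (r + c₀ - l.getD a 0)) 0 :=
          block_ge l hs (a := a) (i := a + (r + c₀ - l.getD a 0)) (c := c₀)
            (by omega) (by omega) (by omega)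
        have hlt2 : l.getD (a + (r + c₀ - l.getD a 0)) 0 < c₀ + 1 :=
          block_lt l hs (a := a) (i := a + (r + c₀ - l.getD a 0)) (c := c₀ + 1)
            (by omega) (by omega) (by omega)
        have hone := hook_one l hpos (a := a + (r + c₀ - l.getD a 0)) (by omega)
        omega
      · -- c₀ = λ_a
        have hfc : hook l a c₀ = (l.getD a 0 - c₀) + N l a c₀ + 1 := hook_def l a c₀
        refine ⟨a + r, by omega, by omega, ?_⟩
        have hge : c₀ ≤ l.getD (a + r) 0 :=
          block_ge l hs (a := a) (i := a + r) (c := c₀) (by omega) (by omega) (by omega)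
        have hle2 : l.getD (a + r) 0 ≤ l.getD a 0 := getD_mono l hs (by omega) (by omega)
        have hone := hook_one l hpos (a := a + r) (by omega)
        omega
    -- hook l i 1 is divisible by ℓ, contradicting core
    have hi1 : 1 ≤ l.getD i 0 := getD_pos l hpos hik
    apply hc i hik 1 le_rfl hi1
    have h5 : hook l i 1 + r ≡ 0 + r [MOD ℓ] := by
      show (hook l i 1 + r) % ℓ = (0 + r) % ℓ
      rw [hieq, ← hrdef, Nat.zero_add, Nat.mod_eq_of_lt hrl]
    have h6 : hook l i 1 ≡ 0 [MOD ℓ] := Nat.ModEq.add_right_cancel' _ h5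
    exact Nat.dvd_of_mod_eq_zero (by simpa [Nat.ModEq] using h6)
  refine ⟨c₀, ⟨hc₀1, hc₀le, (key c₀ hc₀1 hc₀le).mpr hfinal⟩, ?_⟩
  rintro y ⟨hy1, hy2, hy3, hy4⟩
  have hyr : hook l a y = r := (key y hy1 hy2).mp ⟨hy3, hy4⟩
  rcases lt_trichotomy y c₀ with h | h | h
  · have := hook_strict l h hc₀le
    omega
  · exact h
  · have := hook_strict l h hy2
    omega
end

section
/- Let λ be an ℓ-core of length k and Φ̃ the column-deletion bijection to (ℓ−1)-cores. For any box B of λ not deleted by Φ̃, with corresponding box B̃ in Φ̃(λ): B has hook length < ℓ in λ if and only if B̃ has hook length < ℓ−1 in Φ̃(λ). -/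
def McD (l : List ℕ) (c : ℕ) : ℕ := ((Finset.range l.length).filter (fun i => l.getD i 0 < c)).card
def xcD (l : List ℕ) (c : ℕ) : ℕ := c - 1 + McD l c
def betD (l : List ℕ) (a : ℕ) : ℕ := l.getD a 0 + (l.length - 1 - a)
def KcD (ℓ : ℕ) (l : List ℕ) (t : ℕ) : ℕ :=
  ((Finset.range t).filter (fun j => ¬ ℓ ∣ xcD l (j+1))).card

lemma flenB (n : ℕ) (p : ℕ → Bool) :
    ((List.range n).filter p).length = ((Finset.range n).filter (fun i => p i = true)).card := by
  simp [Finset.card, Finset.range, Finset.filter, Multiset.range, Multiset.filter]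

lemma flen (n : ℕ) (P : ℕ → Prop) [DecidablePred P] :
    ((List.range n).filter (fun i => decide (P i))).length = ((Finset.range n).filter P).card := by
  simp [Finset.card, Finset.range, Finset.filter, Multiset.range, Multiset.filter]
  rfl

lemma sorted_getD (l : List ℕ) (hp : IsPartition l) {i j : ℕ} (hij : i ≤ j) (hj : j < l.length) :
    l.getD j 0 ≤ l.getD i 0 := by
  rcases eq_or_lt_of_le hij with rfl | hij
  · exact le_refl _
  · have hi : i < l.length := lt_trans hij hj
    rw [List.getD_eq_getElem _ _ hi, List.getD_eq_getElem _ _ hj]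
    exact List.pairwise_iff_getElem.mp hp.1 i j hi hj hij

lemma pos_getD (l : List ℕ) (hp : IsPartition l) {i : ℕ} (hi : i < l.length) :
    0 < l.getD i 0 := by
  rw [List.getD_eq_getElem _ _ hi]
  exact hp.2 _ (List.getElem_mem _)

lemma hook_xc (l : List ℕ) (hp : IsPartition l) {a c : ℕ} (ha : a < l.length)
    (h1 : 1 ≤ c) (h2 : c ≤ l.getD a 0) :
    hook l a c + xcD l c = betD l a := by
  have hkey : ((Finset.range l.length).filter (fun i => a < i ∧ c ≤ l.getD i 0)).card
      + (McD l c + (a + 1)) = l.length := by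
    have hnot : ((Finset.range l.length).filter (fun i => ¬ (a < i ∧ c ≤ l.getD i 0))).card
        = McD l c + (a + 1) := by
      have hcong : ((Finset.range l.length).filter (fun i => ¬ (a < i ∧ c ≤ l.getD i 0)))
          = ((Finset.range l.length).filter (fun i => l.getD i 0 < c ∨ i ≤ a)) := by
        apply Finset.filter_congr
        intro i _
        constructor
        · intro h; by_cases hia : i ≤ a
          · simp [hia]
          · left; omega
        · intro h; rcases h with h | h
          · omega
          · omega
      rw [hcong, Finset.filter_or, Finset.card_union_of_disjoint]
      · have e1 : ((Finset.range l.length).filter (fun i => l.getD i 0 < c)).card = McD l c := rfl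
        have e2 : ((Finset.range l.length).filter (fun i => i ≤ a)) = Finset.range (a+1) := by
          ext i; simp only [Finset.mem_filter, Finset.mem_range]; omega
        rw [e1, e2, Finset.card_range]
      · rw [Finset.disjoint_left]
        intro i hi1 hi2
        simp only [Finset.mem_filter, Finset.mem_range] at hi1 hi2
        have := sorted_getD l hp hi2.2 ha
        omega
    have := Finset.card_filter_add_card_filter_not (s := Finset.range l.length)
      (p := fun i => a < i ∧ c ≤ l.getD i 0)
    rw [Finset.card_range] at this
    omega
  have hb : ((List.range l.length).filter (fun i => decide (a < i ∧ c ≤ l.getD i 0))).length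
      = ((Finset.range l.length).filter (fun i => a < i ∧ c ≤ l.getD i 0)).card :=
    flen _ _
  unfold hook xcD betD McD at *
  omega

lemma one_le_hook (l : List ℕ) (a c : ℕ) : 1 ≤ hook l a c := by unfold hook; omega

lemma Mc_one (l : List ℕ) (hp : IsPartition l) : McD l 1 = 0 := by
  unfold McD
  rw [Finset.card_eq_zero, Finset.filter_eq_empty_iff]
  intro i hi
  have := pos_getD l hp (Finset.mem_range.mp hi)
  omega

lemma xc_one (l : List ℕ) (hp : IsPartition l) : xcD l 1 = 0 := by
  unfold xcD; rw [Mc_one l hp]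

lemma Mc_mono (l : List ℕ) {c c' : ℕ} (h : c ≤ c') : McD l c ≤ McD l c' := by
  apply Finset.card_le_card
  intro i hi
  simp only [Finset.mem_filter, Finset.mem_range] at *
  omega

lemma xc_mono (l : List ℕ) {c c' : ℕ} (h : c ≤ c') : xcD l c ≤ xcD l c' := by
  have := Mc_mono l h; unfold xcD; omega

lemma xc_strictmono (l : List ℕ) {c c' : ℕ} (h1 : 1 ≤ c) (h : c < c') : xcD l c < xcD l c' := by
  have := Mc_mono l (le_of_lt h); unfold xcD; omega

lemma bet_eq_hook_one (l : List ℕ) (hp : IsPartition l) {a : ℕ} (ha : a < l.length) :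
    hook l a 1 = betD l a := by
  have := hook_xc l hp ha (le_refl 1) (pos_getD l hp ha)
  rw [xc_one l hp] at this
  omega

lemma surv (ℓ : ℕ) (l : List ℕ) (hp : IsPartition l) {c : ℕ} (h0 : 0 < l.length)
    (h1 : 1 ≤ c) (h2 : c ≤ l.getD 0 0) :
    (hook l 0 c % ℓ = hook l 0 1 % ℓ) ↔ ℓ ∣ xcD l c := by
  have hx := hook_xc l hp h0 h1 h2
  have hb := bet_eq_hook_one l hp h0
  have hle : hook l 0 c ≤ hook l 0 1 := by omega
  have := Nat.modEq_iff_dvd' (n := ℓ) hle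
  unfold Nat.ModEq at this
  rw [this]
  constructor <;> intro h <;> [skip; skip] <;>
    · have : hook l 0 1 - hook l 0 c = xcD l c := by omega
      first
        | (rw [this] at *; assumption)
        | (rw [← this] at *; assumption)

lemma Mc_le (l : List ℕ) (c : ℕ) : McD l c ≤ l.length := by
  unfold McD
  have := Finset.card_filter_le (Finset.range l.length) (fun i => l.getD i 0 < c)
  rwa [Finset.card_range] at this

lemma xc_ge (l : List ℕ) (c : ℕ) : c - 1 ≤ xcD l c := by unfold xcD; omega

-- the segment lemma: rows with getD < c are exactly the last McD l c rows
lemma segC (l : List ℕ) (hp : IsPartition l) (c : ℕ) {i : ℕ} (hi : i < l.length) :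
    l.getD i 0 < c ↔ l.length - McD l c ≤ i := by
  constructor
  · intro h
    have hsub : Finset.Ico i l.length ⊆ (Finset.range l.length).filter (fun j => l.getD j 0 < c) := by
      intro j hj
      simp only [Finset.mem_Ico] at hj
      simp only [Finset.mem_filter, Finset.mem_range]
      exact ⟨hj.2, lt_of_le_of_lt (sorted_getD l hp hj.1 hj.2) h⟩
    have := Finset.card_le_card hsub
    rw [Nat.card_Ico] at this
    unfold McD
    omega
  · intro h
    by_contra hcon
    push_neg at hcon
    have hsub : ((Finset.range l.length).filter (fun j => l.getD j 0 < c)) ⊆ Finset.Ico (i+1) l.length := by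
      intro j hj
      simp only [Finset.mem_filter, Finset.mem_range] at hj
      simp only [Finset.mem_Ico]
      refine ⟨?_, hj.1⟩
      by_contra hji
      push_neg at hji
      have := sorted_getD l hp (Nat.lt_succ_iff.mp hji) hi
      omega
    have := Finset.card_le_card hsub
    rw [Nat.card_Ico] at this
    unfold McD at h
    omega

-- covering lemma
lemma cover (l : List ℕ) (hp : IsPartition l) {a : ℕ} (ha : a < l.length) {y : ℕ}
    (hy : y < betD l a) :
    (∃ j, 1 ≤ j ∧ j ≤ l.getD a 0 ∧ xcD l j = y) ∨
    (∃ i, a < i ∧ i < l.length ∧ betD l i = y) := by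
  -- j* := greatest j ≤ y+1 with xcD l j ≤ y
  set P : ℕ → Prop := fun j => 1 ≤ j ∧ xcD l j ≤ y with hP
  have hP1 : P 1 := ⟨le_refl 1, by rw [xc_one l hp]; omega⟩
  set js := Nat.findGreatest P (y+1) with hjs
  have hjs1 : 1 ≤ js := Nat.le_findGreatest (by omega) hP1
  have hjsP : P js := Nat.findGreatest_spec (m := 1) (by omega) hP1
  have hjsle : js ≤ y + 1 := Nat.findGreatest_le _
  have hnext : y < xcD l (js + 1) := by
    by_cases hcase : js + 1 ≤ y + 1
    · have hng : ¬ P (js + 1) := Nat.findGreatest_is_greatest (by omega) hcase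
      simp only [hP, not_and] at hng
      have := hng (by omega)
      omega
    · have hje : js = y + 1 := by omega
      have := xc_ge l (js + 1)
      omega
  have hxjs : xcD l js ≤ y := hjsP.2
  by_cases heq : xcD l js = y
  · -- left branch: need js ≤ l.getD a 0
    left
    refine ⟨js, hjsP.1, ?_, heq⟩
    by_contra hgt
    push_neg at hgt
    -- xcD l (La + 1) > bet a - ... ≥ y
    have hMc : l.length - a ≤ McD l (l.getD a 0 + 1) := by
      have hsub : Finset.Ico a l.length ⊆ (Finset.range l.length).filter (fun j => l.getD j 0 < l.getD a 0 + 1) := by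
        intro j hj
        simp only [Finset.mem_Ico] at hj
        simp only [Finset.mem_filter, Finset.mem_range]
        exact ⟨hj.2, by have := sorted_getD l hp hj.1 hj.2; omega⟩
      have := Finset.card_le_card hsub
      rw [Nat.card_Ico] at this
      unfold McD
      omega
    have hxa : betD l a < xcD l (l.getD a 0 + 1) := by
      unfold xcD betD
      omega
    have := xc_mono l (show l.getD a 0 + 1 ≤ js by omega)
    omega
  · -- right branch
    right
    have hlt : xcD l js < y := by omega
    set m1 := McD l js with hm1
    set m2 := McD l (js+1) with hm2
    have hxjs' : js - 1 + m1 = xcD l js := rfl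
    have hxnext : js + m2 = xcD l (js+1) := by unfold xcD; omega
    have hm2n : m2 ≤ l.length := Mc_le l _
    have hm1m2 : m1 ≤ m2 := Mc_mono l (by omega)
    -- key inequalities
    have hine1 : m1 ≤ y - js := by omega
    have hine2 : y - js < m2 := by omega
    have hyjs : js ≤ y := by omega
    -- the candidate row
    set i := js + l.length - 1 - y with hi
    -- first show i < n
    have hC1 : l.getD a 0 < js ↔ l.length - m1 ≤ a := segC l hp js ha
    have hbeta : betD l a = l.getD a 0 + (l.length - 1 - a) := rfl
    have hin : i < l.length := by omega
    have hC2 : l.getD i 0 < js + 1 ↔ l.length - m2 ≤ i := segC l hp (js+1) hin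
    have hC3 : l.getD i 0 < js ↔ l.length - m1 ≤ i := segC l hp js hin
    have hLi : l.getD i 0 = js := by omega
    have hia : a < i := by
      by_contra hcon
      push_neg at hcon
      have := sorted_getD l hp hcon ha
      unfold betD at hy
      omega
    exact ⟨i, hia, hin, by unfold betD; omega⟩

lemma Ioc_dvd_count (ℓ u w : ℕ) (h : u ≤ w) :
    ((Finset.Ioc u w).filter (fun y => ℓ ∣ y)).card = w / ℓ - u / ℓ := by
  have hu := Nat.Ioc_filter_dvd_card_eq_div u ℓ
  have hw := Nat.Ioc_filter_dvd_card_eq_div w ℓ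
  have hunion : Finset.Ioc 0 u ∪ Finset.Ioc u w = Finset.Ioc 0 w :=
    Finset.Ioc_union_Ioc_eq_Ioc (Nat.zero_le u) h
  have hdisj : Disjoint ((Finset.Ioc 0 u).filter (fun y => ℓ ∣ y))
      ((Finset.Ioc u w).filter (fun y => ℓ ∣ y)) := by
    rw [Finset.disjoint_left]
    intro x h1 h2
    simp only [Finset.mem_filter, Finset.mem_Ioc] at h1 h2
    omega
  have : ((Finset.Ioc 0 w).filter (fun y => ℓ ∣ y)).card
      = ((Finset.Ioc 0 u).filter (fun y => ℓ ∣ y)).card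
        + ((Finset.Ioc u w).filter (fun y => ℓ ∣ y)).card := by
    rw [← hunion, Finset.filter_union, Finset.card_union_of_disjoint hdisj]
  have e1 : ((Finset.Ioc 0 u).filter fun y => ℓ ∣ y).card = u / ℓ := hu
  have e2 : ((Finset.Ioc 0 w).filter fun y => ℓ ∣ y).card = w / ℓ := hw
  omega

lemma D0eq (ℓ : ℕ) (l : List ℕ) (hp : IsPartition l) (hcore : IsCore ℓ l)
    {a c : ℕ} (ha : a < l.length) (h1 : 1 ≤ c) (h2 : c ≤ l.getD a 0) :
    ((Finset.Ico c (l.getD a 0)).filter (fun j => ℓ ∣ xcD l (j+1))).card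
      = (betD l a - 1) / ℓ - xcD l c / ℓ := by
  have hxcb : xcD l c + 1 ≤ betD l a := by
    have := hook_xc l hp ha h1 h2
    have := one_le_hook l a c
    omega
  rw [← Ioc_dvd_count ℓ (xcD l c) (betD l a - 1) (by omega)]
  apply Finset.card_bij (fun j _ => xcD l (j+1))
  · intro j hj
    simp only [Finset.mem_filter, Finset.mem_Ico] at hj
    simp only [Finset.mem_filter, Finset.mem_Ioc]
    have hlt : xcD l c < xcD l (j+1) := xc_strictmono l h1 (by omega)
    have hub : xcD l (j+1) + 1 ≤ betD l a := by
      have := hook_xc l hp ha (show 1 ≤ j+1 by omega) (show j+1 ≤ l.getD a 0 by omega)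
      have := one_le_hook l a (j+1)
      omega
    exact ⟨⟨hlt, by omega⟩, hj.2⟩
  · intro j hj j' hj' heq
    simp only [Finset.mem_filter, Finset.mem_Ico] at hj hj'
    by_contra hne
    rcases Nat.lt_or_ge j j' with h | h
    · have := xc_strictmono l (show 1 ≤ j + 1 by omega) (show j+1 < j'+1 by omega)
      omega
    · have hlt : j' < j := by omega
      have := xc_strictmono l (show 1 ≤ j' + 1 by omega) (show j'+1 < j+1 by omega)
      omega
  · intro y hy
    simp only [Finset.mem_filter, Finset.mem_Ioc] at hy
    have hyb : y < betD l a := by omega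
    rcases cover l hp ha hyb with ⟨j, hj1, hj2, hj3⟩ | ⟨i, hi1, hi2, hi3⟩
    · refine ⟨j - 1, ?_, ?_⟩
      · simp only [Finset.mem_filter, Finset.mem_Ico]
        have hjc : c < j := by
          by_contra hcon
          push_neg at hcon
          have := xc_mono l hcon
          omega
        have : j - 1 + 1 = j := by omega
        rw [this, hj3]
        exact ⟨⟨by omega, by omega⟩, hy.2⟩
      · have : j - 1 + 1 = j := by omega
        rw [this, hj3]
    · exfalso
      have hbet : hook l i 1 = betD l i := bet_eq_hook_one l hp hi2
      have := hcore i hi2 1 (le_refl 1) (pos_getD l hp hi2)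
      rw [hbet, hi3] at this
      exact this hy.2

lemma filter_pos_eq_take (L : List ℕ) (hs : L.Pairwise (· ≥ ·)) :
    L.filter (fun x => decide (0 < x)) = L.take (L.countP (fun x => decide (0 < x))) := by
  induction L with
  | nil => simp
  | cons h t ih =>
    have hs' : t.Pairwise (· ≥ ·) := hs.of_cons
    by_cases hh : 0 < h
    · have : (h :: t).countP (fun x => decide (0 < x)) = t.countP (fun x => decide (0 < x)) + 1 := by
        rw [List.countP_cons]
        simp [hh]
      rw [this]
      simp only [List.filter_cons, List.take_succ_cons]
      simp only [hh, decide_true]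
      rw [ih hs']
      simp
    · have hh0 : h = 0 := by omega
      have hall : ∀ x ∈ h :: t, x = 0 := by
        intro x hx
        rcases hx with _ | hx
        · exact hh0
        · have := List.rel_of_pairwise_cons hs (a' := x) (by assumption)
          omega
      have hfil : (h :: t).filter (fun x => decide (0 < x)) = [] := by
        rw [List.filter_eq_nil_iff]
        intro x hx
        have := hall x hx
        simp [this]
      have hcnt : (h :: t).countP (fun x => decide (0 < x)) = 0 := by
        rw [List.countP_eq_zero]
        intro x hx
        have := hall x hx
        simp [this]
      rw [hfil, hcnt, List.take_zero]

lemma prefix_pos_count (L : List ℕ) (hs : L.Pairwise (· ≥ ·)) {i : ℕ} (hi : i < L.length)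
    (hpos : 0 < L.getD i 0) : i < L.countP (fun x => decide (0 < x)) := by
  have hsplit : L = L.take (i+1) ++ L.drop (i+1) := (List.take_append_drop _ _).symm
  have hlen : (L.take (i+1)).length = i + 1 := by
    rw [List.length_take]; omega
  have hallpos : ∀ x ∈ L.take (i+1), (fun x => decide (0 < x)) x = true := by
    intro x hx
    rw [List.mem_iff_getElem] at hx
    obtain ⟨j, hj, hxj⟩ := hx
    have hjlen : j < L.length := by
      rw [List.length_take] at hj; omega
    have hji : j ≤ i := by rw [hlen] at hj; omega
    have hxj2 : L[j]'hjlen = x := by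
      rw [← hxj]; exact List.getElem_take' _ (by omega)
    rw [← hxj2]
    have hmono : L.getD i 0 ≤ L.getD j 0 := by
      rcases eq_or_lt_of_le hji with rfl | hlt
      · exact le_refl _
      · rw [List.getD_eq_getElem _ _ hi, List.getD_eq_getElem _ _ hjlen]
        exact List.pairwise_iff_getElem.mp hs j i hjlen hi hlt
    rw [List.getD_eq_getElem _ _ hjlen] at hmono
    simp only [decide_eq_true_eq]
    omega
  have hcp : (L.take (i+1)).countP (fun x => decide (0 < x)) = i + 1 := by
    rw [List.countP_eq_length.mpr hallpos, hlen]
  calc i < i + 1 := by omega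
    _ = (L.take (i+1)).countP (fun x => decide (0 < x)) := hcp.symm
    _ ≤ L.countP (fun x => decide (0 < x)) := by
        conv_rhs => rw [hsplit]
        rw [List.countP_append]
        omega

lemma getD_take (L : List ℕ) {m i : ℕ} (hi : i < m) (him : i < L.length) :
    (L.take m).getD i 0 = L.getD i 0 := by
  have h1 : i < (L.take m).length := by rw [List.length_take]; omega
  rw [List.getD_eq_getElem _ _ h1, List.getD_eq_getElem _ _ him]
  exact (List.getElem_take' _ (by omega)).symm

lemma Kc_mono (ℓ : ℕ) (l : List ℕ) {s t : ℕ} (h : s ≤ t) : KcD ℓ l s ≤ KcD ℓ l t := by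
  apply Finset.card_le_card
  intro j hj
  simp only [Finset.mem_filter, Finset.mem_range] at *
  exact ⟨by omega, hj.2⟩

lemma Kc_lt (ℓ : ℕ) (l : List ℕ) {s c : ℕ} (hs : s < c) (h1 : 1 ≤ c) (hnd : ¬ ℓ ∣ xcD l c) :
    KcD ℓ l s < KcD ℓ l c := by
  apply Finset.card_lt_card
  rw [Finset.ssubset_iff_of_subset]
  · refine ⟨c - 1, ?_, ?_⟩
    · simp only [Finset.mem_filter, Finset.mem_range]
      constructor
      · omega
      · have : c - 1 + 1 = c := by omega
        rw [this]; exact hnd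
    · simp only [Finset.mem_filter, Finset.mem_range]
      intro hcon
      omega
  · intro j hj
    simp only [Finset.mem_filter, Finset.mem_range] at *
    exact ⟨by omega, hj.2⟩

lemma Kc_split (ℓ : ℕ) (l : List ℕ) {c t : ℕ} (h : c ≤ t) :
    KcD ℓ l t = KcD ℓ l c + ((Finset.Ico c t).filter (fun j => ¬ ℓ ∣ xcD l (j+1))).card := by
  unfold KcD
  rw [Finset.range_eq_Ico, ← Finset.Ico_union_Ico_eq_Ico (Nat.zero_le c) h, Finset.filter_union,
    Finset.card_union_of_disjoint, ← Finset.range_eq_Ico]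
  rw [Finset.disjoint_left]
  intro x h1 h2
  simp only [Finset.mem_filter, Finset.mem_Ico] at h1 h2
  omega

lemma Ico_split_count (ℓ : ℕ) (l : List ℕ) {c t : ℕ} (h : c ≤ t) :
    ((Finset.Ico c t).filter (fun j => ¬ ℓ ∣ xcD l (j+1))).card
      + ((Finset.Ico c t).filter (fun j => ℓ ∣ xcD l (j+1))).card = t - c := by
  have := Finset.card_filter_add_card_filter_not (s := Finset.Ico c t)
    (p := fun j => ¬ ℓ ∣ xcD l (j+1))
  rw [Nat.card_Ico] at this
  have hcong : ((Finset.Ico c t).filter (fun j => ¬¬ ℓ ∣ xcD l (j+1)))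
      = ((Finset.Ico c t).filter (fun j => ℓ ∣ xcD l (j+1))) := by
    apply Finset.filter_congr
    intro j _
    simp
  simp only [hcong] at this
  omega

-- final arithmetic lemma
lemma arith (ℓ u v : ℕ) (hℓ : 2 ≤ ℓ) (hvu : v < u) (hu : ¬ ℓ ∣ u) (hv : ¬ ℓ ∣ v) :
    (u - v < ℓ ↔ (u - v) - (u / ℓ - v / ℓ) < ℓ - 1) := by
  have hl0 : 0 < ℓ := by omega
  have f1 : ℓ * (u / ℓ) + u % ℓ = u := Nat.div_add_mod u ℓ
  have f2 : ℓ * (v / ℓ) + v % ℓ = v := Nat.div_add_mod v ℓ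
  have f3 : u % ℓ < ℓ := Nat.mod_lt _ hl0
  have f4 : v % ℓ < ℓ := Nat.mod_lt _ hl0
  have f5 : u % ℓ ≠ 0 := fun h => hu (Nat.dvd_of_mod_eq_zero h)
  have f6 : v % ℓ ≠ 0 := fun h => hv (Nat.dvd_of_mod_eq_zero h)
  have f7 : v / ℓ ≤ u / ℓ := Nat.div_le_div_right (le_of_lt hvu)
  set q1 := u / ℓ
  set q2 := v / ℓ
  set r1 := u % ℓ
  set r2 := v % ℓ
  set d := q1 - q2 with hd
  have f8 : ℓ * q1 = ℓ * q2 + ℓ * d := by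
    rw [hd, Nat.mul_sub, Nat.add_sub_cancel' (Nat.mul_le_mul_left ℓ f7)]
  have key : u + r2 = v + ℓ * d + r1 := by
    rw [← f1, ← f2]
    linarith [f8]
  rcases Nat.lt_or_ge d 2 with hdlt | hdge
  · -- d = 0 or d = 1
    rcases Nat.lt_or_ge d 1 with hd0 | hd1
    · have hd0' : d = 0 := by omega
      have hE : ℓ * d = 0 := by rw [hd0']; ring
      omega
    · have hd1' : d = 1 := by omega
      have hE : ℓ * d = ℓ := by rw [hd1']; ring
      omega
  · have hE : ℓ * 2 ≤ ℓ * d := Nat.mul_le_mul_left ℓ hdge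
    have hE2 : ℓ * 2 = ℓ + ℓ := by ring
    -- u - v ≥ ℓ*d - (ℓ-2) ≥ ℓ + 2, so LHS false; RHS: u-v-d ≥ ℓ*d - ℓ + 2 - d ≥ ℓ-1
    have hE3 : ℓ * d = (ℓ - 1) * d + d := by
      have hh : ℓ = (ℓ - 1) + 1 := by omega
      calc ℓ * d = ((ℓ - 1) + 1) * d := by rw [← hh]
        _ = (ℓ - 1) * d + d := by ring
    have hE4 : (ℓ - 1) * 2 ≤ (ℓ - 1) * d := Nat.mul_le_mul_left (ℓ - 1) hdge
    omega

lemma f_eq_Kc (ℓ : ℕ) (l : List ℕ) (hp : IsPartition l) (h0 : 0 < l.length) {p : ℕ}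
    (hple : p ≤ l.getD 0 0) :
    ((List.range p).filter (fun c => decide (¬ hook l 0 (c + 1) % ℓ = hook l 0 1 % ℓ))).length
      = KcD ℓ l p := by
  rw [flen]
  unfold KcD
  congr 1
  apply Finset.filter_congr
  intro j hj
  rw [Finset.mem_range] at hj
  have hs := surv ℓ l hp h0 (show 1 ≤ j+1 by omega) (show j+1 ≤ l.getD 0 0 by omega)
  exact not_congr hs

-- div of predecessor
lemma pred_div (ℓ u : ℕ) (hl : 0 < ℓ) (hu : ¬ ℓ ∣ u) : (u - 1) / ℓ = u / ℓ := by
  have f1 : ℓ * (u / ℓ) + u % ℓ = u := Nat.div_add_mod u ℓ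
  have f3 : u % ℓ < ℓ := Nat.mod_lt _ hl
  have f5 : u % ℓ ≠ 0 := fun h => hu (Nat.dvd_of_mod_eq_zero h)
  have h1 : u / ℓ * ℓ ≤ u - 1 := by
    have e : u / ℓ * ℓ = ℓ * (u / ℓ) := Nat.mul_comm _ _
    omega
  have h2 : u - 1 < (u / ℓ + 1) * ℓ := by
    have e : (u / ℓ + 1) * ℓ = ℓ * (u / ℓ) + ℓ := by ring
    omega
  exact Nat.div_eq_of_lt_le h1 h2

/-- A box B = (a,c) of the ℓ-core l not deleted by Φ̃ has hook length < ℓ iff the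
corresponding box of Φ̃(l) (in row a, column = number of non-deleted columns
among 1..c) has hook length < ℓ - 1. -/
theorem stmt17 (ℓ : ℕ) (hℓ : 2 ≤ ℓ) (l : List ℕ)
    (hp : IsPartition l) (hc : IsCore ℓ l)
    (a c : ℕ) (ha : a < l.length) (hc1 : 1 ≤ c) (hc2 : c ≤ l.getD a 0)
    (hnd : ¬ hook l 0 c % ℓ = hook l 0 1 % ℓ) :
    (hook l a c < ℓ ↔
      hook (tilde ℓ l) a
        (((List.range c).filter
          (fun j => decide (¬ hook l 0 (j + 1) % ℓ = hook l 0 1 % ℓ))).length)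
        < ℓ - 1) := by
  have h0n : 0 < l.length := by omega
  have hLa0 : l.getD a 0 ≤ l.getD 0 0 := sorted_getD l hp (Nat.zero_le a) ha
  have hcL0 : c ≤ l.getD 0 0 := le_trans hc2 hLa0
  have hxnd : ¬ ℓ ∣ xcD l c := fun h => hnd ((surv ℓ l hp h0n hc1 hcL0).mpr h)
  have hbetnd : ¬ ℓ ∣ betD l a := by
    rw [← bet_eq_hook_one l hp ha]
    exact hc a ha 1 (le_refl 1) (pos_getD l hp ha)
  -- rewrite the column index
  rw [f_eq_Kc ℓ l hp h0n hcL0]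
  -- the mapped list
  set f : ℕ → ℕ := fun p =>
    ((List.range p).filter (fun c => decide (¬ hook l 0 (c + 1) % ℓ = hook l 0 1 % ℓ))).length
    with hf
  set lm : List ℕ := l.map f with hlm
  have hlmlen : lm.length = l.length := by rw [hlm, List.length_map]
  have hfp : ∀ p, p ≤ l.getD 0 0 → f p = KcD ℓ l p := by
    intro p hple
    rw [hf]
    exact f_eq_Kc ℓ l hp h0n hple
  have hlm_getD : ∀ i, i < l.length → lm.getD i 0 = KcD ℓ l (l.getD i 0) := by
    intro i hi
    have hi' : i < lm.length := by omega
    have e2 : l[i]'hi = l.getD i 0 := (List.getD_eq_getElem _ _ hi).symm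
    calc lm.getD i 0 = lm[i]'hi' := List.getD_eq_getElem _ _ hi'
      _ = f (l[i]'hi) := List.getElem_map _
      _ = f (l.getD i 0) := by rw [e2]
      _ = KcD ℓ l (l.getD i 0) := hfp _ (sorted_getD l hp (Nat.zero_le i) hi)
  have hfmono : ∀ p q : ℕ, p ≥ q → f p ≥ f q := by
    intro p q hpq
    rw [hf]
    simp only
    rw [flenB, flenB]
    apply Finset.card_le_card
    intro j hj
    simp only [Finset.mem_filter, Finset.mem_range] at *
    exact ⟨by omega, hj.2⟩
  have hlmsorted : lm.Pairwise (· ≥ ·) := by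
    rw [hlm]
    exact List.Pairwise.map f (fun x y h => hfmono x y h) hp.1
  -- tilde = take
  have htilde : tilde ℓ l = lm.take (lm.countP (fun x => decide (0 < x))) := by
    unfold tilde
    rw [← hf, ← hlm]
    exact filter_pos_eq_take lm hlmsorted
  set m := lm.countP (fun x => decide (0 < x)) with hm
  have hmlen : m ≤ lm.length := by
    rw [hm, List.countP_eq_length_filter]
    exact List.length_filter_le _ _
  -- Kc c ≥ 1
  have hKc0 : KcD ℓ l 0 = 0 := by unfold KcD; simp
  have hKc1 : 1 ≤ KcD ℓ l c := by
    have := Kc_lt ℓ l (show 0 < c by omega) hc1 hxnd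
    omega
  have hKLa : KcD ℓ l c ≤ KcD ℓ l (l.getD a 0) := Kc_mono ℓ l hc2
  have ham : a < m := by
    apply prefix_pos_count lm hlmsorted (by omega)
    rw [hlm_getD a ha]
    omega
  -- zero rows beyond m
  have hzero : ∀ i, m ≤ i → i < l.length → lm.getD i 0 = 0 := by
    intro i hmi hi
    by_contra hcon
    have := prefix_pos_count lm hlmsorted (i := i) (by omega) (by omega)
    omega
  set T := lm.take m with hT
  have hTlen : T.length = m := by rw [hT, List.length_take]; omega
  have hTgetD : ∀ i, i < m → T.getD i 0 = lm.getD i 0 := by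
    intro i him
    exact getD_take lm him (by omega)
  -- hook of T
  have hTa : T.getD a 0 = KcD ℓ l (l.getD a 0) := by
    rw [hTgetD a ham, hlm_getD a ha]
  set leg := ((Finset.range l.length).filter (fun i => a < i ∧ c ≤ l.getD i 0)).card with hleg
  have hOld : hook l a c = (l.getD a 0 - c) + leg + 1 := by
    unfold hook
    rw [flen]
  have hlegT : ((List.range T.length).filter
      (fun i => decide (a < i ∧ KcD ℓ l c ≤ T.getD i 0))).length = leg := by
    rw [flen, hTlen]
    have step1 : ((Finset.range m).filter (fun i => a < i ∧ KcD ℓ l c ≤ T.getD i 0))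
        = ((Finset.range m).filter (fun i => a < i ∧ c ≤ l.getD i 0)) := by
      apply Finset.filter_congr
      intro i hi
      rw [Finset.mem_range] at hi
      have hin : i < l.length := by omega
      rw [hTgetD i hi, hlm_getD i hin]
      constructor
      · rintro ⟨h1, h2⟩
        refine ⟨h1, ?_⟩
        by_contra hcon
        push_neg at hcon
        have := Kc_lt ℓ l (show l.getD i 0 < c by omega) hc1 hxnd
        omega
      · rintro ⟨h1, h2⟩
        exact ⟨h1, Kc_mono ℓ l h2⟩
    rw [step1]
    -- extend range m to range l.length
    have hsplit : Finset.range l.length = Finset.range m ∪ Finset.Ico m l.length := by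
      rw [Finset.range_eq_Ico, Finset.range_eq_Ico, Finset.Ico_union_Ico_eq_Ico (Nat.zero_le m) (by omega)]
    have hdisj : Disjoint ((Finset.range m).filter (fun i => a < i ∧ c ≤ l.getD i 0))
        ((Finset.Ico m l.length).filter (fun i => a < i ∧ c ≤ l.getD i 0)) := by
      rw [Finset.disjoint_left]
      intro x h1 h2
      simp only [Finset.mem_filter, Finset.mem_range, Finset.mem_Ico] at h1 h2
      omega
    have hempty : ((Finset.Ico m l.length).filter (fun i => a < i ∧ c ≤ l.getD i 0)) = ∅ := by
      rw [Finset.filter_eq_empty_iff]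
      intro i hi
      rw [Finset.mem_Ico] at hi
      rintro ⟨h1, h2⟩
      have hz := hzero i hi.1 hi.2
      rw [hlm_getD i hi.2] at hz
      have := Kc_mono ℓ l h2
      omega
    have htot : leg = ((Finset.range m).filter (fun i => a < i ∧ c ≤ l.getD i 0)).card
        + ((Finset.Ico m l.length).filter (fun i => a < i ∧ c ≤ l.getD i 0)).card := by
      rw [hleg, hsplit, Finset.filter_union, Finset.card_union_of_disjoint hdisj]
    have hz2 : ((Finset.Ico m l.length).filter (fun i => a < i ∧ c ≤ l.getD i 0)).card = 0 := by
      rw [hempty]; simp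
    omega
  have hNew : hook T a (KcD ℓ l c) = (KcD ℓ l (l.getD a 0) - KcD ℓ l c) + leg + 1 := by
    unfold hook
    rw [hlegT, hTa]
  -- arm decomposition
  set keep := ((Finset.Ico c (l.getD a 0)).filter (fun j => ¬ ℓ ∣ xcD l (j+1))).card with hkeep
  set D0 := ((Finset.Ico c (l.getD a 0)).filter (fun j => ℓ ∣ xcD l (j+1))).card with hD0
  have E2 : KcD ℓ l (l.getD a 0) = KcD ℓ l c + keep := Kc_split ℓ l hc2
  have E3 : keep + D0 = l.getD a 0 - c := Ico_split_count ℓ l hc2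
  have E4 : D0 = (betD l a - 1) / ℓ - xcD l c / ℓ := D0eq ℓ l hp hc ha hc1 hc2
  have E5 : (betD l a - 1) / ℓ = betD l a / ℓ := pred_div ℓ _ (by omega) hbetnd
  have E1 : hook l a c + xcD l c = betD l a := hook_xc l hp ha hc1 hc2
  have hhook1 : 1 ≤ hook l a c := one_le_hook l a c
  have hvu : xcD l c < betD l a := by omega
  have harith := arith ℓ (betD l a) (xcD l c) hℓ hvu hbetnd hxnd
  obtain ⟨Dq, hDq⟩ : ∃ x, betD l a / ℓ - xcD l c / ℓ = x := ⟨_, rfl⟩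
  rw [hDq] at harith
  rw [E5, hDq] at E4
  rw [htilde, hNew, hOld]
  omega
end

section
/- The Lapointe–Morse map ρ_ℓ and the column-deletion bijection Φ̃_ℓ^k commute with removing the first column: ρ_{ℓ−1}(Φ̃_ℓ^k(λ)) is obtained from ρ_ℓ(λ) by deleting its first column, for every ℓ-core λ of length k. -/
/-- The Lapointe–Morse map ρ_ℓ: left-justify the skew boxes (hook length < ℓ)
of each row. -/
def rho (ℓ : ℕ) (l : List ℕ) : List ℕ :=
  (List.range l.length).map (fun a =>
    ((List.range (l.getD a 0)).filter (fun c => decide (hook l a (c + 1) < ℓ))).length)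

namespace Stmt18

/-- beta numbers -/
def bet (l : List ℕ) (a : ℕ) : ℕ := l.getD a 0 + (l.length - 1 - a)

def Bset (l : List ℕ) : Finset ℕ := (Finset.range l.length).image (bet l)

def mm (l : List ℕ) (c : ℕ) : ℕ :=
  ((Finset.range l.length).filter (fun i => c ≤ l.getD i 0)).card

def dd (l : List ℕ) (c : ℕ) : ℕ := c + (l.length - mm l (c + 1))

def nuc (ℓ x : ℕ) : ℕ := ((Finset.range x).filter (fun d => ¬ ℓ ∣ d)).card

lemma listcount (n : ℕ) (p : ℕ → Bool) :
    ((List.range n).filter p).length = ((Finset.range n).filter (fun i => p i = true)).card := by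
  induction n with
  | zero => simp
  | succ n ih =>
    rw [List.range_succ, List.filter_append, Finset.range_add_one, Finset.filter_insert]
    by_cases h : p n = true
    · rw [if_pos h, Finset.card_insert_of_notMem (by simp)]
      simp [h, ih]
    · rw [if_neg h]
      simp [h, ih]

variable {l : List ℕ}

lemma getD_mono (hp : IsPartition l) {a b : ℕ} (hab : a ≤ b) : l.getD b 0 ≤ l.getD a 0 := by
  by_cases hb : b < l.length
  · have ha : a < l.length := lt_of_le_of_lt hab hb
    rcases eq_or_lt_of_le hab with rfl | h
    · exact le_refl _
    · rw [List.getD_eq_getElem l 0 hb, List.getD_eq_getElem l 0 ha]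
      exact List.pairwise_iff_getElem.mp hp.1 a b ha hb h
  · rw [List.getD_eq_default l 0 (by omega)]
    exact Nat.zero_le _

lemma getD_pos (hp : IsPartition l) {a : ℕ} (ha : a < l.length) : 0 < l.getD a 0 := by
  rw [List.getD_eq_getElem l 0 ha]
  exact hp.2 _ (List.getElem_mem _)

lemma bet_lt (hp : IsPartition l) {a b : ℕ} (hab : a < b) (hb : b < l.length) :
    bet l b < bet l a := by
  have h1 := getD_mono hp (le_of_lt hab)
  have h2 := getD_pos hp hb
  unfold bet
  omega

lemma bet_anti (hp : IsPartition l) {a b : ℕ} (hab : a ≤ b) : bet l b ≤ bet l a := by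
  by_cases hb : b < l.length
  · rcases eq_or_lt_of_le hab with rfl | h
    · exact le_refl _
    · exact le_of_lt (bet_lt hp h hb)
  · have : l.getD b 0 = 0 := List.getD_eq_default l 0 (by omega)
    unfold bet
    have := getD_mono hp hab
    omega

lemma bet_ge (hp : IsPartition l) {a : ℕ} (ha : a < l.length) : l.length - a ≤ bet l a := by
  have := getD_pos hp ha
  unfold bet; omega

lemma mem_Bset {x : ℕ} : x ∈ Bset l ↔ ∃ a, a < l.length ∧ bet l a = x := by
  simp [Bset]

lemma bet_mem_Bset {a : ℕ} (ha : a < l.length) : bet l a ∈ Bset l :=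
  mem_Bset.mpr ⟨a, ha, rfl⟩

lemma B_pos (hp : IsPartition l) {b : ℕ} (hb : b ∈ Bset l) : 0 < b := by
  obtain ⟨a, ha, rfl⟩ := mem_Bset.mp hb
  have := bet_ge hp ha
  omega

lemma Bcap (hp : IsPartition l) {a : ℕ} (ha : a < l.length) :
    ((Finset.range (bet l a)).filter (· ∈ Bset l)).card = l.length - 1 - a := by
  have h1 : (Finset.range (bet l a)).filter (· ∈ Bset l)
      = (Finset.Ioo a l.length).image (bet l) := by
    ext x
    simp only [Finset.mem_filter, Finset.mem_range, Finset.mem_image, Finset.mem_Ioo, mem_Bset]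
    constructor
    · rintro ⟨hx, i, hi, rfl⟩
      refine ⟨i, ⟨?_, hi⟩, rfl⟩
      by_contra hle
      exact absurd (bet_anti hp (by omega : i ≤ a)) (by omega)
    · rintro ⟨i, ⟨hai, hik⟩, rfl⟩
      exact ⟨bet_lt hp hai hik, i, hik, rfl⟩
  have hinj : Set.InjOn (bet l) (Finset.Ioo a l.length) := by
    intro x hx y hy hxy
    simp only [Finset.coe_Ioo, Set.mem_Ioo] at hx hy
    rcases lt_trichotomy x y with h | h | h
    · exact absurd hxy (ne_of_gt (bet_lt hp h hy.2))
    · exact h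
    · exact absurd hxy (ne_of_lt (bet_lt hp h hx.2))
  rw [h1, Finset.card_image_of_injOn hinj, Nat.card_Ioo]
  omega

lemma mm_le (c : ℕ) : mm l c ≤ l.length :=
  le_trans (Finset.card_filter_le _ _) (le_of_eq (Finset.card_range _))

lemma mm_anti {c c' : ℕ} (h : c ≤ c') : mm l c' ≤ mm l c := by
  apply Finset.card_le_card
  intro i hi
  simp only [Finset.mem_filter, Finset.mem_range] at hi ⊢
  omega

lemma mm_ge (hp : IsPartition l) {a c : ℕ} (ha : a < l.length) (hc : c ≤ l.getD a 0) :
    a + 1 ≤ mm l c := by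
  have hsub : Finset.range (a + 1) ⊆ (Finset.range l.length).filter (fun i => c ≤ l.getD i 0) := by
    intro i hi
    simp only [Finset.mem_range] at hi
    simp only [Finset.mem_filter, Finset.mem_range]
    exact ⟨by omega, le_trans hc (getD_mono hp (by omega))⟩
  have := Finset.card_le_card hsub
  rwa [Finset.card_range] at this

lemma mm_lt_row (hp : IsPartition l) {a c : ℕ} (ha : a < l.length) (hc : l.getD a 0 < c) :
    mm l c ≤ a := by
  have hsub : (Finset.range l.length).filter (fun i => c ≤ l.getD i 0) ⊆ Finset.range a := by
    intro i hi
    simp only [Finset.mem_filter, Finset.mem_range] at hi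
    simp only [Finset.mem_range]
    by_contra hia
    have := getD_mono hp (by omega : a ≤ i)
    omega
  have := Finset.card_le_card hsub
  rw [Finset.card_range] at this
  exact this

lemma hook_dd (hp : IsPartition l) {a c : ℕ} (ha : a < l.length) (hc : c < l.getD a 0) :
    hook l a (c + 1) + dd l c = bet l a := by
  have hmm : mm l (c + 1) = (a + 1) +
      ((Finset.range l.length).filter (fun i => a < i ∧ c + 1 ≤ l.getD i 0)).card := by
    have hsplit : (Finset.range l.length).filter (fun i => c + 1 ≤ l.getD i 0)
        = ((Finset.range l.length).filter (fun i => i ≤ a)) ∪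
          ((Finset.range l.length).filter (fun i => a < i ∧ c + 1 ≤ l.getD i 0)) := by
      ext i
      simp only [Finset.mem_union, Finset.mem_filter, Finset.mem_range]
      constructor
      · rintro ⟨hik, hci⟩
        by_cases hia : i ≤ a
        · exact Or.inl ⟨hik, hia⟩
        · exact Or.inr ⟨hik, by omega, hci⟩
      · rintro (⟨hik, hia⟩ | ⟨hik, _, hci⟩)
        · exact ⟨hik, le_trans (by omega) (getD_mono hp hia)⟩
        · exact ⟨hik, hci⟩
    have hdisj : Disjoint ((Finset.range l.length).filter (fun i => i ≤ a))
        ((Finset.range l.length).filter (fun i => a < i ∧ c + 1 ≤ l.getD i 0)) := by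
      rw [Finset.disjoint_left]
      intro i hi1 hi2
      simp only [Finset.mem_filter] at hi1 hi2
      omega
    have hcard1 : ((Finset.range l.length).filter (fun i => i ≤ a)).card = a + 1 := by
      have : (Finset.range l.length).filter (fun i => i ≤ a) = Finset.range (a + 1) := by
        ext i
        simp only [Finset.mem_filter, Finset.mem_range]
        omega
      rw [this, Finset.card_range]
    rw [mm, hsplit, Finset.card_union_of_disjoint hdisj, hcard1]
  have hlist : ((List.range l.length).filter
      (fun i => decide (a < i ∧ c + 1 ≤ l.getD i 0))).length
      = ((Finset.range l.length).filter (fun i => a < i ∧ c + 1 ≤ l.getD i 0)).card := by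
    rw [listcount]
    exact congrArg Finset.card (Finset.filter_congr (fun x _ => by simp))
  have hmle := mm_le (l := l) (c + 1)
  unfold hook dd bet
  rw [hlist]
  omega

lemma hook_pos (a c : ℕ) : 1 ≤ hook l a c := by
  unfold hook; omega

lemma dd_mono {c c' : ℕ} (h : c < c') : dd l c < dd l c' := by
  have h1 := mm_anti (l := l) (by omega : c + 1 ≤ c' + 1)
  have h2 := mm_le (l := l) (c + 1)
  unfold dd
  omega

lemma dd_lt_bet (hp : IsPartition l) {a c : ℕ} (ha : a < l.length) (hc : c < l.getD a 0) :
    dd l c < bet l a := by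
  have h := hook_dd hp ha hc
  have := hook_pos (l := l) a (c + 1)
  omega

lemma dd_not_mem (hp : IsPartition l) (c : ℕ) : dd l c ∉ Bset l := by
  intro hmem
  obtain ⟨i, hi, heq⟩ := mem_Bset.mp hmem
  by_cases hci : c + 1 ≤ l.getD i 0
  · have h1 := mm_ge hp hi hci
    have h2 := mm_le (l := l) (c + 1)
    unfold dd bet at heq
    omega
  · have h1 := mm_lt_row hp (c := c + 1) hi (by omega)
    have h2 := mm_le (l := l) (c + 1)
    unfold dd bet at heq
    omega

lemma dd_injOn : Set.InjOn (dd l) (Finset.range n) := by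
  intro x _ y _ hxy
  rcases lt_trichotomy x y with h | h | h
  · exact absurd hxy (ne_of_lt (dd_mono h))
  · exact h
  · exact absurd hxy (ne_of_gt (dd_mono h))

lemma dd_image (hp : IsPartition l) {a : ℕ} (ha : a < l.length) :
    (Finset.range (l.getD a 0)).image (dd l) = Finset.range (bet l a) \ Bset l := by
  have hsub : (Finset.range (l.getD a 0)).image (dd l) ⊆ Finset.range (bet l a) \ Bset l := by
    intro x hx
    obtain ⟨c, hc, rfl⟩ := Finset.mem_image.mp hx
    simp only [Finset.mem_range] at hc
    simp only [Finset.mem_sdiff, Finset.mem_range]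
    exact ⟨dd_lt_bet hp ha hc, dd_not_mem hp c⟩
  have hcard1 : ((Finset.range (l.getD a 0)).image (dd l)).card = l.getD a 0 := by
    rw [Finset.card_image_of_injOn dd_injOn, Finset.card_range]
  have hcard2 : (Finset.range (bet l a) \ Bset l).card = l.getD a 0 := by
    rw [Finset.sdiff_eq_filter]
    have hpart := Finset.card_filter_add_card_filter_not
      (s := Finset.range (bet l a)) (p := fun x => x ∈ Bset l)
    rw [Bcap hp ha, Finset.card_range] at hpart
    have hb := bet_ge hp ha
    have hb2 : bet l a = l.getD a 0 + (l.length - 1 - a) := rfl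
    omega
  exact Finset.eq_of_subset_of_card_le hsub (by omega)

lemma cnt_transfer (hp : IsPartition l) {a : ℕ} (ha : a < l.length)
    (p : ℕ → Prop) [DecidablePred p] :
    ((Finset.range (l.getD a 0)).filter (fun c => p (dd l c))).card
      = ((Finset.range (bet l a)).filter (fun d => d ∉ Bset l ∧ p d)).card := by
  have h1 : (Finset.range (bet l a)).filter (fun d => d ∉ Bset l ∧ p d)
      = ((Finset.range (bet l a) \ Bset l)).filter p := by
    ext x; simp [Finset.mem_sdiff]; tauto
  rw [h1, ← dd_image hp ha, Finset.filter_image,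
    Finset.card_image_of_injOn
      (Set.InjOn.mono (Finset.coe_subset.mpr (Finset.filter_subset _ _)) dd_injOn)]

def Rcnt (L : ℕ) (l : List ℕ) (a : ℕ) : ℕ :=
  ((Finset.range (bet l a)).filter (fun d => d ∉ Bset l ∧ bet l a < d + L)).card

def Kcnt (ℓ : ℕ) (l : List ℕ) (a : ℕ) : ℕ :=
  ((Finset.range (bet l a)).filter (fun d => d ∉ Bset l ∧ ¬ ℓ ∣ d)).card

lemma rho_entry (hp : IsPartition l) (L : ℕ) {a : ℕ} (ha : a < l.length) :
    ((List.range (l.getD a 0)).filter (fun c => decide (hook l a (c + 1) < L))).length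
      = Rcnt L l a := by
  rw [listcount]
  have h1 : (Finset.range (l.getD a 0)).filter (fun i => decide (hook l a (i + 1) < L) = true)
      = (Finset.range (l.getD a 0)).filter (fun c => bet l a < dd l c + L) := by
    apply Finset.filter_congr
    intro c hc
    simp only [Finset.mem_range] at hc
    have := hook_dd hp ha hc
    simp only [decide_eq_true_eq]
    omega
  rw [h1, cnt_transfer hp ha (fun d => bet l a < d + L)]
  rfl

lemma rho_eq (hp : IsPartition l) (L : ℕ) :
    rho L l = (List.range l.length).map (fun a => Rcnt L l a) := by
  unfold rho
  apply List.map_congr_left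
  intro a hamem
  exact rho_entry hp L (List.mem_range.mp hamem)

lemma mm_one (hp : IsPartition l) : mm l 1 = l.length := by
  unfold mm
  rw [Finset.filter_true_of_mem, Finset.card_range]
  intro i hi
  exact getD_pos hp (Finset.mem_range.mp hi)

lemma dd_zero (hp : IsPartition l) : dd l 0 = 0 := by
  unfold dd
  rw [mm_one hp]
  omega

lemma hook_one (hp : IsPartition l) (h0 : 0 < l.length) : hook l 0 1 = bet l 0 := by
  have h := hook_dd hp h0 (getD_pos hp h0)
  rw [dd_zero hp] at h
  simpa using h

lemma tilde_entry (hp : IsPartition l) {ℓ a : ℕ} (ha : a < l.length) :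
    ((List.range (l.getD a 0)).filter
      (fun c => decide (¬ hook l 0 (c + 1) % ℓ = hook l 0 1 % ℓ))).length = Kcnt ℓ l a := by
  rw [listcount]
  have h0 : (0:ℕ) < l.length := by omega
  have h1 : (Finset.range (l.getD a 0)).filter
        (fun i => decide (¬ hook l 0 (i + 1) % ℓ = hook l 0 1 % ℓ) = true)
      = (Finset.range (l.getD a 0)).filter (fun c => ¬ ℓ ∣ dd l c) := by
    apply Finset.filter_congr
    intro c hc
    simp only [Finset.mem_range] at hc
    have hc0 : c < l.getD 0 0 := lt_of_lt_of_le hc (getD_mono hp (Nat.zero_le a))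
    have heq := hook_dd hp h0 hc0
    simp only [decide_eq_true_eq]
    rw [hook_one hp h0]
    have hle : hook l 0 (c + 1) ≤ bet l 0 := by omega
    have hiff := Nat.modEq_iff_dvd' (n := ℓ) hle
    have hsub : bet l 0 - hook l 0 (c + 1) = dd l c := by omega
    rw [hsub] at hiff
    unfold Nat.ModEq at hiff
    constructor
    · intro hne hdvd
      exact hne (hiff.mpr hdvd)
    · intro hnd heqq
      exact hnd (hiff.mp heqq)
  rw [h1, cnt_transfer hp ha (fun d => ¬ ℓ ∣ d)]
  rfl

lemma tilde_eq (hp : IsPartition l) (ℓ : ℕ) :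
    tilde ℓ l = ((List.range l.length).map (fun a => Kcnt ℓ l a)).filter
      (fun x => decide (0 < x)) := by
  unfold tilde
  congr 1
  apply List.ext_getElem (by simp)
  intro a h1 h2
  have ha' : a < l.length := by simpa using h1
  simp only [List.getElem_map, List.getElem_range]
  have hgd : l.getD a 0 = l[a] := List.getD_eq_getElem l 0 ha'
  rw [← tilde_entry hp ha', hgd]

lemma Kcnt_anti {ℓ : ℕ} (hp : IsPartition l) {a b : ℕ} (hab : a ≤ b) :
    Kcnt ℓ l b ≤ Kcnt ℓ l a := by
  unfold Kcnt
  apply Finset.card_le_card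
  intro x hx
  simp only [Finset.mem_filter, Finset.mem_range] at hx ⊢
  have := bet_anti hp hab
  exact ⟨by omega, hx.2⟩

lemma ML_sorted {ℓ : ℕ} (hp : IsPartition l) (n : ℕ) :
    ((List.range n).map (fun a => Kcnt ℓ l a)).Pairwise (· ≥ ·) := by
  rw [List.pairwise_map]
  apply List.Pairwise.imp ?_ (List.pairwise_lt_range (n := n))
  intro a b hab
  exact Kcnt_anti hp (le_of_lt hab)

lemma filter_pos_sorted : ∀ (xs : List ℕ), xs.Pairwise (· ≥ ·) →
    xs.filter (fun x => decide (0 < x))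
      = xs.take ((xs.filter (fun x => decide (0 < x))).length)
    ∧ ∀ i, (xs.filter (fun x => decide (0 < x))).length ≤ i → xs.getD i 0 = 0 := by
  intro xs
  induction xs with
  | nil => intro _; simp
  | cons x xs ih =>
    intro hs
    rw [List.pairwise_cons] at hs
    obtain ⟨hall, hs⟩ := hs
    by_cases hx : 0 < x
    · obtain ⟨ih1, ih2⟩ := ih hs
      have hf : (x :: xs).filter (fun x => decide (0 < x))
          = x :: xs.filter (fun x => decide (0 < x)) := by
        rw [List.filter_cons, if_pos (by simpa using hx)]
      constructor
      · rw [hf, List.length_cons, List.take_succ_cons]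
        exact congrArg (x :: ·) ih1
      · intro i hi
        rw [hf, List.length_cons] at hi
        match i, hi with
        | (j+1), hi =>
          simp only [List.getD_cons_succ]
          exact ih2 j (by omega)
    · have hx0 : x = 0 := by omega
      have hf : (x :: xs).filter (fun x => decide (0 < x)) = [] := by
        rw [List.filter_eq_nil_iff]
        intro y hy
        rcases List.mem_cons.mp hy with rfl | hy'
        · simpa using hx
        · have := hall y hy'
          simp only [decide_eq_true_eq]
          omega
      rw [hf]
      refine ⟨by simp, ?_⟩
      intro i _
      match i with
      | 0 => simpa using hx0
      | (j+1) =>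
        simp only [List.getD_cons_succ]
        by_cases hj : j < xs.length
        · rw [List.getD_eq_getElem xs 0 hj]
          have := hall _ (List.getElem_mem hj)
          omega
        · exact List.getD_eq_default xs 0 (by omega)

lemma tilde_len_le (hp : IsPartition l) (ℓ : ℕ) : (tilde ℓ l).length ≤ l.length := by
  rw [tilde_eq hp ℓ]
  calc (((List.range l.length).map (fun a => Kcnt ℓ l a)).filter _).length
      ≤ ((List.range l.length).map (fun a => Kcnt ℓ l a)).length :=
        List.length_filter_le _ _
    _ = l.length := by simp

lemma tilde_map_range (hp : IsPartition l) (ℓ : ℕ) :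
    tilde ℓ l = (List.range (tilde ℓ l).length).map (fun a => Kcnt ℓ l a) := by
  obtain ⟨h1, _⟩ := filter_pos_sorted _ (ML_sorted (ℓ := ℓ) hp l.length)
  have hlen := tilde_len_le hp ℓ
  conv_lhs => rw [tilde_eq hp ℓ, h1]
  rw [← tilde_eq hp ℓ, ← List.map_take, List.take_range,
    Nat.min_eq_left hlen]

lemma tilde_getD (hp : IsPartition l) {ℓ a : ℕ} (ha : a < (tilde ℓ l).length) :
    (tilde ℓ l).getD a 0 = Kcnt ℓ l a := by
  rw [tilde_map_range hp ℓ, List.getD_eq_getElem _ 0 (by simpa using ha)]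
  simp

lemma Kcnt_pos (hp : IsPartition l) {ℓ a : ℕ} (ha : a < (tilde ℓ l).length) :
    0 < Kcnt ℓ l a := by
  have hmem : Kcnt ℓ l a ∈ tilde ℓ l := by
    rw [tilde_map_range hp ℓ]
    exact List.mem_map.mpr ⟨a, by simpa using ha, rfl⟩
  rw [tilde_eq hp ℓ] at hmem
  have := (List.mem_filter.mp hmem).2
  simpa using this

lemma Kcnt_zero (hp : IsPartition l) {ℓ a : ℕ} (ha : (tilde ℓ l).length ≤ a)
    (ha2 : a < l.length) : Kcnt ℓ l a = 0 := by
  obtain ⟨_, h2⟩ := filter_pos_sorted _ (ML_sorted (ℓ := ℓ) hp l.length)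
  rw [← tilde_eq hp ℓ] at h2
  have := h2 a ha
  rw [List.getD_eq_getElem _ 0 (by simpa using ha2)] at this
  simpa using this

lemma tilde_partition (hp : IsPartition l) (ℓ : ℕ) : IsPartition (tilde ℓ l) := by
  constructor
  · rw [tilde_map_range hp ℓ]
    exact ML_sorted hp _
  · intro x hx
    rw [tilde_map_range hp ℓ] at hx
    obtain ⟨a, ha, rfl⟩ := List.mem_map.mp hx
    exact Kcnt_pos hp (by simpa using ha)

lemma coreB {ℓ : ℕ} (hp : IsPartition l) (hc : IsCore ℓ l) {b d : ℕ}
    (hb : b ∈ Bset l) (hd : d ∉ Bset l) (hdb : d < b) : ¬ ℓ ∣ (b - d) := by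
  obtain ⟨a, ha, rfl⟩ := mem_Bset.mp hb
  have hmem : d ∈ Finset.range (bet l a) \ Bset l := by
    simp only [Finset.mem_sdiff, Finset.mem_range]
    exact ⟨hdb, hd⟩
  rw [← dd_image hp ha] at hmem
  obtain ⟨c, hcm, rfl⟩ := Finset.mem_image.mp hmem
  simp only [Finset.mem_range] at hcm
  have he := hook_dd hp ha hcm
  have hcore := hc a ha (c + 1) (by omega) (by omega)
  have hsub : bet l a - dd l c = hook l a (c + 1) := by omega
  rw [hsub]
  exact hcore

lemma B_flush {ℓ : ℕ} (hp : IsPartition l) (hc : IsCore ℓ l) (hℓ : 2 ≤ ℓ) {b : ℕ}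
    (hb : b ∈ Bset l) (hlb : ℓ ≤ b) : b - ℓ ∈ Bset l := by
  by_contra hne
  have := coreB hp hc hb hne (by omega)
  have heq : b - (b - ℓ) = ℓ := by omega
  rw [heq] at this
  exact this dvd_rfl

lemma B_ndvd {ℓ : ℕ} (hp : IsPartition l) (hc : IsCore ℓ l) (hℓ : 2 ≤ ℓ) :
    ∀ b, b ∈ Bset l → ¬ ℓ ∣ b := by
  intro b
  induction b using Nat.strong_induction_on with
  | _ b ih =>
    intro hb hdvd
    have h0 : 0 < b := B_pos hp hb
    have hlb : ℓ ≤ b := Nat.le_of_dvd h0 hdvd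
    exact ih (b - ℓ) (by omega) (B_flush hp hc hℓ hb hlb) (Nat.dvd_sub hdvd dvd_rfl)

lemma nuc_mono {ℓ x y : ℕ} (h : x ≤ y) : nuc ℓ x ≤ nuc ℓ y := by
  apply Finset.card_le_card
  intro d hd
  simp only [Finset.mem_filter, Finset.mem_range] at hd ⊢
  exact ⟨by omega, hd.2⟩

lemma nuc_succ (ℓ x : ℕ) : nuc ℓ (x + 1) = nuc ℓ x + (if ℓ ∣ x then 0 else 1) := by
  unfold nuc
  rw [Finset.range_add_one, Finset.filter_insert]
  by_cases h : ℓ ∣ x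
  · rw [if_neg (by simpa using h), if_pos h]
    omega
  · rw [if_pos h, if_neg h, Finset.card_insert_of_notMem (by simp)]

lemma nuc_lt {ℓ x y : ℕ} (h : x < y) (hx : ¬ ℓ ∣ x) : nuc ℓ x < nuc ℓ y := by
  have h1 := nuc_succ ℓ x
  rw [if_neg hx] at h1
  have h2 := nuc_mono (ℓ := ℓ) (show x + 1 ≤ y by omega)
  omega

lemma nuc_split {ℓ x y : ℕ} (h : x ≤ y) :
    nuc ℓ y = nuc ℓ x + ((Finset.Ico x y).filter (fun d => ¬ ℓ ∣ d)).card := by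
  unfold nuc
  rw [Finset.range_eq_Ico, Finset.range_eq_Ico,
    ← Finset.Ico_union_Ico_eq_Ico (Nat.zero_le x) h, Finset.filter_union,
    Finset.card_union_of_disjoint]
  exact Finset.disjoint_filter_filter (p := fun d => ¬ ℓ ∣ d) (q := fun d => ¬ ℓ ∣ d) (Finset.Ico_disjoint_Ico_consecutive 0 x y)

lemma Ico_filter_split (ℓ x y : ℕ) (h : x ≤ y) :
    ((Finset.Ico x y).filter (fun d => ¬ ℓ ∣ d)).card
      + ((Finset.Ico x y).filter (fun d => ℓ ∣ d)).card = y - x := by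
  have := Finset.card_filter_add_card_filter_not
    (s := Finset.Ico x y) (p := fun d => ℓ ∣ d)
  rw [Nat.card_Ico] at this
  omega

lemma mult_card_le_one {ℓ x y : ℕ} (hℓ : 0 < ℓ) (h : y ≤ x + ℓ) :
    ((Finset.Ico x y).filter (fun d => ℓ ∣ d)).card ≤ 1 := by
  apply Finset.card_le_one.mpr
  intro a ha b hb
  simp only [Finset.mem_filter, Finset.mem_Ico] at ha hb
  rcases le_total a b with hab | hab
  · have hd : ℓ ∣ b - a := Nat.dvd_sub hb.2 ha.2
    rcases Nat.eq_zero_or_pos (b - a) with h0 | hpos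
    · omega
    · have := Nat.le_of_dvd hpos hd
      omega
  · have hd : ℓ ∣ a - b := Nat.dvd_sub ha.2 hb.2
    rcases Nat.eq_zero_or_pos (a - b) with h0 | hpos
    · omega
    · have := Nat.le_of_dvd hpos hd
      omega

lemma mult_exists {ℓ : ℕ} (hℓ : 0 < ℓ) (x : ℕ) : ∃ m, ℓ ∣ m ∧ x ≤ m ∧ m < x + ℓ := by
  refine ⟨ℓ * ((x + ℓ - 1) / ℓ), Dvd.intro _ rfl, ?_, ?_⟩
  · have h1 := Nat.div_add_mod (x + ℓ - 1) ℓ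
    have h2 := Nat.mod_lt (x + ℓ - 1) hℓ
    omega
  · have h1 := Nat.div_add_mod (x + ℓ - 1) ℓ
    omega

lemma window_nuc_lt {ℓ d β : ℕ} (hℓ : 2 ≤ ℓ) (hd : ¬ ℓ ∣ d) (hb : ¬ ℓ ∣ β)
    (h1 : d < β) (h2 : β < d + ℓ) : nuc ℓ β < nuc ℓ d + (ℓ - 1) := by
  rw [nuc_split (le_of_lt h1)]
  have hsum := Ico_filter_split ℓ d β (le_of_lt h1)
  by_cases hcase : β - d ≤ ℓ - 2
  · omega
  · have hβd : β - d = ℓ - 1 := by omega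
    obtain ⟨m, hm, hxm, hmx⟩ := mult_exists (ℓ := ℓ) (by omega) d
    have hmβ : m < β := by
      rcases Nat.lt_or_ge m β with h | h
      · exact h
      · have : m = β ∨ m > β := by omega
        rcases this with rfl | hgt
        · exact absurd hm hb
        · omega
    have hmmem : m ∈ (Finset.Ico d β).filter (fun d => ℓ ∣ d) := by
      simp only [Finset.mem_filter, Finset.mem_Ico]
      exact ⟨⟨hxm, hmβ⟩, hm⟩
    have hpos : 1 ≤ ((Finset.Ico d β).filter (fun d => ℓ ∣ d)).card :=
      Finset.card_pos.mpr ⟨m, hmmem⟩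
    omega

lemma outside_nuc_ge {ℓ d β : ℕ} (hℓ : 2 ≤ ℓ) (h : d + ℓ ≤ β) :
    nuc ℓ d + (ℓ - 1) ≤ nuc ℓ β := by
  have h1 := nuc_split (ℓ := ℓ) (show d ≤ d + ℓ by omega)
  have h2 := Ico_filter_split ℓ d (d + ℓ) (by omega)
  have h3 := mult_card_le_one (ℓ := ℓ) (x := d) (y := d + ℓ) (by omega) (le_refl _)
  have h4 := nuc_mono (ℓ := ℓ) h
  omega

lemma Kcnt_nuc {ℓ : ℕ} (hp : IsPartition l) (hc : IsCore ℓ l) (hℓ : 2 ≤ ℓ) {a : ℕ}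
    (ha : a < l.length) : Kcnt ℓ l a + (l.length - 1 - a) = nuc ℓ (bet l a) := by
  have hsplit : (Finset.range (bet l a)).filter (fun d => ¬ ℓ ∣ d)
      = ((Finset.range (bet l a)).filter (fun d => d ∉ Bset l ∧ ¬ ℓ ∣ d)) ∪
        ((Finset.range (bet l a)).filter (· ∈ Bset l)) := by
    ext x
    simp only [Finset.mem_union, Finset.mem_filter, Finset.mem_range]
    constructor
    · rintro ⟨hx, hnd⟩
      by_cases hxB : x ∈ Bset l
      · exact Or.inr ⟨hx, hxB⟩
      · exact Or.inl ⟨hx, hxB, hnd⟩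
    · rintro (⟨hx, _, hnd⟩ | ⟨hx, hxB⟩)
      · exact ⟨hx, hnd⟩
      · exact ⟨hx, B_ndvd hp hc hℓ x hxB⟩
  have hdisj : Disjoint ((Finset.range (bet l a)).filter (fun d => d ∉ Bset l ∧ ¬ ℓ ∣ d))
      ((Finset.range (bet l a)).filter (· ∈ Bset l)) := by
    rw [Finset.disjoint_left]
    intro x hx1 hx2
    simp only [Finset.mem_filter] at hx1 hx2
    exact hx1.2.1 hx2.2
  rw [nuc, hsplit, Finset.card_union_of_disjoint hdisj, Bcap hp ha]
  rfl

lemma nuc_ge_kept {ℓ : ℕ} (hp : IsPartition l) (hc : IsCore ℓ l) (hℓ : 2 ≤ ℓ) {x : ℕ}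
    (hxB : x ∉ Bset l) (hxd : ¬ ℓ ∣ x) :
    l.length - (tilde ℓ l).length ≤ nuc ℓ x := by
  by_cases hkk : l.length ≤ (tilde ℓ l).length
  · omega
  · have hk' : (tilde ℓ l).length < l.length := by omega
    have hK0 : Kcnt ℓ l (tilde ℓ l).length = 0 := Kcnt_zero hp (le_refl _) hk'
    have h1 : bet l (tilde ℓ l).length < x := by
      rcases Nat.lt_or_ge (bet l (tilde ℓ l).length) x with h | h
      · exact h
      · exfalso
        have hne : x ≠ bet l (tilde ℓ l).length := by
          intro heq
          exact hxB (heq ▸ bet_mem_Bset hk')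
        have hxlt : x < bet l (tilde ℓ l).length := by omega
        have hmem : x ∈ (Finset.range (bet l (tilde ℓ l).length)).filter
            (fun d => d ∉ Bset l ∧ ¬ ℓ ∣ d) := by
          simp only [Finset.mem_filter, Finset.mem_range]
          exact ⟨hxlt, hxB, hxd⟩
        rw [Kcnt, Finset.card_eq_zero] at hK0
        rw [hK0] at hmem
        exact absurd hmem (Finset.notMem_empty x)
    have h2 : nuc ℓ (bet l (tilde ℓ l).length) < nuc ℓ x :=
      nuc_lt h1 (B_ndvd hp hc hℓ _ (bet_mem_Bset hk'))
    have h3 := Kcnt_nuc hp hc hℓ hk'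
    omega

lemma nuc_ge_bet {ℓ : ℕ} (hp : IsPartition l) (hc : IsCore ℓ l) (hℓ : 2 ≤ ℓ) {a : ℕ}
    (ha : a < (tilde ℓ l).length) :
    l.length - (tilde ℓ l).length ≤ nuc ℓ (bet l a) := by
  have hkk := tilde_len_le hp ℓ
  have ha' : a < l.length := by omega
  have h := Kcnt_nuc hp hc hℓ ha'
  omega

lemma bet'_eq {ℓ : ℕ} (hp : IsPartition l) (hc : IsCore ℓ l) (hℓ : 2 ≤ ℓ) {a : ℕ}
    (ha : a < (tilde ℓ l).length) :
    bet (tilde ℓ l) a = nuc ℓ (bet l a) - (l.length - (tilde ℓ l).length) := by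
  have hkk := tilde_len_le hp ℓ
  have ha' : a < l.length := by omega
  have h1 := Kcnt_nuc hp hc hℓ ha'
  have h2 : bet (tilde ℓ l) a = (tilde ℓ l).getD a 0 + ((tilde ℓ l).length - 1 - a) := rfl
  rw [h2, tilde_getD hp ha]
  omega

lemma psi_eq_nuc {ℓ x y m : ℕ} (hx : ¬ ℓ ∣ x) (hy : ¬ ℓ ∣ y)
    (hbx : m ≤ nuc ℓ x) (hby : m ≤ nuc ℓ y)
    (heq : nuc ℓ x - m = nuc ℓ y - m) : x = y := by
  have hnn : nuc ℓ x = nuc ℓ y := by omega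
  rcases lt_trichotomy x y with h | h | h
  · exact absurd hnn (ne_of_lt (nuc_lt h hx))
  · exact h
  · exact absurd hnn (ne_of_gt (nuc_lt h hy))

lemma SI {ℓ : ℕ} (hp : IsPartition l) (hc : IsCore ℓ l) (hℓ : 2 ≤ ℓ) {a : ℕ}
    (ha : a < (tilde ℓ l).length) :
    Finset.range (bet (tilde ℓ l) a) \ Bset (tilde ℓ l)
      = ((Finset.range (bet l a)).filter (fun d => d ∉ Bset l ∧ ¬ ℓ ∣ d)).image
          (fun d => nuc ℓ d - (l.length - (tilde ℓ l).length)) := by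
  have hkk := tilde_len_le hp ℓ
  have ha' : a < l.length := by omega
  have htp := tilde_partition hp ℓ
  have hbetnd : ¬ ℓ ∣ bet l a := B_ndvd hp hc hℓ _ (bet_mem_Bset ha')
  have hsub : ((Finset.range (bet l a)).filter (fun d => d ∉ Bset l ∧ ¬ ℓ ∣ d)).image
        (fun d => nuc ℓ d - (l.length - (tilde ℓ l).length))
      ⊆ Finset.range (bet (tilde ℓ l) a) \ Bset (tilde ℓ l) := by
    intro x hx
    obtain ⟨d, hd, rfl⟩ := Finset.mem_image.mp hx
    simp only [Finset.mem_filter, Finset.mem_range] at hd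
    obtain ⟨hdlt, hdB, hdnd⟩ := hd
    have hbd := nuc_ge_kept hp hc hℓ hdB hdnd
    have hbb := nuc_ge_bet hp hc hℓ ha
    have hlt : nuc ℓ d < nuc ℓ (bet l a) := nuc_lt hdlt hdnd
    simp only [Finset.mem_sdiff, Finset.mem_range]
    constructor
    · rw [bet'_eq hp hc hℓ ha]
      omega
    · intro hmem
      obtain ⟨i, hi, heq⟩ := mem_Bset.mp hmem
      rw [bet'_eq hp hc hℓ (by simpa using hi)] at heq
      have hbi : ¬ ℓ ∣ bet l i :=
        B_ndvd hp hc hℓ _ (bet_mem_Bset (lt_of_lt_of_le (by simpa using hi) hkk))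
      have hbbi := nuc_ge_bet hp hc hℓ (show i < (tilde ℓ l).length by simpa using hi)
      have : bet l i = d := psi_eq_nuc hbi hdnd hbbi hbd heq
      exact hdB (this ▸ bet_mem_Bset (lt_of_lt_of_le (show i < (tilde ℓ l).length by simpa using hi) hkk))
  have hinj : Set.InjOn (fun d => nuc ℓ d - (l.length - (tilde ℓ l).length))
      ((Finset.range (bet l a)).filter (fun d => d ∉ Bset l ∧ ¬ ℓ ∣ d)) := by
    intro x hx y hy hxy
    simp only [Finset.coe_filter, Finset.mem_range, Set.mem_setOf_eq] at hx hy
    exact psi_eq_nuc hx.2.2 hy.2.2 (nuc_ge_kept hp hc hℓ hx.2.1 hx.2.2)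
      (nuc_ge_kept hp hc hℓ hy.2.1 hy.2.2) hxy
  have hcard1 : (((Finset.range (bet l a)).filter (fun d => d ∉ Bset l ∧ ¬ ℓ ∣ d)).image
      (fun d => nuc ℓ d - (l.length - (tilde ℓ l).length))).card = Kcnt ℓ l a := by
    rw [Finset.card_image_of_injOn hinj]
    rfl
  have hcard2 : (Finset.range (bet (tilde ℓ l) a) \ Bset (tilde ℓ l)).card = Kcnt ℓ l a := by
    rw [Finset.sdiff_eq_filter]
    have hpart := Finset.card_filter_add_card_filter_not
      (s := Finset.range (bet (tilde ℓ l) a)) (p := fun x => x ∈ Bset (tilde ℓ l))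
    rw [Bcap htp ha, Finset.card_range] at hpart
    have hb2 : bet (tilde ℓ l) a = (tilde ℓ l).getD a 0 + ((tilde ℓ l).length - 1 - a) := rfl
    rw [tilde_getD hp ha] at hb2
    omega
  exact (Finset.eq_of_subset_of_card_le hsub (by omega)).symm

lemma filter_split_card (s : Finset ℕ) (P Q : ℕ → Prop) [DecidablePred P] [DecidablePred Q] :
    ((s.filter (fun d => P d ∧ Q d)).card + (s.filter (fun d => P d ∧ ¬ Q d)).card)
      = (s.filter P).card := by
  rw [← Finset.filter_filter, ← Finset.filter_filter]
  exact Finset.card_filter_add_card_filter_not (s := s.filter P) (p := Q)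

lemma window_mult {ℓ : ℕ} (hp : IsPartition l) (hc : IsCore ℓ l) (hℓ : 2 ≤ ℓ) {a : ℕ}
    (ha : a < l.length) :
    ((Finset.range (bet l a)).filter
      (fun d => (d ∉ Bset l ∧ bet l a < d + ℓ) ∧ ℓ ∣ d)).card = 1 := by
  have hβB : bet l a ∈ Bset l := bet_mem_Bset ha
  have hβnd : ¬ ℓ ∣ bet l a := B_ndvd hp hc hℓ _ hβB
  have hβ1 : 0 < bet l a := B_pos hp hβB
  set β := bet l a with hβdef
  set μ := (β - 1) - (β - 1) % ℓ with hμdef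
  have hr := Nat.mod_lt (β - 1) (show 0 < ℓ by omega)
  have hdm := Nat.div_add_mod (β - 1) ℓ
  have hdvd : ℓ ∣ μ := ⟨(β - 1) / ℓ, by omega⟩
  have hμβ : μ < β := by omega
  have hwin : β < μ + ℓ := by
    by_cases hcase : (β - 1) % ℓ = ℓ - 1
    · exfalso
      have : β = μ + ℓ := by omega
      exact hβnd (by rw [this]; exact Nat.dvd_add hdvd dvd_rfl)
    · omega
  have hμB : μ ∉ Bset l := fun hmem => B_ndvd hp hc hℓ μ hmem hdvd
  rw [Finset.card_eq_one]
  refine ⟨μ, ?_⟩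
  ext x
  simp only [Finset.mem_filter, Finset.mem_range, Finset.mem_singleton]
  constructor
  · rintro ⟨hxβ, ⟨hxB, hxwin⟩, hxdvd⟩
    rcases le_total x μ with hxm | hxm
    · have hd : ℓ ∣ μ - x := Nat.dvd_sub hdvd hxdvd
      rcases Nat.eq_zero_or_pos (μ - x) with h0 | hpos
      · omega
      · have := Nat.le_of_dvd hpos hd
        omega
    · have hd : ℓ ∣ x - μ := Nat.dvd_sub hxdvd hdvd
      rcases Nat.eq_zero_or_pos (x - μ) with h0 | hpos
      · omega
      · have := Nat.le_of_dvd hpos hd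
        omega
  · rintro rfl
    exact ⟨hμβ, ⟨hμB, hwin⟩, hdvd⟩

lemma FR {ℓ : ℕ} (hp : IsPartition l) (hc : IsCore ℓ l) (hℓ : 2 ≤ ℓ) {a : ℕ}
    (ha : a < (tilde ℓ l).length) :
    Rcnt (ℓ - 1) (tilde ℓ l) a = Rcnt ℓ l a - 1 := by
  have hkk := tilde_len_le hp ℓ
  have ha' : a < l.length := by omega
  have hβnd : ¬ ℓ ∣ bet l a := B_ndvd hp hc hℓ _ (bet_mem_Bset ha')
  have hbb := nuc_ge_bet hp hc hℓ ha
  -- step 1: Rcnt (ℓ-1) tilde a as filter over sdiff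
  have h1 : Rcnt (ℓ - 1) (tilde ℓ l) a
      = ((Finset.range (bet (tilde ℓ l) a) \ Bset (tilde ℓ l)).filter
          (fun e => bet (tilde ℓ l) a < e + (ℓ - 1))).card := by
    unfold Rcnt
    congr 1
    ext x
    simp only [Finset.mem_filter, Finset.mem_sdiff, Finset.mem_range]
    tauto
  rw [h1, SI hp hc hℓ ha, Finset.filter_image]
  have hinj : Set.InjOn (fun d => nuc ℓ d - (l.length - (tilde ℓ l).length))
      (((Finset.range (bet l a)).filter (fun d => d ∉ Bset l ∧ ¬ ℓ ∣ d)).filter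
        (fun d => bet (tilde ℓ l) a < (nuc ℓ d - (l.length - (tilde ℓ l).length)) + (ℓ - 1))) := by
    intro x hx y hy hxy
    simp only [Finset.coe_filter, Finset.mem_filter, Finset.mem_range, Set.mem_setOf_eq] at hx hy
    exact psi_eq_nuc hx.1.2.2 hy.1.2.2 (nuc_ge_kept hp hc hℓ hx.1.2.1 hx.1.2.2)
      (nuc_ge_kept hp hc hℓ hy.1.2.1 hy.1.2.2) hxy
  rw [Finset.card_image_of_injOn hinj, Finset.filter_filter]
  have hW : (Finset.range (bet l a)).filter
        (fun d => (d ∉ Bset l ∧ ¬ ℓ ∣ d) ∧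
          bet (tilde ℓ l) a < (nuc ℓ d - (l.length - (tilde ℓ l).length)) + (ℓ - 1))
      = (Finset.range (bet l a)).filter
        (fun d => (d ∉ Bset l ∧ bet l a < d + ℓ) ∧ ¬ ℓ ∣ d) := by
    apply Finset.filter_congr
    intro d hd
    simp only [Finset.mem_range] at hd
    constructor
    · rintro ⟨⟨hdB, hdnd⟩, hwin⟩
      refine ⟨⟨hdB, ?_⟩, hdnd⟩
      by_contra hout
      have hout' : d + ℓ ≤ bet l a := by omega
      have := outside_nuc_ge (ℓ := ℓ) hℓ hout'
      have hbd := nuc_ge_kept hp hc hℓ hdB hdnd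
      rw [bet'_eq hp hc hℓ ha] at hwin
      omega
    · rintro ⟨⟨hdB, hwin⟩, hdnd⟩
      refine ⟨⟨hdB, hdnd⟩, ?_⟩
      have := window_nuc_lt hℓ hdnd hβnd hd hwin
      have hbd := nuc_ge_kept hp hc hℓ hdB hdnd
      rw [bet'_eq hp hc hℓ ha]
      omega
  rw [hW]
  have hsplit := filter_split_card (Finset.range (bet l a))
    (fun d => d ∉ Bset l ∧ bet l a < d + ℓ) (fun d => ℓ ∣ d)
  have hμ := window_mult hp hc hℓ ha'
  have hRdef : Rcnt ℓ l a = ((Finset.range (bet l a)).filter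
      (fun d => d ∉ Bset l ∧ bet l a < d + ℓ)).card := rfl
  omega

lemma E_iff {ℓ : ℕ} (hp : IsPartition l) (hc : IsCore ℓ l) (hℓ : 2 ≤ ℓ) {a : ℕ}
    (ha : a < l.length) : 2 ≤ Rcnt ℓ l a ↔ 0 < Kcnt ℓ l a := by
  have hsplit := filter_split_card (Finset.range (bet l a))
    (fun d => d ∉ Bset l ∧ bet l a < d + ℓ) (fun d => ℓ ∣ d)
  have hμ := window_mult hp hc hℓ ha
  have hRdef : Rcnt ℓ l a = ((Finset.range (bet l a)).filter
      (fun d => d ∉ Bset l ∧ bet l a < d + ℓ)).card := rfl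
  constructor
  · intro h2
    have hpos : 0 < ((Finset.range (bet l a)).filter
        (fun d => (d ∉ Bset l ∧ bet l a < d + ℓ) ∧ ¬ ℓ ∣ d)).card := by omega
    obtain ⟨x, hx⟩ := Finset.card_pos.mp hpos
    simp only [Finset.mem_filter, Finset.mem_range] at hx
    apply Finset.card_pos.mpr
    refine ⟨x, ?_⟩
    simp only [Finset.mem_filter, Finset.mem_range]
    exact ⟨hx.1, hx.2.1.1, hx.2.2⟩
  · intro hK
    obtain ⟨d0, hd0⟩ := Finset.card_pos.mp hK
    have hne : ((Finset.range (bet l a)).filter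
        (fun d => d ∉ Bset l ∧ ¬ ℓ ∣ d)).Nonempty := ⟨d0, hd0⟩
    obtain ⟨d, hdmem, hdmax⟩ : ∃ d ∈ (Finset.range (bet l a)).filter
        (fun d => d ∉ Bset l ∧ ¬ ℓ ∣ d), ∀ e ∈ (Finset.range (bet l a)).filter
        (fun d => d ∉ Bset l ∧ ¬ ℓ ∣ d), e ≤ d :=
      ⟨_, Finset.max'_mem _ hne, fun e he => Finset.le_max' _ e he⟩
    simp only [Finset.mem_filter, Finset.mem_range] at hdmem
    obtain ⟨hdlt, hdB, hdnd⟩ := hdmem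
    by_cases hwin : bet l a < d + ℓ
    · -- both d and μ are in the window set
      obtain ⟨μ, hμeq⟩ := Finset.card_eq_one.mp hμ
      have hμmem : μ ∈ (Finset.range (bet l a)).filter
          (fun dd => (dd ∉ Bset l ∧ bet l a < dd + ℓ) ∧ ℓ ∣ dd) := by
        rw [hμeq]; exact Finset.mem_singleton_self μ
      simp only [Finset.mem_filter, Finset.mem_range] at hμmem
      have hdμ : d ≠ μ := fun heq => hdnd (by rw [heq]; exact hμmem.2.2)
      have hpair : ({d, μ} : Finset ℕ) ⊆ (Finset.range (bet l a)).filter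
          (fun dd => dd ∉ Bset l ∧ bet l a < dd + ℓ) := by
        intro x hx
        simp only [Finset.mem_insert, Finset.mem_singleton] at hx
        simp only [Finset.mem_filter, Finset.mem_range]
        rcases hx with rfl | rfl
        · exact ⟨hdlt, hdB, hwin⟩
        · exact ⟨hμmem.1, hμmem.2.1⟩
      have hpc : ({d, μ} : Finset ℕ).card = 2 := by
        rw [Finset.card_insert_of_notMem (by simpa using hdμ), Finset.card_singleton]
      have := Finset.card_le_card hpair
      omega
    · exfalso
      have hout : d + ℓ ≤ bet l a := by omega
      by_cases heq : d + ℓ = bet l a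
      · have := coreB hp hc (bet_mem_Bset ha) hdB hdlt
        exact this ⟨1, by omega⟩
      · have hlt2 : d + ℓ < bet l a := by omega
        have heB : d + ℓ ∈ Bset l := by
          by_contra hneB
          have hmem2 : d + ℓ ∈ (Finset.range (bet l a)).filter
              (fun d => d ∉ Bset l ∧ ¬ ℓ ∣ d) := by
            simp only [Finset.mem_filter, Finset.mem_range]
            refine ⟨hlt2, hneB, ?_⟩
            intro hdd
            have := Nat.dvd_sub hdd (dvd_refl ℓ)
            simp only [Nat.add_sub_cancel] at this
            exact hdnd this
          have := hdmax _ hmem2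
          omega
        have := coreB hp hc heB hdB (by omega)
        exact this ⟨1, by omega⟩

lemma range_filter_lt : ∀ (n m : ℕ), m ≤ n →
    (List.range n).filter (fun a => decide (a < m)) = List.range m := by
  intro n
  induction n with
  | zero =>
    intro m hm
    have : m = 0 := by omega
    subst this
    simp
  | succ n ih =>
    intro m hm
    rcases Nat.lt_or_ge m (n + 1) with h | h
    · have hm' : m ≤ n := by omega
      rw [List.range_succ, List.filter_append, ih m hm']
      have hone : List.filter (fun a => decide (a < m)) [n] = [] := by
        simp only [List.filter, decide_eq_true_eq]
        rw [decide_eq_false (by omega)]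
      rw [hone, List.append_nil]
    · have : m = n + 1 := by omega
      subst this
      apply List.filter_eq_self.mpr
      intro a ha
      simp only [decide_eq_true_eq]
      exact List.mem_range.mp ha

end Stmt18

/-- ρ_{ℓ-1}(Φ̃_ℓ^k(λ)) is obtained from ρ_ℓ(λ) by deleting its first column. -/
theorem stmt18 (ℓ k : ℕ) (hℓ : 2 ≤ ℓ) (l : List ℕ)
    (hp : IsPartition l) (hc : IsCore ℓ l) (hlen : l.length = k) :
    rho (ℓ - 1) (tilde ℓ l) =
      ((rho ℓ l).map (fun x => x - 1)).filter (fun x => decide (0 < x)) := by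
  have htp := Stmt18.tilde_partition hp ℓ
  have hkk := Stmt18.tilde_len_le hp ℓ
  have hL : rho (ℓ - 1) (tilde ℓ l) = (List.range (tilde ℓ l).length).map
      (fun a => Stmt18.Rcnt ℓ l a - 1) := by
    rw [Stmt18.rho_eq htp (ℓ - 1)]
    apply List.map_congr_left
    intro a hamem
    exact Stmt18.FR hp hc hℓ (List.mem_range.mp hamem)
  rw [hL, Stmt18.rho_eq hp ℓ, List.map_map, List.filter_map]
  have hpred : (List.range l.length).filter
      ((fun x => decide (0 < x)) ∘ ((fun x => x - 1) ∘ fun a => Stmt18.Rcnt ℓ l a))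
      = (List.range l.length).filter (fun a => decide (a < (tilde ℓ l).length)) := by
    apply List.filter_congr
    intro a hamem
    have ha : a < l.length := List.mem_range.mp hamem
    simp only [Function.comp_apply, decide_eq_decide]
    constructor
    · intro h
      by_contra hge
      have h0 : Stmt18.Kcnt ℓ l a = 0 := Stmt18.Kcnt_zero hp (by omega) ha
      have h1 := (Stmt18.E_iff hp hc hℓ ha).mp
      by_cases h2 : 2 ≤ Stmt18.Rcnt ℓ l a
      · have := h1 h2; omega
      · omega
    · intro h
      have := (Stmt18.E_iff hp hc hℓ ha).mpr (Stmt18.Kcnt_pos hp h)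
      omega
  rw [hpred, Stmt18.range_filter_lt _ _ hkk]
  rfl
end
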